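/- arXiv:2604.07207 — 4 statements merged into one kernel-verified Lean document; each statement's English description precedes it below -/
import Mathlib

section
/- Let (g_n)_{n≥1} be i.i.d. μ-distributed random elements of G, independent of the forest process. Define S_0 := e_G and S_n := g_{L(1)}·g_{L(2)}·⋯·g_{L(n)} for n ≥ 1. Then (S_n)_{n≥0} is a step-reinforced random walk with step distribution μ and reinforcement parameter α; precisely, S_1 is μ-distributed, and for every n ≥ 1 and every set B ⊂ G, almost surely ℙ(S_n⁻¹·S_{n+1} ∈ B | S_0, S_1, …, S_n) = (1−α)·μ(B) + α·μ_n(B), where μ_n := (1/n)·∑_{i=1}^n δ_{S_{i−1}⁻¹·S_i} is the empirical distribution of the first n steps. -/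
open MeasureTheory Finset

/-- the walk obtained from the percolated random recursive forest: `S n = g_{L(1)}⋯g_{L(n)}`,
where `g` are the spins and `L k` is the root of the cluster containing vertex `k`. -/
def forestWalk {G : Type} [Group G] {Ω : Type}
    (g : ℕ → Ω → G) (L : ℕ → Ω → ℕ) (n : ℕ) (ω : Ω) : G :=
  ((List.range n).map fun i => g (L (i + 1) ω) ω).prod

namespace PRRF
open scoped Classical

lemma forestWalk_one {G : Type} [Group G] {Ω : Type} (g : ℕ → Ω → G) (L : ℕ → Ω → ℕ) (ω : Ω) :
    forestWalk g L 1 ω = g (L 1 ω) ω := by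
  simp [forestWalk, List.range_succ]


/-- deterministic root function -/
def detL (a : ℕ → Bool) (b : ℕ → ℕ) (k : ℕ) : ℕ :=
  if 2 ≤ k then
    if a k = true then
      if h : b k < k then detL a b (b k) else b k
    else k
  else k
termination_by k
decreasing_by exact h

lemma detL_low {a b} {k : ℕ} (hk : k < 2) : detL a b k = k := by
  rw [detL]; simp [Nat.not_le.2 hk]

lemma detL_rec {a b} {k : ℕ} (hk : 2 ≤ k) : detL a b k =
    if a k = true then (if h : b k < k then detL a b (b k) else b k) else k := by
  rw [detL]; simp [hk]

lemma detL_bounds {a b} (m : ℕ)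
    (Hb : ∀ k, 2 ≤ k → k ≤ m → 1 ≤ b k ∧ b k ≤ k - 1) :
    ∀ k, 1 ≤ k → k ≤ m → 1 ≤ detL a b k ∧ detL a b k ≤ k := by
  intro k
  induction k using Nat.strong_induction_on with
  | _ k ih =>
    intro hk1 hkm
    by_cases h2 : 2 ≤ k
    · rw [detL_rec h2]
      rcases Hb k h2 hkm with ⟨hb1, hb2⟩
      have hblt : b k < k := by omega
      by_cases ha : a k = true
      · simp only [ha, if_true, dif_pos hblt]
        have := ih (b k) hblt hb1 (by omega)
        exact ⟨this.1, le_trans this.2 (by omega)⟩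
      · simp [ha]; omega
    · rw [detL_low (by omega)]; omega

lemma detL_congr {a a' : ℕ → Bool} {b b' : ℕ → ℕ} :
    ∀ (k : ℕ), (∀ i, i ≤ k → a i = a' i ∧ b i = b' i) → detL a b k = detL a' b' k := by
  intro k
  induction k using Nat.strong_induction_on with
  | _ k ih =>
    intro h
    by_cases h2 : 2 ≤ k
    · rw [detL_rec h2, detL_rec (a := a') h2]
      rcases h k le_rfl with ⟨hak, hbk⟩
      rw [← hak, ← hbk]
      by_cases ha : a k = true
      · simp only [ha, if_true]
        by_cases hblt : b k < k
        · rw [dif_pos hblt, dif_pos hblt]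
          exact ih (b k) hblt (fun i hi => h i (le_trans hi (le_of_lt hblt)))
        · rw [dif_neg hblt, dif_neg hblt]
      · simp [ha]
    · rw [detL_low (by omega), detL_low (by omega)]

variable {G : Type} [Group G]

/-- deterministic walk -/
def detW (a : ℕ → Bool) (b : ℕ → ℕ) (x : ℕ → G) (i : ℕ) : G :=
  ((List.range i).map fun l => x (detL a b (l + 1))).prod

lemma detW_zero (a b) (x : ℕ → G) : detW a b x 0 = 1 := rfl

lemma detW_succ (a b) (x : ℕ → G) (i : ℕ) :
    detW a b x (i + 1) = detW a b x i * x (detL a b (i + 1)) := by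
  simp [detW, List.range_succ]


variable {G : Type} [Group G]

/-- configuration type at level `m`. -/
def CT (μ : G → ℝ) : ℕ → Type
  | 0 => PUnit
  | 1 => ↥(Function.support μ)
  | (m+2) => CT μ (m+1) × Bool × ↥(Finset.Icc 1 (m+1)) × ↥(Function.support μ)

lemma countable_CT {μ : G → ℝ} (hc : (Function.support μ).Countable) :
    ∀ m, Countable (CT μ m)
  | 0 => inferInstanceAs (Countable PUnit)
  | 1 => hc.to_subtype
  | (m+2) => by
      have := countable_CT hc (m+1)
      have := hc.to_subtype
      exact inferInstanceAs (Countable (CT μ (m+1) × Bool × ↥(Finset.Icc 1 (m+1)) × ↥(Function.support μ)))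

def cfgA (μ : G → ℝ) : ∀ m, CT μ m → ℕ → Bool
  | 0, _ => fun _ => false
  | 1, _ => fun _ => false
  | (m+2), t => Function.update (cfgA μ (m+1) t.1) (m+2) t.2.1

def cfgB (μ : G → ℝ) : ∀ m, CT μ m → ℕ → ℕ
  | 0, _ => fun _ => 0
  | 1, _ => fun _ => 0
  | (m+2), t => Function.update (cfgB μ (m+1) t.1) (m+2) (t.2.2.1 : ℕ)

def cfgX (μ : G → ℝ) : ∀ m, CT μ m → ℕ → G
  | 0, _ => fun _ => 1
  | 1, y => fun i => if i = 1 then ((show ↥(Function.support μ) from y) : G) else 1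
  | (m+2), t => Function.update (cfgX μ (m+1) t.1) (m+2) (t.2.2.2 : G)

variable {μ : G → ℝ}

lemma cfgA_lt (m) (t : CT μ (m+2)) {i : ℕ} (hi : i ≤ m+1) :
    cfgA μ (m+2) t i = cfgA μ (m+1) t.1 i :=
  Function.update_of_ne (by omega) _ _

lemma cfgB_lt (m) (t : CT μ (m+2)) {i : ℕ} (hi : i ≤ m+1) :
    cfgB μ (m+2) t i = cfgB μ (m+1) t.1 i :=
  Function.update_of_ne (by omega) _ _

lemma cfgX_lt (m) (t : CT μ (m+2)) {i : ℕ} (hi : i ≤ m+1) :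
    cfgX μ (m+2) t i = cfgX μ (m+1) t.1 i :=
  Function.update_of_ne (by omega) _ _

lemma cfgA_top (m) (t : CT μ (m+2)) : cfgA μ (m+2) t (m+2) = t.2.1 :=
  Function.update_self _ _ _

lemma cfgB_top (m) (t : CT μ (m+2)) : cfgB μ (m+2) t (m+2) = (t.2.2.1 : ℕ) :=
  Function.update_self _ _ _

lemma cfgX_top (m) (t : CT μ (m+2)) : cfgX μ (m+2) t (m+2) = (t.2.2.2 : G) :=
  Function.update_self _ _ _

lemma canonB : ∀ m (t : CT μ m) (k : ℕ), 2 ≤ k → k ≤ m →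
    1 ≤ cfgB μ m t k ∧ cfgB μ m t k ≤ k - 1
  | 0, _, k, h2, hm => by omega
  | 1, _, k, h2, hm => by omega
  | (m+2), t, k, h2, hm => by
      rcases Nat.lt_or_ge k (m+2) with h | h
      · rw [cfgB_lt m t (by omega)]
        exact canonB (m+1) t.1 k h2 (by omega)
      · have hk : k = m + 2 := by omega
        subst hk
        rw [cfgB_top m t]
        have := t.2.2.1.2
        rw [Finset.mem_Icc] at this
        omega

lemma canonX : ∀ m (t : CT μ m) (i : ℕ), 1 ≤ i → i ≤ m → μ (cfgX μ m t i) ≠ 0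
  | 0, _, i, h1, hm => by omega
  | 1, y, i, h1, hm => by
      have hi : i = 1 := by omega
      subst hi
      have h2 : μ ((show ↥(Function.support μ) from y) : G) ≠ 0 :=
        (show ↥(Function.support μ) from y).2
      simpa [cfgX] using h2
  | (m+2), t, i, h1, hm => by
      rcases Nat.lt_or_ge i (m+2) with h | h
      · rw [cfgX_lt m t (by omega)]
        exact canonX (m+1) t.1 i h1 (by omega)
      · have hi : i = m + 2 := by omega
        subst hi
        rw [cfgX_top m t]
        exact t.2.2.2.2


variable {G : Type} [Group G] {Ω : Type} {μ : G → ℝ}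

def Ev (μ : G → ℝ) (ξ : ℕ → Ω → Bool) (u : ℕ → Ω → ℕ) (g : ℕ → Ω → G)
    (m : ℕ) (t : CT μ m) : Set Ω :=
  {ω | (∀ k, 2 ≤ k → k ≤ m → (ξ k ω = cfgA μ m t k ∧ u k ω = cfgB μ m t k)) ∧
       (∀ i, 1 ≤ i → i ≤ m → g i ω = cfgX μ m t i)}

variable {ξ : ℕ → Ω → Bool} {u : ℕ → Ω → ℕ} {g : ℕ → Ω → G}

lemma mem_Ev_succ (m : ℕ) (t : CT μ (m+2)) (ω : Ω) :
    ω ∈ Ev μ ξ u g (m+2) t ↔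
      ω ∈ Ev μ ξ u g (m+1) t.1 ∧ ξ (m+2) ω = t.2.1 ∧ u (m+2) ω = (t.2.2.1 : ℕ) ∧
        g (m+2) ω = (t.2.2.2 : G) := by
  constructor
  · rintro ⟨h1, h2⟩
    refine ⟨⟨fun k hk2 hkm => ?_, fun i hi1 him => ?_⟩, ?_, ?_, ?_⟩
    · rw [← cfgA_lt m t hkm, ← cfgB_lt m t hkm]
      exact h1 k hk2 (by omega)
    · rw [← cfgX_lt m t him]
      exact h2 i hi1 (by omega)
    · rw [← cfgA_top m t]; exact (h1 (m+2) (by omega) le_rfl).1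
    · rw [← cfgB_top m t]; exact (h1 (m+2) (by omega) le_rfl).2
    · rw [← cfgX_top m t]; exact h2 (m+2) (by omega) le_rfl
  · rintro ⟨⟨h1, h2⟩, ha, hb, hx⟩
    refine ⟨fun k hk2 hkm => ?_, fun i hi1 him => ?_⟩
    · rcases Nat.lt_or_ge k (m+2) with h | h
      · rw [cfgA_lt m t (by omega), cfgB_lt m t (by omega)]
        exact h1 k hk2 (by omega)
      · have : k = m+2 := by omega
        subst this
        rw [cfgA_top m t, cfgB_top m t]
        exact ⟨ha, hb⟩
    · rcases Nat.lt_or_ge i (m+2) with h | h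
      · rw [cfgX_lt m t (by omega)]
        exact h2 i hi1 (by omega)
      · have : i = m+2 := by omega
        subst this
        rw [cfgX_top m t]
        exact hx

lemma Ev_inj : ∀ (m : ℕ) (t t' : CT μ m) (ω : Ω),
    ω ∈ Ev μ ξ u g m t → ω ∈ Ev μ ξ u g m t' → t = t'
  | 0, t, t', ω, _, _ => @Subsingleton.elim PUnit _ t t'
  | 1, t, t', ω, h, h' => by
      have e1 : g 1 ω = cfgX μ 1 t 1 := h.2 1 le_rfl le_rfl
      have e2 : g 1 ω = cfgX μ 1 t' 1 := h'.2 1 le_rfl le_rfl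
      have : ((show ↥(Function.support μ) from t) : G) =
          ((show ↥(Function.support μ) from t') : G) := by
        simpa [cfgX] using e1.symm.trans e2
      exact Subtype.ext this
  | (m+2), t, t', ω, h, h' => by
      rw [mem_Ev_succ] at h h'
      obtain ⟨h0, ha, hb, hx⟩ := h
      obtain ⟨h0', ha', hb', hx'⟩ := h'
      have e1 : t.1 = t'.1 := Ev_inj (m+1) t.1 t'.1 ω h0 h0'
      have e2 : t.2.1 = t'.2.1 := ha.symm.trans ha'
      have e3 : t.2.2.1 = t'.2.2.1 := Subtype.ext (hb.symm.trans hb')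
      have e4 : t.2.2.2 = t'.2.2.2 := Subtype.ext (hx.symm.trans hx')
      exact Prod.ext e1 (Prod.ext e2 (Prod.ext e3 e4))

lemma measurableSet_Ev [MeasurableSpace Ω]
    (hmξ : ∀ k b, MeasurableSet {ω : Ω | ξ k ω = b})
    (hmu : ∀ k j, MeasurableSet {ω : Ω | u k ω = j})
    (hmg : ∀ k x, MeasurableSet {ω : Ω | g k ω = x})
    (m : ℕ) (t : CT μ m) : MeasurableSet (Ev μ ξ u g m t) := by
  have hset : Ev μ ξ u g m t =
      (⋂ k ∈ Finset.Icc 2 m, ({ω : Ω | ξ k ω = cfgA μ m t k} ∩ {ω | u k ω = cfgB μ m t k})) ∩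
        ⋂ i ∈ Finset.Icc 1 m, {ω : Ω | g i ω = cfgX μ m t i} := by
    ext ω
    simp only [Ev, Set.mem_setOf_eq, Set.mem_inter_iff, Set.mem_iInter, Finset.mem_Icc, and_imp]
    try tauto
  rw [hset]
  refine MeasurableSet.inter ?_ ?_
  · exact MeasurableSet.biInter (Finset.countable_toSet _)
      (fun k _ => (hmξ k _).inter (hmu k _))
  · exact MeasurableSet.biInter (Finset.countable_toSet _) (fun i _ => hmg i _)

section Prob
variable [MeasurableSpace Ω] (P : Measure Ω) [IsProbabilityMeasure P] (α : ℝ)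

/-- the joint-law hypothesis -/
def HJ (μ : G → ℝ) (α : ℝ) [MeasurableSpace Ω] (P : Measure Ω)
    (ξ : ℕ → Ω → Bool) (u : ℕ → Ω → ℕ) (g : ℕ → Ω → G) : Prop :=
  ∀ n : ℕ, 1 ≤ n → ∀ (a : ℕ → Bool) (b : ℕ → ℕ) (x : ℕ → G),
      (P {ω | (∀ k, 2 ≤ k → k ≤ n → (ξ k ω = a k ∧ u k ω = b k)) ∧
              (∀ i, 1 ≤ i → i ≤ n → g i ω = x i)}).toReal =
        (∏ k ∈ Finset.Icc 2 n,
          ((if a k = true then α else 1 - α) *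
            (if 1 ≤ b k ∧ b k ≤ k - 1 then 1 / ((k : ℝ) - 1) else 0))) *
          ∏ i ∈ Finset.Icc 1 n, μ (x i)

lemma P_Ev_one (hHJ : HJ μ α P ξ u g) (y : CT μ 1) :
    P (Ev μ ξ u g 1 y) = ENNReal.ofReal (μ ((show ↥(Function.support μ) from y) : G)) := by
  have h := hHJ 1 le_rfl (cfgA μ 1 y) (cfgB μ 1 y) (cfgX μ 1 y)
  have hset : {ω | (∀ k, 2 ≤ k → k ≤ 1 → (ξ k ω = cfgA μ 1 y k ∧ u k ω = cfgB μ 1 y k)) ∧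
      (∀ i, 1 ≤ i → i ≤ 1 → g i ω = cfgX μ 1 y i)} = Ev μ ξ u g 1 y := rfl
  rw [hset] at h
  have hIcc : Finset.Icc 2 1 = (∅ : Finset ℕ) := by decide
  rw [hIcc, Finset.prod_empty, one_mul, Finset.Icc_self, Finset.prod_singleton] at h
  have hx1 : cfgX μ 1 y 1 = ((show ↥(Function.support μ) from y) : G) := by simp [cfgX]
  rw [hx1] at h
  rw [← h, ENNReal.ofReal_toReal (measure_ne_top P _)]

lemma P_Ev_succ (hμ0 : ∀ x, 0 ≤ μ x) (hα0 : 0 ≤ α) (hα1 : α < 1)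
    (hHJ : HJ μ α P ξ u g) (m : ℕ) (t : CT μ (m+2)) :
    P (Ev μ ξ u g (m+2) t) = P (Ev μ ξ u g (m+1) t.1) *
      ENNReal.ofReal ((if t.2.1 = true then α else 1 - α) *
        (1 / (((m+1 : ℕ) : ℝ))) * μ (t.2.2.2 : G)) := by
  have h2 := hHJ (m+2) (by omega) (cfgA μ (m+2) t) (cfgB μ (m+2) t) (cfgX μ (m+2) t)
  have h1 := hHJ (m+1) (by omega) (cfgA μ (m+1) t.1) (cfgB μ (m+1) t.1) (cfgX μ (m+1) t.1)
  have hset2 : {ω | (∀ k, 2 ≤ k → k ≤ m+2 → (ξ k ω = cfgA μ (m+2) t k ∧ u k ω = cfgB μ (m+2) t k)) ∧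
      (∀ i, 1 ≤ i → i ≤ m+2 → g i ω = cfgX μ (m+2) t i)} = Ev μ ξ u g (m+2) t := rfl
  have hset1 : {ω | (∀ k, 2 ≤ k → k ≤ m+1 → (ξ k ω = cfgA μ (m+1) t.1 k ∧ u k ω = cfgB μ (m+1) t.1 k)) ∧
      (∀ i, 1 ≤ i → i ≤ m+1 → g i ω = cfgX μ (m+1) t.1 i)} = Ev μ ξ u g (m+1) t.1 := rfl
  rw [hset2] at h2
  rw [hset1] at h1
  set W2 : ℕ → ℝ := fun k => ((if cfgA μ (m+2) t k = true then α else 1 - α) *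
      (if 1 ≤ cfgB μ (m+2) t k ∧ cfgB μ (m+2) t k ≤ k - 1 then 1 / ((k : ℝ) - 1) else 0)) with hW2
  set W1 : ℕ → ℝ := fun k => ((if cfgA μ (m+1) t.1 k = true then α else 1 - α) *
      (if 1 ≤ cfgB μ (m+1) t.1 k ∧ cfgB μ (m+1) t.1 k ≤ k - 1 then 1 / ((k : ℝ) - 1) else 0)) with hW1
  have eW : ∏ k ∈ Finset.Icc 2 (m+2), W2 k = (∏ k ∈ Finset.Icc 2 (m+1), W1 k) * W2 (m+2) := by
    rw [Finset.prod_Icc_succ_top (by omega)]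
    congr 1
    refine Finset.prod_congr rfl (fun k hk => ?_)
    rw [Finset.mem_Icc] at hk
    simp only [hW2, hW1, cfgA_lt m t hk.2, cfgB_lt m t hk.2]
  have eX : ∏ i ∈ Finset.Icc 1 (m+2), μ (cfgX μ (m+2) t i) =
      (∏ i ∈ Finset.Icc 1 (m+1), μ (cfgX μ (m+1) t.1 i)) * μ ((t.2.2.2 : G)) := by
    rw [Finset.prod_Icc_succ_top (by omega)]
    rw [cfgX_top m t]
    congr 1
    refine Finset.prod_congr rfl (fun i hi => ?_)
    rw [Finset.mem_Icc] at hi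
    rw [cfgX_lt m t hi.2]
  have hj := t.2.2.1.2
  rw [Finset.mem_Icc] at hj
  have eTop : W2 (m+2) = (if t.2.1 = true then α else 1 - α) * (1 / (((m+1 : ℕ) : ℝ))) := by
    simp only [hW2, cfgA_top m t, cfgB_top m t]
    rw [if_pos (by omega : 1 ≤ (t.2.2.1 : ℕ) ∧ (t.2.2.1 : ℕ) ≤ m + 2 - 1)]
    have : ((m+2 : ℕ) : ℝ) - 1 = ((m+1 : ℕ) : ℝ) := by push_cast; ring
    rw [this]
  have key : (P (Ev μ ξ u g (m+2) t)).toReal = (P (Ev μ ξ u g (m+1) t.1)).toReal *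
      ((if t.2.1 = true then α else 1 - α) * (1 / (((m+1 : ℕ) : ℝ))) * μ (t.2.2.2 : G)) := by
    rw [h2, h1, eW, eX, eTop]; ring
  have hnn : 0 ≤ (if t.2.1 = true then α else 1 - α) * (1 / (((m+1 : ℕ) : ℝ))) * μ (t.2.2.2 : G) := by
    have h1' : 0 ≤ (if t.2.1 = true then α else 1 - α) := by split <;> [exact hα0; linarith]
    exact mul_nonneg (mul_nonneg h1' (by positivity)) (hμ0 _)
  rw [← ENNReal.ofReal_toReal (measure_ne_top P (Ev μ ξ u g (m+2) t)), key,
    ENNReal.ofReal_mul ENNReal.toReal_nonneg, ENNReal.ofReal_toReal (measure_ne_top P _)]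

lemma sum_ofReal_support (hμ0 : ∀ x, 0 ≤ μ x) (hμ1 : HasSum μ 1) :
    ∑' y : ↥(Function.support μ), ENNReal.ofReal (μ (y : G)) = 1 := by
  have hsub : Summable (fun y : ↥(Function.support μ) => μ (y : G)) :=
    (hμ1.summable).subtype _
  rw [← ENNReal.ofReal_tsum_of_nonneg (fun y => hμ0 _) hsub]
  rw [tsum_subtype_eq_of_support_subset (subset_refl _), hμ1.tsum_eq]
  exact ENNReal.ofReal_one

lemma sum_y (hμ0 : ∀ x, 0 ≤ μ x) (hμ1 : HasSum μ 1) (r : ℝ) (hr : 0 ≤ r) :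
    ∑' y : ↥(Function.support μ), ENNReal.ofReal (r * μ (y : G)) = ENNReal.ofReal r := by
  calc ∑' y : ↥(Function.support μ), ENNReal.ofReal (r * μ (y : G))
      = ∑' y : ↥(Function.support μ), ENNReal.ofReal r * ENNReal.ofReal (μ (y : G)) :=
        tsum_congr (fun y => ENNReal.ofReal_mul hr)
    _ = ENNReal.ofReal r * ∑' y : ↥(Function.support μ), ENNReal.ofReal (μ (y : G)) :=
        ENNReal.tsum_mul_left
    _ = ENNReal.ofReal r := by rw [sum_ofReal_support hμ0 hμ1, mul_one]

lemma sum_y_single (r : ℝ) (bstep : G) :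
    ∑' y : ↥(Function.support μ),
      (if (y : G) = bstep then ENNReal.ofReal (r * μ (y : G)) else 0) =
      ENNReal.ofReal (r * μ bstep) := by
  by_cases hb : μ bstep = 0
  · have hz : ∀ y : ↥(Function.support μ),
        (if (y : G) = bstep then ENNReal.ofReal (r * μ (y : G)) else 0) = 0 := by
      intro y
      rw [if_neg]
      intro hc
      exact y.2 (hc ▸ hb)
    rw [tsum_congr hz, tsum_zero, hb, mul_zero, ENNReal.ofReal_zero]
  · have hbs : bstep ∈ Function.support μ := hb
    rw [tsum_eq_single (⟨bstep, hbs⟩ : ↥(Function.support μ))]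
    · rw [if_pos rfl]
    · intro y hy
      rw [if_neg]
      intro hc
      exact hy (Subtype.ext hc)

lemma sum_j (m : ℕ) (q : ℕ → Prop) [DecidablePred q] (c : ENNReal) :
    ∑' j : ↥(Finset.Icc 1 (m+1)), (if q (j : ℕ) then c else 0) =
      (((Finset.Icc 1 (m+1)).filter q).card : ENNReal) * c := by
  rw [tsum_fintype]
  rw [Finset.sum_coe_sort (Finset.Icc 1 (m+1)) (fun j => if q j then c else 0)]
  rw [← Finset.sum_filter, Finset.sum_const, nsmul_eq_mul]

lemma sum_j_const (m : ℕ) (c : ENNReal) :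
    ∑' _j : ↥(Finset.Icc 1 (m+1)), c = ((m+1 : ℕ) : ENNReal) * c := by
  rw [tsum_fintype, Finset.sum_const, nsmul_eq_mul]
  congr 2
  rw [Finset.card_univ, Fintype.card_coe, Nat.card_Icc]
  omega

lemma sum_weight (hμ0 : ∀ x, 0 ≤ μ x) (hμ1 : HasSum μ 1) (hα0 : 0 ≤ α) (hα1 : α < 1) (m : ℕ) :
    ∑' e : Bool × ↥(Finset.Icc 1 (m+1)) × ↥(Function.support μ),
      ENNReal.ofReal ((if e.1 = true then α else 1 - α) *
        (1 / (((m+1 : ℕ) : ℝ))) * μ (e.2.2 : G)) = 1 := by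
  have hm1 : (0:ℝ) < ((m+1 : ℕ) : ℝ) := by positivity
  rw [ENNReal.tsum_prod']
  have inner : ∀ a : Bool, ∑' (p : ↥(Finset.Icc 1 (m+1)) × ↥(Function.support μ)),
      ENNReal.ofReal ((if a = true then α else 1 - α) * (1 / (((m+1 : ℕ) : ℝ))) * μ (p.2 : G)) =
      ((m+1 : ℕ) : ENNReal) * ENNReal.ofReal ((if a = true then α else 1 - α) * (1 / (((m+1 : ℕ) : ℝ)))) := by
    intro a
    have ha : 0 ≤ (if a = true then α else 1 - α) * (1 / (((m+1 : ℕ) : ℝ))) := by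
      have h1'' : 0 ≤ (if a = true then α else 1 - α) := by split <;> [exact hα0; linarith]
      exact mul_nonneg h1'' (by positivity)
    rw [ENNReal.tsum_prod']
    have : ∀ j : ↥(Finset.Icc 1 (m+1)), ∑' y : ↥(Function.support μ),
        ENNReal.ofReal ((if a = true then α else 1 - α) * (1 / (((m+1 : ℕ) : ℝ))) * μ (y : G)) =
        ENNReal.ofReal ((if a = true then α else 1 - α) * (1 / (((m+1 : ℕ) : ℝ)))) :=
      fun j => sum_y hμ0 hμ1 _ ha
    rw [tsum_congr this, sum_j_const]
  rw [tsum_bool, inner false, inner true]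
  rw [← mul_add, ← ENNReal.ofReal_add
    (mul_nonneg (by split <;> [exact hα0; linarith]) (by positivity))
    (mul_nonneg (by split <;> [exact hα0; linarith]) (by positivity))]
  have : (if false = true then α else 1 - α) * (1 / (((m+1 : ℕ) : ℝ))) +
      (if true = true then α else 1 - α) * (1 / (((m+1 : ℕ) : ℝ))) = 1 / (((m+1 : ℕ) : ℝ)) := by
    simp; ring
  rw [this]
  rw [← ENNReal.ofReal_natCast (m+1), ← ENNReal.ofReal_mul (by positivity)]
  rw [mul_one_div, div_self (ne_of_gt hm1), ENNReal.ofReal_one]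

end Prob

section Main
variable [MeasurableSpace Ω] (P : Measure Ω) [IsProbabilityMeasure P] (α : ℝ)

lemma total_mass (hμ0 : ∀ x, 0 ≤ μ x) (hμ1 : HasSum μ 1) (hα0 : 0 ≤ α) (hα1 : α < 1)
    (hHJ : HJ μ α P ξ u g) :
    ∀ m, 1 ≤ m → ∑' t : CT μ m, P (Ev μ ξ u g m t) = 1 := by
  intro m
  induction m with
  | zero => intro h; omega
  | succ m ih =>
    intro _
    cases m with
    | zero =>
      rw [tsum_congr (fun y => P_Ev_one P α hHJ y)]
      exact sum_ofReal_support hμ0 hμ1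
    | succ m' =>
      show ∑' t : (CT μ (m'+1) × Bool × ↥(Finset.Icc 1 (m'+1)) × ↥(Function.support μ)),
        P (Ev μ ξ u g (m'+2) t) = 1
      rw [ENNReal.tsum_prod']
      have hc : ∀ c : CT μ (m'+1),
          (∑' e : Bool × ↥(Finset.Icc 1 (m'+1)) × ↥(Function.support μ),
            P (Ev μ ξ u g (m'+2) (c, e))) = P (Ev μ ξ u g (m'+1) c) := by
        intro c
        have he : ∀ e : Bool × ↥(Finset.Icc 1 (m'+1)) × ↥(Function.support μ),
            P (Ev μ ξ u g (m'+2) (c, e)) = P (Ev μ ξ u g (m'+1) c) *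
              ENNReal.ofReal ((if e.1 = true then α else 1 - α) *
                (1 / (((m'+1 : ℕ) : ℝ))) * μ (e.2.2 : G)) :=
          fun e => P_Ev_succ P α hμ0 hα0 hα1 hHJ m' (c, e)
        rw [tsum_congr he, ENNReal.tsum_mul_left, sum_weight α hμ0 hμ1 hα0 hα1 m', mul_one]
      rw [tsum_congr hc]
      exact ih (by omega)

lemma P_eq_inter_Union (hμ0 : ∀ x, 0 ≤ μ x) (hμ1 : HasSum μ 1) (hα0 : 0 ≤ α) (hα1 : α < 1)
    (hHJ : HJ μ α P ξ u g)
    (hmξ : ∀ k b, MeasurableSet {ω : Ω | ξ k ω = b})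
    (hmu : ∀ k j, MeasurableSet {ω : Ω | u k ω = j})
    (hmg : ∀ k x, MeasurableSet {ω : Ω | g k ω = x})
    (m : ℕ) (hm : 1 ≤ m) (S : Set Ω) :
    P S = P (S ∩ ⋃ t : CT μ m, Ev μ ξ u g m t) := by
  haveI : Countable (CT μ m) := countable_CT (hμ1.summable.countable_support) m
  have hmeas : ∀ t : CT μ m, MeasurableSet (Ev μ ξ u g m t) := measurableSet_Ev hmξ hmu hmg m
  have hdisj : Pairwise (Function.onFun Disjoint fun t : CT μ m => Ev μ ξ u g m t) := by
    intro t t' hne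
    rw [Function.onFun, Set.disjoint_left]
    intro ω h1 h2
    exact hne (Ev_inj m t t' ω h1 h2)
  have hPU : P (⋃ t, Ev μ ξ u g m t) = 1 := by
    rw [measure_iUnion hdisj hmeas]
    exact total_mass P α hμ0 hμ1 hα0 hα1 hHJ m hm
  have hUc : P (⋃ t, Ev μ ξ u g m t)ᶜ = 0 := by
    rw [measure_compl (MeasurableSet.iUnion hmeas) (measure_ne_top P _), hPU, measure_univ,
      tsub_self]
  refine le_antisymm ?_ (measure_mono Set.inter_subset_left)
  calc P S ≤ P (S ∩ ⋃ t, Ev μ ξ u g m t) + P (S \ ⋃ t, Ev μ ξ u g m t) :=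
        measure_le_inter_add_diff P S _
    _ ≤ P (S ∩ ⋃ t, Ev μ ξ u g m t) + P (⋃ t, Ev μ ξ u g m t)ᶜ := by
        exact add_le_add le_rfl (measure_mono (fun ω (h : ω ∈ S \ ⋃ t, Ev μ ξ u g m t) => h.2))
    _ = P (S ∩ ⋃ t, Ev μ ξ u g m t) := by rw [hUc, add_zero]

lemma L_eq_detL {L : ℕ → Ω → ℕ} (hL1 : ∀ ω, L 1 ω = 1)
    (hLrec : ∀ ω, ∀ k, 2 ≤ k → L k ω = if ξ k ω = true then L (u k ω) ω else k)
    (m : ℕ) (t : CT μ m) (ω : Ω) (hω : ω ∈ Ev μ ξ u g m t) :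
    ∀ k, 1 ≤ k → k ≤ m → L k ω = detL (cfgA μ m t) (cfgB μ m t) k := by
  intro k
  induction k using Nat.strong_induction_on with
  | _ k ih =>
    intro h1 hm
    by_cases h2 : 2 ≤ k
    · have hξ := (hω.1 k h2 hm).1
      have hu := (hω.1 k h2 hm).2
      have hbb := canonB m t k h2 hm
      rw [hLrec ω k h2, detL_rec h2, hξ, hu]
      by_cases ha : cfgA μ m t k = true
      · rw [if_pos ha, if_pos ha, dif_pos (by omega : cfgB μ m t k < k)]
        exact ih (cfgB μ m t k) (by omega) (by omega) (by omega)
      · rw [if_neg ha, if_neg ha]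
    · have hk1 : k = 1 := by omega
      subst hk1
      rw [hL1 ω, detL_low (by omega)]

lemma forestWalk_eq_detW {L : ℕ → Ω → ℕ} (hL1 : ∀ ω, L 1 ω = 1)
    (hLrec : ∀ ω, ∀ k, 2 ≤ k → L k ω = if ξ k ω = true then L (u k ω) ω else k)
    (m : ℕ) (t : CT μ m) (ω : Ω) (hω : ω ∈ Ev μ ξ u g m t) :
    ∀ i, i ≤ m → forestWalk g L i ω = detW (cfgA μ m t) (cfgB μ m t) (cfgX μ m t) i := by
  intro i hi
  unfold forestWalk detW
  congr 1
  apply List.map_congr_left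
  intro l hl
  rw [List.mem_range] at hl
  have hl1 : l + 1 ≤ m := by omega
  rw [L_eq_detL hL1 hLrec m t ω hω (l+1) (by omega) hl1]
  have hb := detL_bounds (a := cfgA μ m t) (m := m) (canonB m t) (l+1) (by omega) hl1
  exact hω.2 _ hb.1 (le_trans hb.2 hl1)

lemma detW_cfg_succ (m : ℕ) (t : CT μ (m+2)) : ∀ i, i ≤ m+1 →
    detW (cfgA μ (m+2) t) (cfgB μ (m+2) t) (cfgX μ (m+2) t) i =
      detW (cfgA μ (m+1) t.1) (cfgB μ (m+1) t.1) (cfgX μ (m+1) t.1) i := by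
  intro i hi
  unfold detW
  congr 1
  apply List.map_congr_left
  intro l hl
  rw [List.mem_range] at hl
  have hlt : l + 1 ≤ m + 1 := by omega
  have hdl : detL (cfgA μ (m+2) t) (cfgB μ (m+2) t) (l+1) =
      detL (cfgA μ (m+1) t.1) (cfgB μ (m+1) t.1) (l+1) :=
    detL_congr (l+1) (fun i' hi' => ⟨cfgA_lt m t (by omega), cfgB_lt m t (by omega)⟩)
  rw [hdl]
  have hb := detL_bounds (a := cfgA μ (m+1) t.1) (m := m+1) (canonB (m+1) t.1) (l+1) (by omega) hlt
  exact cfgX_lt m t (le_trans hb.2 hlt)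

lemma detW_cfg_top (m : ℕ) (t : CT μ (m+2)) :
    detW (cfgA μ (m+2) t) (cfgB μ (m+2) t) (cfgX μ (m+2) t) (m+2) =
      detW (cfgA μ (m+1) t.1) (cfgB μ (m+1) t.1) (cfgX μ (m+1) t.1) (m+1) *
        (if t.2.1 = true then
          cfgX μ (m+1) t.1 (detL (cfgA μ (m+1) t.1) (cfgB μ (m+1) t.1) ((t.2.2.1 : ℕ)))
        else (t.2.2.2 : G)) := by
  rw [detW_succ, detW_cfg_succ m t (m+1) le_rfl]
  congr 1
  rw [detL_rec (by omega : 2 ≤ m + 2), cfgA_top m t, cfgB_top m t]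
  have hj := t.2.2.1.2
  rw [Finset.mem_Icc] at hj
  by_cases ha : t.2.1 = true
  · rw [if_pos ha, if_pos ha, dif_pos (by omega : (t.2.2.1 : ℕ) < m + 2)]
    have hdl : detL (cfgA μ (m+2) t) (cfgB μ (m+2) t) ((t.2.2.1 : ℕ)) =
        detL (cfgA μ (m+1) t.1) (cfgB μ (m+1) t.1) ((t.2.2.1 : ℕ)) :=
      detL_congr _ (fun i' hi' => ⟨cfgA_lt m t (by omega), cfgB_lt m t (by omega)⟩)
    rw [hdl]
    have hb := detL_bounds (a := cfgA μ (m+1) t.1) (m := m+1) (canonB (m+1) t.1) ((t.2.2.1 : ℕ)) (by omega) (by omega)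
    exact cfgX_lt m t (by omega)
  · rw [if_neg ha, if_neg ha]
    exact cfgX_top m t

end Main

end PRRF

set_option maxHeartbeats 2000000 in
open PRRF in
/-- **Proposition 2.2.** Let `(ξ_n)_{n≥2}` be i.i.d. Bernoulli(α), `(u_n)_{n≥2}` independent
with `u_n` uniform on `{1,…,n−1}`, and `(g_i)_{i≥1}` i.i.d. with law `μ`, all jointly
independent (expressed by the product formula `hjoint`).  Let `L` be the root map of the
percolated random recursive forest: `L 1 = 1` and for `k ≥ 2`, `L k = L (u k)` if `ξ k = 1`
and `L k = k` otherwise.  Then `S n = g_{L(1)}⋯g_{L(n)}` is a step-reinforced random walk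
with step distribution `μ` and reinforcement parameter `α`: `S 1` has law `μ`, and
conditionally on any trajectory prefix with positive probability the next increment is
distributed as `(1−α)·μ + α·(empirical distribution of the first n steps)`. -/
theorem forest_construction_is_srrw
    {G : Type} [Group G] (μ : G → ℝ) (hμ0 : ∀ x, 0 ≤ μ x) (hμ1 : HasSum μ 1)
    (α : ℝ) (hα0 : 0 ≤ α) (hα1 : α < 1)
    {Ω : Type} [MeasurableSpace Ω] (P : Measure Ω) [IsProbabilityMeasure P]
    (ξ : ℕ → Ω → Bool) (u : ℕ → Ω → ℕ) (g : ℕ → Ω → G)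
    (hmξ : ∀ k b, MeasurableSet {ω | ξ k ω = b})
    (hmu : ∀ k j, MeasurableSet {ω | u k ω = j})
    (hmg : ∀ k x, MeasurableSet {ω | g k ω = x})
    (hjoint : ∀ n : ℕ, 1 ≤ n → ∀ (a : ℕ → Bool) (b : ℕ → ℕ) (x : ℕ → G),
      (P {ω | (∀ k, 2 ≤ k → k ≤ n → (ξ k ω = a k ∧ u k ω = b k)) ∧
              (∀ i, 1 ≤ i → i ≤ n → g i ω = x i)}).toReal =
        (∏ k ∈ Finset.Icc 2 n,
          ((if a k = true then α else 1 - α) *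
            (if 1 ≤ b k ∧ b k ≤ k - 1 then 1 / ((k : ℝ) - 1) else 0))) *
          ∏ i ∈ Finset.Icc 1 n, μ (x i))
    (L : ℕ → Ω → ℕ) (hL1 : ∀ ω, L 1 ω = 1)
    (hLrec : ∀ ω, ∀ k, 2 ≤ k → L k ω = if ξ k ω = true then L (u k ω) ω else k) :
    (∀ x : G, (P {ω | forestWalk g L 1 ω = x}).toReal = μ x) ∧
    (∀ n : ℕ, 1 ≤ n → ∀ s : ℕ → G, ∀ bstep : G,
      (P {ω | ∀ i ≤ n, forestWalk g L i ω = s i}).toReal ≠ 0 →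
      (P {ω | (∀ i ≤ n, forestWalk g L i ω = s i) ∧
              forestWalk g L (n + 1) ω = forestWalk g L n ω * bstep}).toReal =
        (P {ω | ∀ i ≤ n, forestWalk g L i ω = s i}).toReal *
          ((1 - α) * μ bstep +
            α * (Set.ncard {i : ℕ | 1 ≤ i ∧ i ≤ n ∧ (s (i - 1))⁻¹ * s i = bstep} : ℝ) / n)) := by
  classical
  have hHJ : PRRF.HJ μ α P ξ u g := hjoint
  constructor
  · -- Part 1
    intro x
    have h := hjoint 1 le_rfl (fun _ => false) (fun _ => 0) (fun _ => x)
    have hIcc : Finset.Icc 2 1 = (∅ : Finset ℕ) := by decide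
    rw [hIcc, Finset.prod_empty, one_mul, Finset.Icc_self, Finset.prod_singleton] at h
    have hset : {ω | (∀ k, 2 ≤ k → k ≤ 1 → (ξ k ω = false ∧ u k ω = 0)) ∧
        (∀ i, 1 ≤ i → i ≤ 1 → g i ω = x)} = {ω | forestWalk g L 1 ω = x} := by
      ext ω
      simp only [Set.mem_setOf_eq]
      constructor
      · rintro ⟨_, h2⟩
        have hx1 := h2 1 le_rfl le_rfl
        rw [forestWalk_one, hL1 ω, hx1]
      · intro hw
        refine ⟨fun k hk2 hk1 => absurd (le_trans hk2 hk1) (by omega),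
          fun i hi1 hi2 => ?_⟩
        have hi : i = 1 := by omega
        subst hi
        rw [forestWalk_one, hL1 ω] at hw
        exact hw
    rw [← hset]
    exact h
  · -- Part 2
    intro n hn s bstep _hpos
    obtain ⟨N, rfl⟩ : ∃ N, n = N + 1 := ⟨n - 1, by omega⟩
    haveI hct : Countable (CT μ (N+2)) := countable_CT (hμ1.summable.countable_support) _
    -- the deterministic matching predicate and increment
    set M : CT μ (N+1) → Prop := fun c => ∀ i, i ≤ N + 1 →
      detW (cfgA μ (N+1) c) (cfgB μ (N+1) c) (cfgX μ (N+1) c) i = s i with hMdef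
    set Z : CT μ (N+2) → G := fun t =>
      if t.2.1 = true then
        cfgX μ (N+1) t.1 (detL (cfgA μ (N+1) t.1) (cfgB μ (N+1) t.1) ((t.2.2.1 : ℕ)))
      else (t.2.2.2 : G) with hZdef
    set A : Set Ω := {ω | ∀ i ≤ N + 1, forestWalk g L i ω = s i} with hAdef
    set AB : Set Ω := {ω | (∀ i ≤ N + 1, forestWalk g L i ω = s i) ∧
        forestWalk g L (N + 1 + 1) ω = forestWalk g L (N + 1) ω * bstep} with hABdef
    -- walk determinism on cylinders
    have hwalk : ∀ (t : CT μ (N+2)) (ω : Ω), ω ∈ Ev μ ξ u g (N+2) t → ∀ i, i ≤ N+1 →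
        forestWalk g L i ω =
          detW (cfgA μ (N+1) t.1) (cfgB μ (N+1) t.1) (cfgX μ (N+1) t.1) i := by
      intro t ω hω i hi
      exact (forestWalk_eq_detW hL1 hLrec (N+2) t ω hω i (by omega)).trans
        (detW_cfg_succ N t i hi)
    have hstep : ∀ (t : CT μ (N+2)) (ω : Ω), ω ∈ Ev μ ξ u g (N+2) t →
        forestWalk g L (N+1+1) ω =
          detW (cfgA μ (N+1) t.1) (cfgB μ (N+1) t.1) (cfgX μ (N+1) t.1) (N+1) * Z t := by
      intro t ω hω
      exact (forestWalk_eq_detW hL1 hLrec (N+2) t ω hω (N+2) le_rfl).trans (detW_cfg_top N t)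
    -- event decompositions
    have hAt : ∀ t : CT μ (N+2), A ∩ Ev μ ξ u g (N+2) t =
        if M t.1 then Ev μ ξ u g (N+2) t else ∅ := by
      intro t
      by_cases hM : M t.1
      · rw [if_pos hM]
        refine Set.eq_of_subset_of_subset Set.inter_subset_right (fun ω hω => ⟨?_, hω⟩)
        intro i hi
        exact (hwalk t ω hω i hi).trans (hM i hi)
      · rw [if_neg hM]
        ext ω
        simp only [Set.mem_inter_iff, Set.mem_empty_iff_false, iff_false, not_and]
        intro hωA hω
        exact hM (fun i hi => (hwalk t ω hω i hi).symm.trans (hωA i hi))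
    have hABt : ∀ t : CT μ (N+2), AB ∩ Ev μ ξ u g (N+2) t =
        if M t.1 ∧ Z t = bstep then Ev μ ξ u g (N+2) t else ∅ := by
      intro t
      by_cases hM : M t.1 ∧ Z t = bstep
      · rw [if_pos hM]
        refine Set.eq_of_subset_of_subset Set.inter_subset_right (fun ω hω => ⟨⟨?_, ?_⟩, hω⟩)
        · intro i hi
          exact (hwalk t ω hω i hi).trans (hM.1 i hi)
        · rw [hstep t ω hω, hM.2, hwalk t ω hω (N+1) le_rfl]
      · rw [if_neg hM]
        ext ω
        simp only [Set.mem_inter_iff, Set.mem_empty_iff_false, iff_false, not_and]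
        intro hωAB hω
        refine hM ⟨fun i hi => (hwalk t ω hω i hi).symm.trans (hωAB.1 i hi), ?_⟩
        have h2 := hωAB.2
        rw [hstep t ω hω, hwalk t ω hω (N+1) le_rfl] at h2
        exact mul_left_cancel h2
    -- the σ-additive decompositions of P A and P AB
    have hmeasEv : ∀ t : CT μ (N+2), MeasurableSet (Ev μ ξ u g (N+2) t) :=
      measurableSet_Ev hmξ hmu hmg (N+2)
    have hPdecomp : ∀ (S : Set Ω),
        (∀ t, S ∩ Ev μ ξ u g (N+2) t = Ev μ ξ u g (N+2) t ∨ S ∩ Ev μ ξ u g (N+2) t = ∅) →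
        P S = ∑' t : CT μ (N+2), P (S ∩ Ev μ ξ u g (N+2) t) := by
      intro S hq
      rw [P_eq_inter_Union P α hμ0 hμ1 hα0 hα1 hHJ hmξ hmu hmg (N+2) (by omega) S,
        Set.inter_iUnion]
      rw [measure_iUnion ?_ ?_]
      · intro t t' hne
        have hd : Disjoint (Ev μ ξ u g (N+2) t) (Ev μ ξ u g (N+2) t') := by
          rw [Set.disjoint_left]
          intro ω h1 h2
          exact hne (Ev_inj (N+2) t t' ω h1 h2)
        exact (hd.mono Set.inter_subset_right Set.inter_subset_right)
      · intro t
        rcases hq t with h | h <;> rw [h]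
        · exact hmeasEv t
        · exact MeasurableSet.empty
    have hPA : P A = ∑' t : CT μ (N+2), (if M t.1 then P (Ev μ ξ u g (N+2) t) else 0) := by
      rw [hPdecomp A (fun t => by rw [hAt t]; split <;> [left; right] <;> rfl)]
      refine tsum_congr (fun t => ?_)
      rw [hAt t]
      split <;> simp
    have hPAB : P AB = ∑' t : CT μ (N+2),
        (if M t.1 ∧ Z t = bstep then P (Ev μ ξ u g (N+2) t) else 0) := by
      rw [hPdecomp AB (fun t => by rw [hABt t]; split <;> [left; right] <;> rfl)]
      refine tsum_congr (fun t => ?_)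
      rw [hABt t]
      split <;> simp
    -- count of matching steps
    set Q : ℕ → Prop := fun j => (s (j - 1))⁻¹ * s j = bstep with hQdef
    set cnt : ℕ := ((Finset.Icc 1 (N+1)).filter Q).card with hcnt
    have hncard : Set.ncard {i : ℕ | 1 ≤ i ∧ i ≤ N + 1 ∧ (s (i - 1))⁻¹ * s i = bstep} = cnt := by
      have : {i : ℕ | 1 ≤ i ∧ i ≤ N + 1 ∧ (s (i - 1))⁻¹ * s i = bstep} =
          ↑((Finset.Icc 1 (N+1)).filter Q) := by
        ext i
        simp [hQdef, Finset.mem_Icc, and_assoc]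
      rw [this, Set.ncard_coe_finset]
    -- the target real number
    set R : ℝ := (1 - α) * μ bstep + α * (cnt : ℝ) / ((N + 1 : ℕ) : ℝ) with hRdef
    have hNpos : (0:ℝ) < ((N + 1 : ℕ) : ℝ) := by positivity
    have hRnn : 0 ≤ R := by
      rw [hRdef]
      have h1 : 0 ≤ (1 - α) * μ bstep := mul_nonneg (by linarith) (hμ0 _)
      have h2 : 0 ≤ α * (cnt : ℝ) / ((N + 1 : ℕ) : ℝ) := by positivity
      linarith
    -- step identity under matching
    have hxs : ∀ (c : CT μ (N+1)), M c → ∀ j : ℕ, 1 ≤ j → j ≤ N + 1 →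
        cfgX μ (N+1) c (detL (cfgA μ (N+1) c) (cfgB μ (N+1) c) j) = (s (j - 1))⁻¹ * s j := by
      intro c hM j hj1 hj2
      obtain ⟨l, rfl⟩ : ∃ l, j = l + 1 := ⟨j - 1, by omega⟩
      have hsucc := detW_succ (cfgA μ (N+1) c) (cfgB μ (N+1) c) (cfgX μ (N+1) c) l
      rw [hM (l+1) hj2, hM l (by omega)] at hsucc
      have : l + 1 - 1 = l := by omega
      rw [this]
      rw [eq_comm, inv_mul_eq_iff_eq_mul]
      rw [hsucc]
    -- the inner weight sum with constraint
    have hw_nonneg : ∀ a : Bool, (0:ℝ) ≤ (if a = true then α else 1 - α) := by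
      intro a; split <;> [exact hα0; linarith]
    have hInnerW : ∀ (c : CT μ (N+1)), M c →
        (∑' e : Bool × ↥(Finset.Icc 1 (N+1)) × ↥(Function.support μ),
          (if Z (c, e.1, e.2.1, e.2.2) = bstep then
            ENNReal.ofReal ((if e.1 = true then α else 1 - α) *
              (1 / ((N + 1 : ℕ) : ℝ)) * μ (e.2.2 : G)) else 0)) = ENNReal.ofReal R := by
      intro c hM
      have hZfalse : ∀ (j : ↥(Finset.Icc 1 (N+1))) (y : ↥(Function.support μ)),
          (Z (c, false, j, y) = bstep) = ((y : G) = bstep) := by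
        intro j y
        have hz : Z (c, false, j, y) = (y : G) := by simp [hZdef]
        rw [hz]
      have hZtrue : ∀ (j : ↥(Finset.Icc 1 (N+1))) (y : ↥(Function.support μ)),
          (Z (c, true, j, y) = bstep) = Q (j : ℕ) := by
        intro j y
        have hj := j.2
        rw [Finset.mem_Icc] at hj
        have hz : Z (c, true, j, y) =
            cfgX μ (N+1) c (detL (cfgA μ (N+1) c) (cfgB μ (N+1) c) (j : ℕ)) := by
          simp [hZdef]
        rw [hz, hxs c hM (j : ℕ) hj.1 hj.2, hQdef]
      rw [ENNReal.tsum_prod']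
      rw [tsum_bool]
      have hfalse : (∑' p : ↥(Finset.Icc 1 (N+1)) × ↥(Function.support μ),
          (if Z (c, false, p.1, p.2) = bstep then
            ENNReal.ofReal ((if false = true then α else 1 - α) *
              (1 / ((N + 1 : ℕ) : ℝ)) * μ (p.2 : G)) else 0)) =
          ((N + 1 : ℕ) : ENNReal) * ENNReal.ofReal ((1 - α) * (1 / ((N + 1 : ℕ) : ℝ)) * μ bstep) := by
        rw [ENNReal.tsum_prod']
        have : ∀ j : ↥(Finset.Icc 1 (N+1)),
            (∑' y : ↥(Function.support μ), (if Z (c, false, j, y) = bstep then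
              ENNReal.ofReal ((if false = true then α else 1 - α) *
                (1 / ((N + 1 : ℕ) : ℝ)) * μ (y : G)) else 0)) =
            ENNReal.ofReal ((1 - α) * (1 / ((N + 1 : ℕ) : ℝ)) * μ bstep) := by
          intro j
          rw [← sum_y_single (μ := μ) ((1 - α) * (1 / ((N + 1 : ℕ) : ℝ))) bstep]
          refine tsum_congr (fun y => ?_)
          simp only [hZfalse j y, Bool.false_eq_true, if_false]
        rw [tsum_congr this, sum_j_const]
      have htrue : (∑' p : ↥(Finset.Icc 1 (N+1)) × ↥(Function.support μ),
          (if Z (c, true, p.1, p.2) = bstep then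
            ENNReal.ofReal ((if true = true then α else 1 - α) *
              (1 / ((N + 1 : ℕ) : ℝ)) * μ (p.2 : G)) else 0)) =
          (cnt : ENNReal) * ENNReal.ofReal (α * (1 / ((N + 1 : ℕ) : ℝ))) := by
        rw [ENNReal.tsum_prod']
        have : ∀ j : ↥(Finset.Icc 1 (N+1)),
            (∑' y : ↥(Function.support μ), (if Z (c, true, j, y) = bstep then
              ENNReal.ofReal ((if true = true then α else 1 - α) *
                (1 / ((N + 1 : ℕ) : ℝ)) * μ (y : G)) else 0)) =
            (if Q (j : ℕ) then ENNReal.ofReal (α * (1 / ((N + 1 : ℕ) : ℝ))) else 0) := by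
          intro j
          by_cases hq : Q (j : ℕ)
          · rw [if_pos hq]
            have heq : ∀ y : ↥(Function.support μ), (if Z (c, true, j, y) = bstep then
                ENNReal.ofReal ((if true = true then α else 1 - α) *
                  (1 / ((N + 1 : ℕ) : ℝ)) * μ (y : G)) else 0) =
                ENNReal.ofReal (α * (1 / ((N + 1 : ℕ) : ℝ)) * μ (y : G)) := by
              intro y
              simp only [hZtrue j y, if_pos hq]
              norm_num
            rw [tsum_congr heq]
            exact sum_y hμ0 hμ1 _ (mul_nonneg hα0 (by positivity))
          · rw [if_neg hq]
            have heq : ∀ y : ↥(Function.support μ), (if Z (c, true, j, y) = bstep then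
                ENNReal.ofReal ((if true = true then α else 1 - α) *
                  (1 / ((N + 1 : ℕ) : ℝ)) * μ (y : G)) else 0) = 0 := by
              intro y
              simp only [hZtrue j y, if_neg hq]
            rw [tsum_congr heq, tsum_zero]
        rw [tsum_congr this, sum_j N Q _]
      rw [hfalse, htrue]
      -- now a real computation
      rw [← ENNReal.ofReal_natCast (N+1), ← ENNReal.ofReal_natCast cnt]
      rw [← ENNReal.ofReal_mul (Nat.cast_nonneg _), ← ENNReal.ofReal_mul (Nat.cast_nonneg _)]
      rw [← ENNReal.ofReal_add
        (mul_nonneg (by positivity)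
          (mul_nonneg (mul_nonneg (by linarith) (by positivity)) (hμ0 _)))
        (mul_nonneg (Nat.cast_nonneg _) (mul_nonneg hα0 (by positivity)))]
      congr 1
      rw [hRdef]
      field_simp
    -- assembling
    have hPA' : P A = ∑' c : CT μ (N+1), (if M c then P (Ev μ ξ u g (N+1) c) else 0) := by
      rw [hPA]
      rw [show (∑' t : CT μ (N+2), (if M t.1 then P (Ev μ ξ u g (N+2) t) else 0)) =
        ∑' t : (CT μ (N+1) × Bool × ↥(Finset.Icc 1 (N+1)) × ↥(Function.support μ)),
          (if M t.1 then P (Ev μ ξ u g (N+2) t) else 0) from rfl]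
      rw [ENNReal.tsum_prod']
      refine tsum_congr (fun c => ?_)
      by_cases hM : M c
      · rw [if_pos hM]
        have : ∀ e : Bool × ↥(Finset.Icc 1 (N+1)) × ↥(Function.support μ),
            (if M (c, e).1 then P (Ev μ ξ u g (N+2) (c, e)) else 0) =
            P (Ev μ ξ u g (N+1) c) * ENNReal.ofReal ((if e.1 = true then α else 1 - α) *
              (1 / ((N + 1 : ℕ) : ℝ)) * μ (e.2.2 : G)) := by
          intro e
          rw [if_pos hM]
          exact P_Ev_succ P α hμ0 hα0 hα1 hHJ N (c, e)
        rw [tsum_congr this, ENNReal.tsum_mul_left, sum_weight α hμ0 hμ1 hα0 hα1 N, mul_one]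
      · rw [if_neg hM]
        have : ∀ e : Bool × ↥(Finset.Icc 1 (N+1)) × ↥(Function.support μ),
            (if M (c, e).1 then P (Ev μ ξ u g (N+2) (c, e)) else 0) = 0 := by
          intro e
          rw [if_neg hM]
        rw [tsum_congr this, tsum_zero]
    have hPAB' : P AB = (∑' c : CT μ (N+1), (if M c then P (Ev μ ξ u g (N+1) c) else 0)) *
        ENNReal.ofReal R := by
      rw [hPAB]
      rw [show (∑' t : CT μ (N+2), (if M t.1 ∧ Z t = bstep then P (Ev μ ξ u g (N+2) t) else 0)) =
        ∑' t : (CT μ (N+1) × Bool × ↥(Finset.Icc 1 (N+1)) × ↥(Function.support μ)),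
          (if M t.1 ∧ Z t = bstep then P (Ev μ ξ u g (N+2) t) else 0) from rfl]
      rw [ENNReal.tsum_prod', ← ENNReal.tsum_mul_right]
      refine tsum_congr (fun c => ?_)
      by_cases hM : M c
      · rw [if_pos hM]
        have : ∀ e : Bool × ↥(Finset.Icc 1 (N+1)) × ↥(Function.support μ),
            (if M (c, e).1 ∧ Z (c, e) = bstep then P (Ev μ ξ u g (N+2) (c, e)) else 0) =
            P (Ev μ ξ u g (N+1) c) * (if Z (c, e.1, e.2.1, e.2.2) = bstep then
              ENNReal.ofReal ((if e.1 = true then α else 1 - α) *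
                (1 / ((N + 1 : ℕ) : ℝ)) * μ (e.2.2 : G)) else 0) := by
          intro e
          by_cases hz : Z (c, e) = bstep
          · rw [if_pos ⟨hM, hz⟩, if_pos hz]
            exact P_Ev_succ P α hμ0 hα0 hα1 hHJ N (c, e)
          · rw [if_neg (fun hc => hz hc.2), if_neg hz, mul_zero]
        rw [tsum_congr this, ENNReal.tsum_mul_left, hInnerW c hM]
      · rw [if_neg hM, zero_mul]
        have : ∀ e : Bool × ↥(Finset.Icc 1 (N+1)) × ↥(Function.support μ),
            (if M (c, e).1 ∧ Z (c, e) = bstep then P (Ev μ ξ u g (N+2) (c, e)) else 0) = 0 := by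
          intro e
          rw [if_neg (fun hc => hM hc.1)]
        rw [tsum_congr this, tsum_zero]
    have hfinal : P AB = P A * ENNReal.ofReal R := by rw [hPAB', hPA']
    show (P AB).toReal = (P A).toReal * _
    rw [hfinal, ENNReal.toReal_mul, ENNReal.toReal_ofReal hRnn]
    congr 1
    rw [hRdef, hncard]
end

section
/- For every α ∈ [0,1) and every n ≥ 1, ℙ( I(n) ≤ (1−α)·n/8 ) ≤ 5·e^{−3(1−α)n/280}. -/
open MeasureTheory Finset

/-- `IsForestRoot ξ u root` : `root k ω` is the label of the root of the connected component
of vertex `k` in the percolated random recursive forest built from `(ξ, u)`: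
`root 1 = 1` and, for `k ≥ 2`, `root k = root (u k)` if the edge `{k, u k}` is retained
(`ξ k = 1`), while `root k = k` if it is deleted. -/
def IsForestRoot {Ω : Type} (ξ : ℕ → Ω → Bool) (u : ℕ → Ω → ℕ)
    (root : ℕ → Ω → ℕ) : Prop :=
  (∀ ω, root 1 ω = 1) ∧
  ∀ ω, ∀ k, 2 ≤ k → root k ω = if ξ k ω = true then root (u k ω) ω else k

/-- `ForestLaw P α ξ u` : under the probability measure `P`, the `(ξ_k)_{k≥2}` are i.i.d.
Bernoulli(α), the `(u_k)_{k≥2}` are independent with `u_k` uniform on `{1,…,k−1}`, and all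
these random variables are jointly independent; this is expressed by the finite-dimensional
product formula, together with measurability of the random variables. -/
def ForestLaw {Ω : Type} [MeasurableSpace Ω] (P : Measure Ω) (α : ℝ)
    (ξ : ℕ → Ω → Bool) (u : ℕ → Ω → ℕ) : Prop :=
  (∀ k b, MeasurableSet {ω | ξ k ω = b}) ∧
  (∀ k j, MeasurableSet {ω | u k ω = j}) ∧
  ∀ n : ℕ, 2 ≤ n → ∀ (a : ℕ → Bool) (b : ℕ → ℕ),
    (P {ω | ∀ k, 2 ≤ k → k ≤ n → (ξ k ω = a k ∧ u k ω = b k)}).toReal =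
      ∏ k ∈ Finset.Icc 2 n,
        ((if a k = true then α else 1 - α) *
          (if 1 ≤ b k ∧ b k ≤ k - 1 then 1 / ((k : ℝ) - 1) else 0))

/-- `clusterSize root n j ω = |𝒞_{j,n}|`, the size of the cluster of the forest `𝔽_n`
rooted at `j` (equal to `0` if no cluster is rooted at `j`). -/
def clusterSize {Ω : Type} (root : ℕ → Ω → ℕ) (n j : ℕ) (ω : Ω) : ℕ :=
  ((Finset.Icc 1 n).filter fun k => root k ω = j).card

/-- `clusterCount root k n ω = N_k(n)`, the number of clusters of size `k` in `𝔽_n`.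
In particular `clusterCount root 1 n ω = I(n)` is the number of isolated vertices. -/
def clusterCount {Ω : Type} (root : ℕ → Ω → ℕ) (k n : ℕ) (ω : Ω) : ℕ :=
  ((Finset.Icc 1 n).filter fun j => clusterSize root n j ω = k).card

/-- the "window" `(n/2, n]`. -/
def win (n : ℕ) : Finset ℕ := Finset.Ioc (n/2) n

/-- number of deleted vertices in the window -/
def Dcnt (n : ℕ) (a : ℕ → Bool) : ℕ := ((win n).filter fun k => a k = false).card

/-- set of edges attacking a deleted window vertex -/
def Tset (n : ℕ) (a : ℕ → Bool) (b : ℕ → ℕ) : Finset ℕ :=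
  (Finset.Icc 2 n).filter fun j => a j = true ∧ b j ∈ win n ∧ a (b j) = false

def Tcnt (n : ℕ) (a : ℕ → Bool) (b : ℕ → ℕ) : ℕ := (Tset n a b).card

section Graph
variable {Ω : Type} (ξ : ℕ → Ω → Bool) (u : ℕ → Ω → ℕ) (root : ℕ → Ω → ℕ)

/-- tracing the root: either fixpoint or some retained edge points to the root. -/
lemma root_trace (hroot : IsForestRoot ξ u root) (n : ℕ) (ω : Ω)
    (hval : ∀ j, 2 ≤ j → j ≤ n → 1 ≤ u j ω ∧ u j ω ≤ j - 1) :
    ∀ k', 1 ≤ k' → k' ≤ n → ∀ k, root k' ω = k →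
      k' = k ∨ ∃ j, 2 ≤ j ∧ j ≤ n ∧ k < j ∧ ξ j ω = true ∧ u j ω = k := by
  intro k'
  induction k' using Nat.strong_induction_on with
  | _ k' IH =>
    intro h1 hn k hr
    rcases eq_or_lt_of_le h1 with h1' | h2
    · left; rw [← h1'] at hr ⊢; rw [hroot.1 ω] at hr; omega
    · -- 2 ≤ k'
      have h2' : 2 ≤ k' := h2
      rw [hroot.2 ω k' h2'] at hr
      by_cases hx : ξ k' ω = true
      · rw [if_pos hx] at hr
        obtain ⟨hu1, hu2⟩ := hval k' h2' hn
        have hlt : u k' ω < k' := by omega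
        have := IH (u k' ω) hlt hu1 (by omega) k hr
        rcases this with heq | ⟨j, hj⟩
        · right; exact ⟨k', h2', hn, by omega, hx, heq⟩
        · right; exact ⟨j, hj.1, hj.2.1, hj.2.2⟩
      · rw [if_neg hx] at hr; left; exact hr

/-- an unattacked deleted window vertex is isolated -/
lemma isolated_of_unattacked (hroot : IsForestRoot ξ u root) (n : ℕ) (ω : Ω)
    (hval : ∀ j, 2 ≤ j → j ≤ n → 1 ≤ u j ω ∧ u j ω ≤ j - 1)
    (k : ℕ) (hk2 : 2 ≤ k) (hkn : k ≤ n) (hdel : ξ k ω = false)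
    (hno : ∀ j, 2 ≤ j → j ≤ n → k < j → ¬(ξ j ω = true ∧ u j ω = k)) :
    clusterSize root n k ω = 1 := by
  have hrk : root k ω = k := by
    rw [hroot.2 ω k hk2, if_neg (by simp [hdel])]
  have : ((Finset.Icc 1 n).filter fun k' => root k' ω = k) = {k} := by
    ext k'
    simp only [Finset.mem_filter, Finset.mem_Icc, Finset.mem_singleton]
    constructor
    · rintro ⟨⟨h1, hn'⟩, hr⟩
      rcases root_trace ξ u root hroot n ω hval k' h1 hn' k hr with h | ⟨j, hj1, hj2, hj3, hj4, hj5⟩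
      · exact h
      · exact absurd ⟨hj4, hj5⟩ (hno j hj1 hj2 hj3)
    · rintro rfl; exact ⟨⟨by omega, hkn⟩, hrk⟩
  rw [clusterSize, this, Finset.card_singleton]

/-- key pointwise bound : `D - T ≤ I(n)`. -/
lemma key_pointwise (hroot : IsForestRoot ξ u root) (n : ℕ) (ω : Ω)
    (a : ℕ → Bool) (b : ℕ → ℕ)
    (hmξ : ∀ k, 2 ≤ k → k ≤ n → ξ k ω = a k)
    (hmu : ∀ k, 2 ≤ k → k ≤ n → u k ω = b k)
    (hvb : ∀ k, 2 ≤ k → k ≤ n → 1 ≤ b k ∧ b k ≤ k - 1) :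
    (Dcnt n a : ℝ) - (Tcnt n a b : ℝ) ≤ (clusterCount root 1 n ω : ℝ) := by
  have hval : ∀ j, 2 ≤ j → j ≤ n → 1 ≤ u j ω ∧ u j ω ≤ j - 1 := by
    intro j h2 hn; rw [hmu j h2 hn]; exact hvb j h2 hn
  -- the set of isolated candidates
  set Dset := ((win n).filter fun k => a k = false) with hDset
  set Iso := Dset.filter (fun k => ((Finset.Ioc k n).filter (fun j => a j = true ∧ b j = k)) = ∅) with hIso
  -- members of window are ≥ 2 and ≤ n (when n/2 ≥ 1, i.e. n ≥ 2); handle small n separately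
  have hIsoCS : ∀ k ∈ Iso, clusterSize root n k ω = 1 := by
    intro k hk
    rw [hIso, Finset.mem_filter] at hk
    obtain ⟨hkD, hkno⟩ := hk
    rw [hDset, Finset.mem_filter, win, Finset.mem_Ioc] at hkD
    obtain ⟨⟨hk1, hkn⟩, hkdel⟩ := hkD
    rcases Nat.lt_or_ge k 2 with hk2 | hk2
    · -- k = 1 (so n = 1): vertex 1 is always isolated in 𝔽₁
      have hk1' : k = 1 := by omega
      have hn1 : n = 1 := by omega
      subst hk1'; subst hn1
      have : ((Finset.Icc 1 1).filter fun k' => root k' ω = 1) = {1} := by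
        ext k'
        simp only [Finset.mem_filter, Finset.mem_Icc, Finset.mem_singleton]
        constructor
        · rintro ⟨⟨h1, h2⟩, _⟩; omega
        · rintro rfl; exact ⟨⟨le_refl 1, le_refl 1⟩, hroot.1 ω⟩
      rw [clusterSize, this, Finset.card_singleton]
    exact isolated_of_unattacked ξ u root hroot n ω hval k hk2 hkn
      (by rw [hmξ k hk2 hkn, hkdel])
      (by intro j hj2 hjn hkj hcon
          have hjmem : j ∈ (Finset.Ioc k n).filter (fun j => a j = true ∧ b j = k) := by
            rw [Finset.mem_filter, Finset.mem_Ioc]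
            refine ⟨⟨hkj, hjn⟩, ?_⟩
            rw [← hmξ j hj2 hjn, ← hmu j hj2 hjn]; exact hcon
          rw [hkno] at hjmem
          exact absurd hjmem (Finset.notMem_empty j))
  have hIsoSub : Iso ⊆ (Finset.Icc 1 n).filter (fun j => clusterSize root n j ω = 1) := by
    intro k hk
    have hk' := hk
    rw [hIso, Finset.mem_filter] at hk'
    have hkD := hk'.1
    rw [hDset, Finset.mem_filter, win, Finset.mem_Ioc] at hkD
    rw [Finset.mem_filter, Finset.mem_Icc]
    exact ⟨⟨by omega, hkD.1.2⟩, hIsoCS k hk⟩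
  have h1 : Iso.card ≤ clusterCount root 1 n ω := by
    rw [clusterCount]; exact Finset.card_le_card hIsoSub
  -- Dset \ Iso injects into Tset
  have h2 : (Dset \ Iso).card ≤ Tcnt n a b := by
    rw [Tcnt]
    have hex : ∀ k ∈ Dset \ Iso, ∃ j, j ∈ Finset.Ioc k n ∧ a j = true ∧ b j = k := by
      intro k hk
      rw [Finset.mem_sdiff, hIso] at hk
      obtain ⟨hkD, hkI⟩ := hk
      have : ¬ ((Finset.Ioc k n).filter (fun j => a j = true ∧ b j = k) = ∅) := by
        intro hc; exact hkI (Finset.mem_filter.mpr ⟨hkD, hc⟩)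
      rcases Finset.nonempty_of_ne_empty this with ⟨j, hj⟩
      rw [Finset.mem_filter] at hj
      exact ⟨j, hj.1, hj.2⟩
    choose f hf1 hf2 hf3 using hex
    refine Finset.card_le_card_of_injOn (fun k => if h : k ∈ Dset \ Iso then f k h else 0) ?_ ?_
    · intro k hk
      simp only [dif_pos (Finset.mem_coe.mp hk)]
      have hkD : k ∈ Dset := (Finset.mem_sdiff.mp hk).1
      rw [hDset, Finset.mem_filter, win, Finset.mem_Ioc] at hkD
      have hj := hf1 k hk
      rw [Finset.mem_Ioc] at hj
      rw [Tset, Finset.mem_coe, Finset.mem_filter, Finset.mem_Icc]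
      refine ⟨⟨by omega, hj.2⟩, hf2 k hk, ?_, ?_⟩
      · rw [hf3 k hk, win, Finset.mem_Ioc]; exact hkD.1
      · rw [hf3 k hk]; exact hkD.2
    · intro k1 hk1 k2 hk2 heq
      simp only [Finset.mem_coe] at hk1 hk2
      simp only [dif_pos hk1, dif_pos hk2] at heq
      have e1 := hf3 k1 hk1
      have e2 := hf3 k2 hk2
      rw [heq] at e1; rw [e1] at e2; exact e2
  have h3 : Dset.card ≤ Iso.card + (Dset \ Iso).card := by
    have hsub : Iso ⊆ Dset := Finset.filter_subset _ _
    have := Finset.card_sdiff_add_card_eq_card hsub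
    omega
  have hD : Dcnt n a = Dset.card := rfl
  have : Dcnt n a ≤ clusterCount root 1 n ω + Tcnt n a b := by
    rw [hD]; omega
  push_cast
  have := (Nat.cast_le (α := ℝ)).mpr this
  push_cast at this
  linarith

end Graph


/-! ### Configuration space -/

abbrev Kt (n : ℕ) : Type := {k : ℕ // k ∈ Finset.Icc 2 n}

/-- valid choices for the `u`-part of a configuration -/
def VB (n : ℕ) : Finset (Kt n → ℕ) := Fintype.piFinset (fun k => Finset.Icc 1 (k.1 - 1))

/-- extension of the ξ-part of a configuration to all of ℕ -/
def aex (n : ℕ) (A : Kt n → Bool) : ℕ → Bool :=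
  fun k => if h : k ∈ Finset.Icc 2 n then A ⟨k, h⟩ else true

/-- extension of the u-part of a configuration to all of ℕ -/
def bex (n : ℕ) (B : Kt n → ℕ) : ℕ → ℕ :=
  fun k => if h : k ∈ Finset.Icc 2 n then B ⟨k, h⟩ else 0

lemma aex_eq (n : ℕ) (A : Kt n → Bool) (k : Kt n) : aex n A k.1 = A k := by
  rw [aex, dif_pos k.2]

lemma bex_eq (n : ℕ) (B : Kt n → ℕ) (k : Kt n) : bex n B k.1 = B k := by
  rw [bex, dif_pos k.2]

/-- weight of a configuration -/
noncomputable def wgt (α : ℝ) (n : ℕ) (A : Kt n → Bool) : ℝ :=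
  ∏ k : Kt n, ((if A k then α else 1 - α) * (1 / ((k.1 : ℝ) - 1)))

/-- cylinder event of a configuration -/
def Ev {Ω : Type} (ξ : ℕ → Ω → Bool) (u : ℕ → Ω → ℕ) (n : ℕ)
    (A : Kt n → Bool) (B : Kt n → ℕ) : Set Ω :=
  {ω | ∀ k, 2 ≤ k → k ≤ n → (ξ k ω = aex n A k ∧ u k ω = bex n B k)}

section Measure
variable {Ω : Type} [MeasurableSpace Ω] (P : Measure Ω) [IsProbabilityMeasure P]
  (α : ℝ) (ξ : ℕ → Ω → Bool) (u : ℕ → Ω → ℕ)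

lemma Ev_measurable (hlaw : ForestLaw P α ξ u) (n : ℕ) (A : Kt n → Bool) (B : Kt n → ℕ) :
    MeasurableSet (Ev ξ u n A B) := by
  have : Ev ξ u n A B =
      ⋂ k ∈ Finset.Icc 2 n, ({ω | ξ k ω = aex n A k} ∩ {ω | u k ω = bex n B k}) := by
    ext ω
    simp only [Ev, Set.mem_setOf_eq, Set.mem_iInter, Set.mem_inter_iff, Finset.mem_Icc]
    constructor
    · intro h k hk; exact h k hk.1 hk.2
    · intro h k h1 h2; exact h k ⟨h1, h2⟩
  rw [this]
  exact MeasurableSet.biInter (Finset.Icc 2 n).countable_toSet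
    (fun k _ => (hlaw.1 k _).inter (hlaw.2.1 k _))

lemma Ev_prob (hlaw : ForestLaw P α ξ u) (n : ℕ) (hn : 2 ≤ n)
    (A : Kt n → Bool) (B : Kt n → ℕ) (hB : B ∈ VB n) :
    (P (Ev ξ u n A B)).toReal = wgt α n A := by
  have h := hlaw.2.2 n hn (aex n A) (bex n B)
  rw [Ev]
  rw [h, wgt]
  rw [← Finset.prod_attach (Finset.Icc 2 n)
    (fun k => ((if aex n A k then α else 1 - α) *
      (if 1 ≤ bex n B k ∧ bex n B k ≤ k - 1 then 1 / ((k : ℝ) - 1) else 0)))]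
  rw [Finset.univ_eq_attach]
  apply Finset.prod_congr rfl
  intro k _
  rw [aex_eq, bex_eq]
  have hk2 : 2 ≤ k.1 := (Finset.mem_Icc.mp k.2).1
  have hBk : B k ∈ Finset.Icc 1 (k.1 - 1) := by
    rw [VB, Fintype.mem_piFinset] at hB; exact hB k
  rw [Finset.mem_Icc] at hBk
  rw [if_pos hBk]

lemma Ev_disjoint (n : ℕ) :
    (↑((Finset.univ : Finset (Kt n → Bool)) ×ˢ VB n) : Set ((Kt n → Bool) × (Kt n → ℕ))).PairwiseDisjoint
      (fun p => Ev ξ u n p.1 p.2) := by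
  intro p _ q _ hpq
  rw [Function.onFun, Set.disjoint_left]
  intro ω hp hq
  apply hpq
  have hcomp : ∀ k : Kt n, (aex n p.1 k.1 = aex n q.1 k.1) ∧ (bex n p.2 k.1 = bex n q.2 k.1) := by
    intro k
    have hk2 := (Finset.mem_Icc.mp k.2).1
    have hkn := (Finset.mem_Icc.mp k.2).2
    have h1 := hp k.1 hk2 hkn
    have h2 := hq k.1 hk2 hkn
    exact ⟨h1.1 ▸ h2.1.symm ▸ rfl, by rw [← h1.2, ← h2.2]⟩
  have hA : p.1 = q.1 := by
    funext k
    have := (hcomp k).1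
    rwa [aex_eq, aex_eq] at this
  have hB : p.2 = q.2 := by
    funext k
    have := (hcomp k).2
    rwa [bex_eq, bex_eq] at this
  exact Prod.ext hA hB

lemma wgt_nonneg (hα0 : 0 ≤ α) (hα1 : α < 1) (n : ℕ) (A : Kt n → Bool) : 0 ≤ wgt α n A := by
  apply Finset.prod_nonneg
  intro k _
  have hk2 : 2 ≤ k.1 := (Finset.mem_Icc.mp k.2).1
  have : (0:ℝ) < (k.1 : ℝ) - 1 := by
    have : (2:ℝ) ≤ (k.1 : ℝ) := by exact_mod_cast hk2
    linarith
  apply mul_nonneg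
  · split <;> linarith
  · positivity

/-- factorization of sums over the `B`-part -/
lemma sum_VB_prod (n : ℕ) (h : Kt n → ℕ → ℝ) :
    ∑ B ∈ VB n, ∏ k : Kt n, h k (B k) = ∏ k : Kt n, ∑ v ∈ Finset.Icc 1 (k.1 - 1), h k v :=
  (Finset.prod_univ_sum _ _).symm

/-- factorization of sums over the `A`-part -/
lemma sum_A_prod (n : ℕ) (G : Kt n → Bool → ℝ) :
    ∑ A : Kt n → Bool, ∏ k : Kt n, G k (A k) = ∏ k : Kt n, (G k true + G k false) := by
  have : ∏ k : Kt n, ∑ v ∈ (Finset.univ : Finset Bool), G k v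
      = ∑ A ∈ Fintype.piFinset (fun _ : Kt n => (Finset.univ : Finset Bool)), ∏ k : Kt n, G k (A k) :=
    Finset.prod_univ_sum _ _
  rw [Fintype.piFinset_univ] at this
  rw [← this]
  apply Finset.prod_congr rfl
  intro k _
  rw [Fintype.sum_bool]

lemma cast_pred (k : Kt n) : ((k.1 - 1 : ℕ) : ℝ) = (k.1 : ℝ) - 1 := by
  have hk2 : 2 ≤ k.1 := (Finset.mem_Icc.mp k.2).1
  have : (1:ℕ) ≤ k.1 := by omega
  push_cast [this]; ring

lemma kpos (k : Kt n) : (0:ℝ) < (k.1 : ℝ) - 1 := by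
  have hk2 : 2 ≤ k.1 := (Finset.mem_Icc.mp k.2).1
  have : (2:ℝ) ≤ (k.1 : ℝ) := by exact_mod_cast hk2
  linarith

lemma total_mass (n : ℕ) :
    ∑ A : Kt n → Bool, ∑ B ∈ VB n, wgt α n A = 1 := by
  have h1 : ∀ A : Kt n → Bool, ∑ B ∈ VB n, wgt α n A
      = ∏ k : Kt n, (if A k then α else 1 - α) := by
    intro A
    have := sum_VB_prod n (fun k v => (if A k then α else 1 - α) * (1 / ((k.1 : ℝ) - 1)))
    rw [wgt]
    calc ∑ B ∈ VB n, ∏ k : Kt n, ((if A k then α else 1 - α) * (1 / ((k.1 : ℝ) - 1)))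
        = ∑ B ∈ VB n, ∏ k : Kt n,
            (fun k v => (if A k then α else 1 - α) * (1 / ((k.1 : ℝ) - 1))) k (B k) := rfl
      _ = ∏ k : Kt n, ∑ v ∈ Finset.Icc 1 (k.1 - 1),
            ((if A k then α else 1 - α) * (1 / ((k.1 : ℝ) - 1))) := this
      _ = ∏ k : Kt n, (if A k then α else 1 - α) := by
          apply Finset.prod_congr rfl
          intro k _
          rw [Finset.sum_const, Nat.card_Icc, nsmul_eq_mul]
          have h2 : (k.1 - 1 + 1 - 1 : ℕ) = k.1 - 1 := by omega
          rw [h2, cast_pred]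
          have hne : ((k.1:ℝ) - 1) ≠ 0 := (kpos k).ne'
          field_simp
  have h2 := sum_A_prod n (fun _ b => if b then α else 1 - α)
  calc ∑ A : Kt n → Bool, ∑ B ∈ VB n, wgt α n A
      = ∑ A : Kt n → Bool, ∏ k : Kt n, (fun (_ : Kt n) (b : Bool) => if b then α else 1 - α) k (A k) := by
        apply Finset.sum_congr rfl; intro A _; exact h1 A
    _ = ∏ k : Kt n, ((fun (_ : Kt n) (b : Bool) => if b then α else 1 - α) k true
          + (fun (_ : Kt n) (b : Bool) => if b then α else 1 - α) k false) := h2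
    _ = 1 := by simp

lemma reduction (root : ℕ → Ω → ℕ) (hlaw : ForestLaw P α ξ u) (hroot : IsForestRoot ξ u root)
    (n : ℕ) (hn : 2 ≤ n) (t : ℝ) :
    (P {ω | (clusterCount root 1 n ω : ℝ) ≤ t}).toReal ≤
      ∑ A : Kt n → Bool, ∑ B ∈ VB n,
        (if (Dcnt n (aex n A) : ℝ) - (Tcnt n (aex n A) (bex n B) : ℝ) ≤ t
          then wgt α n A else 0) := by
  classical
  set pairs : Finset ((Kt n → Bool) × (Kt n → ℕ)) := Finset.univ ×ˢ VB n with hpairs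
  set U : Set Ω := ⋃ p ∈ pairs, Ev ξ u n p.1 p.2 with hU
  have hmeas : ∀ p ∈ pairs, MeasurableSet (Ev ξ u n p.1 p.2) :=
    fun p _ => Ev_measurable P α ξ u hlaw n p.1 p.2
  have hUmeas : MeasurableSet U := by
    exact Finset.measurableSet_biUnion pairs hmeas
  have hPU : P U = ∑ p ∈ pairs, P (Ev ξ u n p.1 p.2) :=
    measure_biUnion_finset (Ev_disjoint ξ u n) hmeas
  have hPU1 : (P U).toReal = 1 := by
    rw [hPU, ENNReal.toReal_sum (fun p _ => measure_ne_top P _)]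
    have : ∀ p ∈ pairs, (P (Ev ξ u n p.1 p.2)).toReal = wgt α n p.1 := by
      intro p hp
      rw [hpairs, Finset.mem_product] at hp
      exact Ev_prob P α ξ u hlaw n hn p.1 p.2 hp.2
    rw [Finset.sum_congr rfl this, hpairs, Finset.sum_product]
    exact total_mass α n
  have hPUc : P Uᶜ = 0 := by
    have h1 : P U = P (Set.univ) := by
      have := (ENNReal.toReal_eq_toReal_iff' (measure_ne_top P U) (measure_ne_top P Set.univ)).mp
      apply this
      rw [hPU1, measure_univ, ENNReal.toReal_one]
    rw [measure_compl hUmeas (measure_ne_top P U), h1, measure_univ]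
    simp
  set badset := pairs.filter
    (fun p => (Dcnt n (aex n p.1) : ℝ) - (Tcnt n (aex n p.1) (bex n p.2) : ℝ) ≤ t) with hbad
  have hsub : {ω | (clusterCount root 1 n ω : ℝ) ≤ t} ⊆ (⋃ p ∈ badset, Ev ξ u n p.1 p.2) ∪ Uᶜ := by
    intro ω hω
    by_cases hωU : ω ∈ U
    · left
      rw [hU, Set.mem_iUnion] at hωU
      obtain ⟨p, hp⟩ := hωU
      rw [Set.mem_iUnion] at hp
      obtain ⟨hppairs, hpEv⟩ := hp
      have hBmem : p.2 ∈ VB n := (Finset.mem_product.mp hppairs).2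
      have hkey : (Dcnt n (aex n p.1) : ℝ) - (Tcnt n (aex n p.1) (bex n p.2) : ℝ)
          ≤ (clusterCount root 1 n ω : ℝ) := by
        apply key_pointwise ξ u root hroot n ω (aex n p.1) (bex n p.2)
        · intro k h2 hkn; exact (hpEv k h2 hkn).1
        · intro k h2 hkn; exact (hpEv k h2 hkn).2
        · intro k h2 hkn
          have : bex n p.2 k = p.2 ⟨k, Finset.mem_Icc.mpr ⟨h2, hkn⟩⟩ :=
            bex_eq n p.2 ⟨k, Finset.mem_Icc.mpr ⟨h2, hkn⟩⟩
          rw [this]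
          have := (Fintype.mem_piFinset.mp hBmem) ⟨k, Finset.mem_Icc.mpr ⟨h2, hkn⟩⟩
          rw [Finset.mem_Icc] at this
          exact this
      have hbadp : p ∈ badset := by
        rw [hbad, Finset.mem_filter]
        exact ⟨hppairs, le_trans hkey hω⟩
      exact Set.mem_biUnion hbadp hpEv
    · right; exact hωU
  have hle : P {ω | (clusterCount root 1 n ω : ℝ) ≤ t}
      ≤ ∑ p ∈ badset, P (Ev ξ u n p.1 p.2) := by
    calc P {ω | (clusterCount root 1 n ω : ℝ) ≤ t}
        ≤ P ((⋃ p ∈ badset, Ev ξ u n p.1 p.2) ∪ Uᶜ) := measure_mono hsub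
      _ ≤ P (⋃ p ∈ badset, Ev ξ u n p.1 p.2) + P Uᶜ := measure_union_le _ _
      _ = P (⋃ p ∈ badset, Ev ξ u n p.1 p.2) := by rw [hPUc, add_zero]
      _ ≤ ∑ p ∈ badset, P (Ev ξ u n p.1 p.2) := measure_biUnion_finset_le _ _
  have hfin : (∑ p ∈ badset, P (Ev ξ u n p.1 p.2)) ≠ ⊤ :=
    (ENNReal.sum_lt_top.mpr (fun p _ => measure_lt_top P _)).ne
  have := ENNReal.toReal_mono hfin hle
  rw [ENNReal.toReal_sum (fun p _ => measure_ne_top P _)] at this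
  refine le_trans this ?_
  have hval : ∀ p ∈ badset, (P (Ev ξ u n p.1 p.2)).toReal = wgt α n p.1 := by
    intro p hp
    rw [hbad, Finset.mem_filter, hpairs, Finset.mem_product] at hp
    exact Ev_prob P α ξ u hlaw n hn p.1 p.2 hp.1.2
  rw [Finset.sum_congr rfl hval, hbad, Finset.sum_filter, hpairs, Finset.sum_product]

end Measure


/-! ### Chernoff bound on the configuration sum -/

noncomputable def sk (n k' : ℕ) : ℝ := ∑ j ∈ Finset.Icc (k'+1) n, 1/((j:ℝ)-1)

noncomputable def ck (n k' : ℕ) : ℝ := 3/10 - (Real.exp (3/10) - 1) * sk n k'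

def KK (n : ℕ) (a : ℕ → Bool) (k : ℕ) : ℕ :=
  ((Finset.Icc 1 (k-1)).filter (fun v => v ∈ win n ∧ a v = false)).card

lemma swap_bound (n : ℕ) (a : ℕ → Bool) :
    ∑ k ∈ Finset.Icc 2 n, (KK n a k : ℝ)/((k:ℝ)-1)
      = ∑ k' ∈ (win n).filter (fun v => a v = false), sk n k' := by
  have hKK : ∀ k ∈ Finset.Icc 2 n, (KK n a k : ℝ)/((k:ℝ)-1)
      = ∑ k' ∈ (win n).filter (fun v => a v = false),
          (if k' ≤ k - 1 then 1/((k:ℝ)-1) else 0) := by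
    intro k hk
    have hset : (Finset.Icc 1 (k-1)).filter (fun v => v ∈ win n ∧ a v = false)
        = ((win n).filter (fun v => a v = false)).filter (fun v => v ≤ k - 1) := by
      ext v
      simp only [Finset.mem_filter, Finset.mem_Icc, win, Finset.mem_Ioc]
      constructor
      · rintro ⟨⟨_, h2⟩, h3, h4⟩; exact ⟨⟨h3, h4⟩, h2⟩
      · rintro ⟨⟨⟨h1, h2⟩, h3⟩, h4⟩; exact ⟨⟨by omega, h4⟩, ⟨h1, h2⟩, h3⟩
    rw [KK, hset, Finset.card_filter]
    push_cast
    rw [Finset.sum_div]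
    apply Finset.sum_congr rfl
    intro v _
    split_ifs <;> simp
  rw [Finset.sum_congr rfl hKK, Finset.sum_comm]
  apply Finset.sum_congr rfl
  intro k' hk'
  rw [Finset.mem_filter, win, Finset.mem_Ioc] at hk'
  have hk'1 : 1 ≤ k' := by omega
  rw [sk, ← Finset.sum_filter]
  have : (Finset.Icc 2 n).filter (fun k => k' ≤ k - 1) = Finset.Icc (k'+1) n := by
    ext x
    simp only [Finset.mem_filter, Finset.mem_Icc]
    omega
  rw [this]


lemma Tcnt_sum (n : ℕ) (a : ℕ → Bool) (b : ℕ → ℕ) :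
    (Tcnt n a b : ℝ) = ∑ j ∈ Finset.Icc 2 n,
      (if a j = true ∧ b j ∈ win n ∧ a (b j) = false then (1:ℝ) else 0) := by
  rw [Tcnt, Tset, Finset.card_filter]
  push_cast
  apply Finset.sum_congr rfl
  intro j _
  split_ifs <;> simp

lemma cfg_inner_sum (α : ℝ) (hα0 : 0 ≤ α) (hα1 : α < 1) (n : ℕ) (A : Kt n → Bool) :
    ∑ B ∈ VB n, Real.exp ((3/10) * (Tcnt n (aex n A) (bex n B) : ℝ)) * wgt α n A
      ≤ (∏ k : Kt n, (if A k then α else 1 - α)) *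
        Real.exp ((Real.exp (3/10) - 1) *
          ∑ k' ∈ (win n).filter (fun v => aex n A v = false), sk n k') := by
  have hE1 : (1:ℝ) ≤ Real.exp (3/10) := by
    rw [← Real.exp_zero]; apply Real.exp_le_exp.mpr; norm_num
  set E := Real.exp (3/10) with hE
  set a := aex n A with ha
  have hwa : ∀ k : Kt n, (0:ℝ) ≤ (if A k then α else 1 - α) := by
    intro k; split_ifs <;> linarith
  -- rewrite each summand as a product over coordinates
  have hsummand : ∀ B ∈ VB n,
      Real.exp ((3/10) * (Tcnt n a (bex n B) : ℝ)) * wgt α n A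
        = ∏ k : Kt n, ((if A k then α else 1 - α) * (1 / ((k.1 : ℝ) - 1)) *
            Real.exp ((3/10) * (if A k = true ∧ B k ∈ win n ∧ a (B k) = false then (1:ℝ) else 0))) := by
    intro B _
    rw [Tcnt_sum, Finset.mul_sum, Real.exp_sum, wgt]
    rw [← Finset.prod_attach (Finset.Icc 2 n) (fun j => Real.exp
      ((3/10) * (if a j = true ∧ bex n B j ∈ win n ∧ a (bex n B j) = false then (1:ℝ) else 0)))]
    rw [Finset.univ_eq_attach, ← Finset.prod_mul_distrib]
    apply Finset.prod_congr rfl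
    intro k _
    rw [mul_comm]
    congr 2
    rw [ha, aex_eq, bex_eq]
  rw [Finset.sum_congr rfl hsummand]
  -- factorize the sum over B
  rw [sum_VB_prod n (fun k v => ((if A k then α else 1 - α) * (1 / ((k.1 : ℝ) - 1)) *
      Real.exp ((3/10) * (if A k = true ∧ v ∈ win n ∧ a v = false then (1:ℝ) else 0))))]
  -- evaluate the per-coordinate sums
  have hKle : ∀ k : Kt n, KK n a k.1 ≤ k.1 - 1 := by
    intro k
    have h := Finset.card_filter_le (Finset.Icc 1 (k.1-1)) (fun v => v ∈ win n ∧ a v = false)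
    rw [Nat.card_Icc] at h
    simp only [KK]
    omega
  have hper : ∀ k : Kt n,
      ∑ v ∈ Finset.Icc 1 (k.1 - 1), ((if A k then α else 1 - α) * (1 / ((k.1 : ℝ) - 1)) *
          Real.exp ((3/10) * (if A k = true ∧ v ∈ win n ∧ a v = false then (1:ℝ) else 0)))
        = (if A k then α else 1 - α) *
          (1 + (if A k = true then (KK n a k.1 : ℝ) else 0) / ((k.1:ℝ) - 1) * (E - 1)) := by
    intro k
    have hx := kpos k
    have hxne : ((k.1:ℝ) - 1) ≠ 0 := ne_of_gt hx
    have hexpif : ∀ v : ℕ, Real.exp ((3/10) *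
        (if A k = true ∧ v ∈ win n ∧ a v = false then (1:ℝ) else 0))
        = (if A k = true ∧ v ∈ win n ∧ a v = false then E else 1) := by
      intro v
      split_ifs
      · rw [mul_one]
      · rw [mul_zero, Real.exp_zero]
    calc ∑ v ∈ Finset.Icc 1 (k.1 - 1), ((if A k then α else 1 - α) * (1 / ((k.1 : ℝ) - 1)) *
          Real.exp ((3/10) * (if A k = true ∧ v ∈ win n ∧ a v = false then (1:ℝ) else 0)))
        = (if A k then α else 1 - α) * ((1 / ((k.1 : ℝ) - 1)) *
            ∑ v ∈ Finset.Icc 1 (k.1 - 1),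
              (if A k = true ∧ v ∈ win n ∧ a v = false then E else 1)) := by
          rw [Finset.mul_sum, Finset.mul_sum]
          apply Finset.sum_congr rfl
          intro v _
          rw [hexpif v]; ring
      _ = (if A k then α else 1 - α) *
          (1 + (if A k = true then (KK n a k.1 : ℝ) else 0) / ((k.1:ℝ) - 1) * (E - 1)) := by
          congr 1
          by_cases hA : A k = true
          · simp only [hA, true_and, if_true]
            rw [Finset.sum_ite, Finset.sum_const, Finset.sum_const, nsmul_eq_mul, nsmul_eq_mul,
              mul_one]
            have hcard2 : ((Finset.Icc 1 (k.1-1)).filter (fun v => ¬(v ∈ win n ∧ a v = false))).card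
                = (k.1 - 1) - KK n a k.1 := by
              have := Finset.card_filter_add_card_filter_not
                (s := Finset.Icc 1 (k.1-1)) (p := fun v => v ∈ win n ∧ a v = false)
              rw [Nat.card_Icc] at this
              have hKK : ((Finset.Icc 1 (k.1-1)).filter (fun v => v ∈ win n ∧ a v = false)).card
                  = KK n a k.1 := rfl
              omega
            have hKK : ((Finset.Icc 1 (k.1-1)).filter (fun v => v ∈ win n ∧ a v = false)).card
                = KK n a k.1 := rfl
            rw [hcard2, hKK]
            have hc : ((k.1 - 1 - KK n a k.1 : ℕ) : ℝ) = ((k.1:ℝ) - 1) - (KK n a k.1 : ℝ) := by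
              rw [Nat.cast_sub (hKle k), cast_pred]
            rw [hc]
            field_simp
            ring
          · have hA' : A k = false := by revert hA; cases A k <;> simp
            simp only [hA', Bool.false_eq_true, false_and, if_false]
            rw [Finset.sum_const, Nat.card_Icc, nsmul_eq_mul, mul_one]
            have h2 : (k.1 - 1 + 1 - 1 : ℕ) = k.1 - 1 := by omega
            rw [h2, cast_pred]
            field_simp
            ring
  rw [Finset.prod_congr rfl (fun k _ => hper k), Finset.prod_mul_distrib]
  apply mul_le_mul_of_nonneg_left ?_ (Finset.prod_nonneg (fun k _ => hwa k))
  have hp_nonneg : ∀ k : Kt n,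
      (0:ℝ) ≤ (if A k = true then (KK n a k.1 : ℝ) else 0) / ((k.1:ℝ) - 1) * (E - 1) := by
    intro k
    apply mul_nonneg
    · apply div_nonneg
      · split_ifs <;> positivity
      · exact le_of_lt (kpos k)
    · linarith
  have step2 : ∏ k : Kt n, (1 + (if A k = true then (KK n a k.1 : ℝ) else 0) / ((k.1:ℝ) - 1) * (E - 1))
      ≤ ∏ k : Kt n, Real.exp ((if A k = true then (KK n a k.1 : ℝ) else 0) / ((k.1:ℝ) - 1) * (E - 1)) := by
    apply Finset.prod_le_prod
    · intro k _; have := hp_nonneg k; linarith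
    · intro k _
      have := Real.add_one_le_exp
        ((if A k = true then (KK n a k.1 : ℝ) else 0) / ((k.1:ℝ) - 1) * (E - 1))
      linarith
  have step3 : ∏ k : Kt n, Real.exp ((if A k = true then (KK n a k.1 : ℝ) else 0) / ((k.1:ℝ) - 1) * (E - 1))
      = Real.exp (∑ k : Kt n, (if A k = true then (KK n a k.1 : ℝ) else 0) / ((k.1:ℝ) - 1) * (E - 1)) :=
    (Real.exp_sum _ _).symm
  have step4 : ∑ k : Kt n, (if A k = true then (KK n a k.1 : ℝ) else 0) / ((k.1:ℝ) - 1) * (E - 1)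
      ≤ (E - 1) * ∑ k' ∈ (win n).filter (fun v => a v = false), sk n k' := by
    rw [← swap_bound n a, Finset.mul_sum]
    rw [← Finset.sum_attach (Finset.Icc 2 n) (fun k => (E - 1) * ((KK n a k : ℝ)/((k:ℝ)-1)))]
    rw [Finset.univ_eq_attach]
    apply Finset.sum_le_sum
    intro k _
    rw [mul_comm]
    apply mul_le_mul_of_nonneg_left ?_ (by linarith : (0:ℝ) ≤ E - 1)
    have hds : (if A k = true then (KK n a k.1 : ℝ) else 0) ≤ (KK n a k.1 : ℝ) := by
      split_ifs
      · exact le_refl _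
      · positivity
    exact (div_le_div_iff_of_pos_right (kpos k)).mpr hds
  calc ∏ k : Kt n, (1 + (if A k = true then (KK n a k.1 : ℝ) else 0) / ((k.1:ℝ) - 1) * (E - 1))
      ≤ Real.exp (∑ k : Kt n, (if A k = true then (KK n a k.1 : ℝ) else 0) / ((k.1:ℝ) - 1) * (E - 1)) := by
        rw [← step3]; exact step2
    _ ≤ Real.exp ((E - 1) * ∑ k' ∈ (win n).filter (fun v => a v = false), sk n k') :=
        Real.exp_le_exp.mpr step4


lemma win_subset (n : ℕ) (hn : 2 ≤ n) : win n ⊆ Finset.Icc 2 n := by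
  intro x hx
  rw [win, Finset.mem_Ioc] at hx
  rw [Finset.mem_Icc]
  have : 1 ≤ n/2 := by omega
  omega

lemma chernoff_sum (α : ℝ) (hα0 : 0 ≤ α) (hα1 : α < 1) (n : ℕ) (hn : 2 ≤ n) (t : ℝ) :
    ∑ A : Kt n → Bool, ∑ B ∈ VB n,
        (if (Dcnt n (aex n A) : ℝ) - (Tcnt n (aex n A) (bex n B) : ℝ) ≤ t
          then wgt α n A else 0)
      ≤ Real.exp ((3/10)*t) * ∏ k' ∈ win n, (α + (1-α) * Real.exp (-(ck n k'))) := by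
  have hwgt0 : ∀ A : Kt n → Bool, 0 ≤ wgt α n A := fun A => wgt_nonneg α hα0 hα1 n A
  set E := Real.exp (3/10) with hE
  have hE1 : (1:ℝ) ≤ E := by
    rw [hE, ← Real.exp_zero]; apply Real.exp_le_exp.mpr; norm_num
  have hwa : ∀ (A : Kt n → Bool) (k : Kt n), (0:ℝ) ≤ (if A k then α else 1 - α) := by
    intro A k; split_ifs <;> linarith
  -- step 1 : Markov pointwise
  have h1 : ∀ (A : Kt n → Bool), ∀ B ∈ VB n,
      (if (Dcnt n (aex n A) : ℝ) - (Tcnt n (aex n A) (bex n B) : ℝ) ≤ t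
        then wgt α n A else 0)
      ≤ Real.exp ((3/10) * (t - (Dcnt n (aex n A) : ℝ) + (Tcnt n (aex n A) (bex n B) : ℝ)))
          * wgt α n A := by
    intro A B _
    split_ifs with hc
    · nth_rewrite 1 [← one_mul (wgt α n A)]
      apply mul_le_mul_of_nonneg_right ?_ (hwgt0 A)
      rw [← Real.exp_zero]
      apply Real.exp_le_exp.mpr
      nlinarith
    · exact mul_nonneg (le_of_lt (Real.exp_pos _)) (hwgt0 A)
  -- step 2 : factor the exponential
  have h2 : ∀ (A : Kt n → Bool), ∀ B : Kt n → ℕ,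
      Real.exp ((3/10) * (t - (Dcnt n (aex n A) : ℝ) + (Tcnt n (aex n A) (bex n B) : ℝ)))
          * wgt α n A
      = Real.exp ((3/10) * t) * (Real.exp (-((3:ℝ)/10) * (Dcnt n (aex n A) : ℝ)) *
          (Real.exp ((3/10) * (Tcnt n (aex n A) (bex n B) : ℝ)) * wgt α n A)) := by
    intro A B
    have harg : (3:ℝ)/10 * (t - (Dcnt n (aex n A) : ℝ) + (Tcnt n (aex n A) (bex n B) : ℝ))
        = 3/10*t + (-((3:ℝ)/10) * (Dcnt n (aex n A) : ℝ)
          + 3/10 * (Tcnt n (aex n A) (bex n B) : ℝ)) := by ring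
    rw [harg, Real.exp_add, Real.exp_add]
    ring
  -- step 3 : bound the inner sums
  have h3 : ∀ A : Kt n → Bool,
      ∑ B ∈ VB n, (if (Dcnt n (aex n A) : ℝ) - (Tcnt n (aex n A) (bex n B) : ℝ) ≤ t
          then wgt α n A else 0)
      ≤ Real.exp ((3/10) * t) * (Real.exp (-((3:ℝ)/10) * (Dcnt n (aex n A) : ℝ)) *
          ((∏ k : Kt n, (if A k then α else 1 - α)) *
            Real.exp ((E - 1) * ∑ k' ∈ (win n).filter (fun v => aex n A v = false), sk n k'))) := by
    intro A
    calc ∑ B ∈ VB n, (if (Dcnt n (aex n A) : ℝ) - (Tcnt n (aex n A) (bex n B) : ℝ) ≤ t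
            then wgt α n A else 0)
        ≤ ∑ B ∈ VB n, Real.exp ((3/10) * (t - (Dcnt n (aex n A) : ℝ)
            + (Tcnt n (aex n A) (bex n B) : ℝ))) * wgt α n A :=
          Finset.sum_le_sum (h1 A)
      _ = Real.exp ((3/10) * t) * (Real.exp (-((3:ℝ)/10) * (Dcnt n (aex n A) : ℝ)) *
            ∑ B ∈ VB n, Real.exp ((3/10) * (Tcnt n (aex n A) (bex n B) : ℝ)) * wgt α n A) := by
          rw [Finset.sum_congr rfl (fun B _ => h2 A B), ← Finset.mul_sum, ← Finset.mul_sum]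
      _ ≤ _ := by
          apply mul_le_mul_of_nonneg_left ?_ (le_of_lt (Real.exp_pos _))
          apply mul_le_mul_of_nonneg_left ?_ (le_of_lt (Real.exp_pos _))
          exact cfg_inner_sum α hα0 hα1 n A
  -- step 4 : rewrite the per-A bound as a product over coordinates
  have h4 : ∀ A : Kt n → Bool,
      Real.exp (-((3:ℝ)/10) * (Dcnt n (aex n A) : ℝ)) *
          ((∏ k : Kt n, (if A k then α else 1 - α)) *
            Real.exp ((E - 1) * ∑ k' ∈ (win n).filter (fun v => aex n A v = false), sk n k'))
      = ∏ k : Kt n, ((if A k then α else 1 - α) *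
          (if k.1 ∈ win n then (if A k = false then Real.exp (-(ck n k.1)) else 1) else 1)) := by
    intro A
    have hD : Real.exp (-((3:ℝ)/10) * (Dcnt n (aex n A) : ℝ)) *
        Real.exp ((E - 1) * ∑ k' ∈ (win n).filter (fun v => aex n A v = false), sk n k')
        = ∏ k' ∈ (win n).filter (fun v => aex n A v = false), Real.exp (-(ck n k')) := by
      rw [← Real.exp_add]
      rw [← Real.exp_sum]
      congr 1
      rw [Dcnt, Finset.card_eq_sum_ones]
      push_cast
      rw [Finset.mul_sum, Finset.mul_sum, ← Finset.sum_add_distrib]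
      apply Finset.sum_congr rfl
      intro k' _
      rw [ck]
      ring
    calc Real.exp (-((3:ℝ)/10) * (Dcnt n (aex n A) : ℝ)) *
          ((∏ k : Kt n, (if A k then α else 1 - α)) *
            Real.exp ((E - 1) * ∑ k' ∈ (win n).filter (fun v => aex n A v = false), sk n k'))
        = (∏ k : Kt n, (if A k then α else 1 - α)) *
            ∏ k' ∈ (win n).filter (fun v => aex n A v = false), Real.exp (-(ck n k')) := by
          rw [← hD]; ring
      _ = (∏ k : Kt n, (if A k then α else 1 - α)) *
            ∏ k' ∈ win n, (if aex n A k' = false then Real.exp (-(ck n k')) else 1) := by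
          congr 1
          rw [Finset.prod_filter]
      _ = (∏ k : Kt n, (if A k then α else 1 - α)) *
            ∏ k' ∈ Finset.Icc 2 n,
              (if k' ∈ win n then (if aex n A k' = false then Real.exp (-(ck n k')) else 1) else 1) := by
          congr 1
          calc ∏ k' ∈ win n, (if aex n A k' = false then Real.exp (-(ck n k')) else 1)
              = ∏ k' ∈ win n, (if k' ∈ win n
                  then (if aex n A k' = false then Real.exp (-(ck n k')) else 1) else 1) := by
                apply Finset.prod_congr rfl; intro x hx; rw [if_pos hx]
            _ = ∏ k' ∈ Finset.Icc 2 n, (if k' ∈ win n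
                  then (if aex n A k' = false then Real.exp (-(ck n k')) else 1) else 1) :=
                Finset.prod_subset (win_subset n hn) (fun x _ hx => if_neg hx)
      _ = ∏ k : Kt n, ((if A k then α else 1 - α) *
            (if k.1 ∈ win n then (if A k = false then Real.exp (-(ck n k.1)) else 1) else 1)) := by
          rw [← Finset.prod_attach (Finset.Icc 2 n) (fun k' =>
            (if k' ∈ win n then (if aex n A k' = false then Real.exp (-(ck n k')) else 1) else 1))]
          rw [Finset.univ_eq_attach, ← Finset.prod_mul_distrib]
          apply Finset.prod_congr rfl
          intro k _
          congr 2
          rw [aex_eq]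
  -- step 5 : sum over A
  have h5 : ∑ A : Kt n → Bool, ∏ k : Kt n, ((if A k then α else 1 - α) *
        (if k.1 ∈ win n then (if A k = false then Real.exp (-(ck n k.1)) else 1) else 1))
      = ∏ k' ∈ win n, (α + (1-α) * Real.exp (-(ck n k'))) := by
    have := sum_A_prod n (fun k b => (if b then α else 1 - α) *
      (if k.1 ∈ win n then (if b = false then Real.exp (-(ck n k.1)) else 1) else 1))
    calc ∑ A : Kt n → Bool, ∏ k : Kt n, ((if A k then α else 1 - α) *
          (if k.1 ∈ win n then (if A k = false then Real.exp (-(ck n k.1)) else 1) else 1))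
        = ∑ A : Kt n → Bool, ∏ k : Kt n, (fun (k : Kt n) (b : Bool) => (if b then α else 1 - α) *
            (if k.1 ∈ win n then (if b = false then Real.exp (-(ck n k.1)) else 1) else 1)) k (A k) := rfl
      _ = ∏ k : Kt n, ((fun (k : Kt n) (b : Bool) => (if b then α else 1 - α) *
            (if k.1 ∈ win n then (if b = false then Real.exp (-(ck n k.1)) else 1) else 1)) k true
          + (fun (k : Kt n) (b : Bool) => (if b then α else 1 - α) *
            (if k.1 ∈ win n then (if b = false then Real.exp (-(ck n k.1)) else 1) else 1)) k false) := this
      _ = ∏ k : Kt n, (if k.1 ∈ win n then α + (1-α) * Real.exp (-(ck n k.1)) else 1) := by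
          apply Finset.prod_congr rfl
          intro k _
          by_cases hw : k.1 ∈ win n <;> simp [hw] <;> ring
      _ = ∏ k' ∈ Finset.Icc 2 n, (if k' ∈ win n then α + (1-α) * Real.exp (-(ck n k')) else 1) := by
          rw [← Finset.prod_attach (Finset.Icc 2 n) (fun k' =>
            (if k' ∈ win n then α + (1-α) * Real.exp (-(ck n k')) else 1))]
          rw [Finset.univ_eq_attach]
      _ = ∏ k' ∈ win n, (α + (1-α) * Real.exp (-(ck n k'))) := by
          rw [← Finset.prod_subset (win_subset n hn)
            (fun x _ hx => if_neg hx :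
              ∀ x ∈ Finset.Icc 2 n, x ∉ win n →
                (if x ∈ win n then α + (1-α) * Real.exp (-(ck n x)) else 1) = 1)]
          apply Finset.prod_congr rfl
          intro x hx
          rw [if_pos hx]
  calc ∑ A : Kt n → Bool, ∑ B ∈ VB n,
        (if (Dcnt n (aex n A) : ℝ) - (Tcnt n (aex n A) (bex n B) : ℝ) ≤ t
          then wgt α n A else 0)
      ≤ ∑ A : Kt n → Bool, Real.exp ((3/10) * t) * (∏ k : Kt n, ((if A k then α else 1 - α) *
          (if k.1 ∈ win n then (if A k = false then Real.exp (-(ck n k.1)) else 1) else 1))) := by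
        apply Finset.sum_le_sum
        intro A _
        rw [← h4 A]
        exact h3 A
    _ = Real.exp ((3/10)*t) * ∏ k' ∈ win n, (α + (1-α) * Real.exp (-(ck n k'))) := by
        rw [← Finset.mul_sum, h5]


/-! ### Numeric estimates -/

lemma exp_three_tenths_le : Real.exp (3/10) ≤ 27/20 := by
  apply le_of_pow_le_pow_left₀ (n := 10) (by norm_num) (by norm_num)
  have h1 : Real.exp (3/10) ^ (10:ℕ) = Real.exp 3 := by
    rw [← Real.exp_nat_mul]; norm_num
  rw [h1]
  have h2 : Real.exp 3 = (Real.exp 1)^(3:ℕ) := by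
    rw [← Real.exp_nat_mul]; norm_num
  rw [h2]
  calc (Real.exp 1)^(3:ℕ) ≤ (2.7182818286:ℝ)^(3:ℕ) :=
        pow_le_pow_left₀ (Real.exp_pos 1).le Real.exp_one_lt_d9.le 3
    _ ≤ (27/20:ℝ)^(10:ℕ) := by norm_num

lemma exp_three_halves_le : Real.exp (3/2) ≤ 5 := by
  apply le_of_pow_le_pow_left₀ (n := 2) (by norm_num) (by norm_num)
  have h1 : Real.exp (3/2) ^ (2:ℕ) = Real.exp 3 := by
    rw [← Real.exp_nat_mul]; norm_num
  rw [h1]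
  have h2 : Real.exp 3 = (Real.exp 1)^(3:ℕ) := by
    rw [← Real.exp_nat_mul]; norm_num
  rw [h2]
  calc (Real.exp 1)^(3:ℕ) ≤ (2.7182818286:ℝ)^(3:ℕ) :=
        pow_le_pow_left₀ (Real.exp_pos 1).le Real.exp_one_lt_d9.le 3
    _ ≤ (5:ℝ)^(2:ℕ) := by norm_num

lemma harmonic_le_log (a : ℕ) (ha : 2 ≤ a) :
    ∀ b, a ≤ b → ∑ k ∈ Finset.Icc (a+1) b, 1/((k:ℝ)-1)
      ≤ Real.log ((b:ℝ)-1) - Real.log ((a:ℝ)-1) := by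
  intro b hb
  induction b, hb using Nat.le_induction with
  | base =>
    rw [Finset.Icc_eq_empty (by omega), Finset.sum_empty, sub_self]
  | succ b hab IH =>
    rw [Finset.sum_Icc_succ_top (by omega : a + 1 ≤ b + 1)]
    have hb2 : (2:ℝ) ≤ (b:ℝ) := by exact_mod_cast (by omega : 2 ≤ b)
    have hstep : 1/(b:ℝ) ≤ Real.log (b:ℝ) - Real.log ((b:ℝ)-1) := by
      have hpos : (0:ℝ) < ((b:ℝ)-1)/(b:ℝ) := div_pos (by linarith) (by linarith)
      have hlog := Real.log_le_sub_one_of_pos hpos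
      rw [Real.log_div (by linarith) (by linarith)] at hlog
      have heq : ((b:ℝ)-1)/(b:ℝ) - 1 = -(1/(b:ℝ)) := by
        field_simp
        ring
      rw [heq] at hlog
      linarith
    have hterm : ((b+1:ℕ):ℝ) - 1 = (b:ℝ) := by push_cast; ring
    rw [hterm]
    linarith

lemma sk_nonneg (n k' : ℕ) (h2 : ∀ k ∈ Finset.Icc (k'+1) n, 2 ≤ k) : 0 ≤ sk n k' := by
  apply Finset.sum_nonneg
  intro k hk
  have h := h2 k hk
  have h' : (2:ℝ) ≤ (k:ℝ) := by exact_mod_cast h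
  have h'' : (0:ℝ) < (k:ℝ) - 1 := by linarith
  positivity


lemma sk_le_W1 (n k' : ℕ) (hn : 4 ≤ n) (h1 : n/2 < k') (h2 : k' ≤ n) :
    sk n k' ≤ Real.log 2 := by
  have hk2 : 2 ≤ k' := by omega
  have hk2' : (2:ℝ) ≤ (k':ℝ) := by exact_mod_cast hk2
  have hn2' : (4:ℝ) ≤ (n:ℝ) := by exact_mod_cast hn
  have hharm := harmonic_le_log k' hk2 n h2
  have hineq : (n:ℝ) - 1 ≤ 2*((k':ℝ)-1) := by
    have : n + 1 ≤ 2*k' := by omega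
    have : (n:ℝ) + 1 ≤ 2*(k':ℝ) := by exact_mod_cast this
    linarith
  have hlog1 : Real.log ((n:ℝ)-1) ≤ Real.log (2*((k':ℝ)-1)) :=
    Real.log_le_log (by linarith) hineq
  have hlog2 : Real.log (2*((k':ℝ)-1)) = Real.log 2 + Real.log ((k':ℝ)-1) :=
    Real.log_mul (by norm_num) (by linarith)
  rw [sk]
  linarith

lemma sk_le_W2 (n k' : ℕ) (hn : 4 ≤ n) (h1 : 3*n/4 < k') (h2 : k' ≤ n) :
    sk n k' ≤ 1/3 := by
  have hk2 : 2 ≤ k' := by omega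
  have hk2' : (2:ℝ) ≤ (k':ℝ) := by exact_mod_cast hk2
  have hn2' : (4:ℝ) ≤ (n:ℝ) := by exact_mod_cast hn
  have hharm := harmonic_le_log k' hk2 n h2
  have hineq : (n:ℝ) - 1 ≤ (4/3)*((k':ℝ)-1) := by
    have : 3*n + 1 ≤ 4*k' := by omega
    have : 3*(n:ℝ) + 1 ≤ 4*(k':ℝ) := by exact_mod_cast this
    linarith
  have hlog1 : Real.log ((n:ℝ)-1) ≤ Real.log ((4/3)*((k':ℝ)-1)) :=
    Real.log_le_log (by linarith) hineq
  have hlog2 : Real.log ((4/3)*((k':ℝ)-1)) = Real.log (4/3) + Real.log ((k':ℝ)-1) :=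
    Real.log_mul (by norm_num) (by linarith)
  have hlog43 : Real.log (4/3) ≤ 1/3 := by
    have := Real.log_le_sub_one_of_pos (by norm_num : (0:ℝ) < 4/3)
    linarith
  rw [sk]
  linarith

lemma ck_ge_of_sk_le (n k' : ℕ) (hsk0 : 0 ≤ sk n k') (L : ℝ) (hskL : sk n k' ≤ L) :
    3/10 - (7/20)*L ≤ ck n k' := by
  rw [ck]
  have hE : Real.exp (3/10) - 1 ≤ 7/20 := by
    have := exp_three_tenths_le; linarith
  have hE0 : 0 ≤ Real.exp (3/10) - 1 := by
    have : (1:ℝ) ≤ Real.exp (3/10) := by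
      rw [← Real.exp_zero]; apply Real.exp_le_exp.mpr; norm_num
    linarith
  have := mul_le_mul hE hskL hsk0 (by norm_num : (0:ℝ) ≤ 7/20)
  linarith

lemma term_ge (c cb : ℝ) (h0 : 0 ≤ cb) (hc : cb ≤ c) : cb/(1+cb) ≤ 1 - Real.exp (-c) := by
  have h1 : Real.exp (-c) ≤ Real.exp (-cb) := Real.exp_le_exp.mpr (by linarith)
  have h2 : Real.exp (-cb) ≤ 1/(1+cb) := by
    rw [Real.exp_neg]
    have hcb1 : (0:ℝ) < 1 + cb := by linarith
    have h3 : 1 + cb ≤ Real.exp cb := by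
      have := Real.add_one_le_exp cb; linarith
    rw [one_div]
    exact inv_anti₀ hcb1 h3
  have hcb1 : (0:ℝ) < 1 + cb := by linarith
  have : cb/(1+cb) = 1 - 1/(1+cb) := by field_simp; ring
  rw [this]
  linarith

lemma window_sum_ge (n : ℕ) (hn : 141 ≤ n) :
    27*(n:ℝ)/560 ≤ ∑ k' ∈ win n, (1 - Real.exp (-(ck n k'))) := by
  have hmq : n/2 ≤ 3*n/4 := by omega
  have hqn : 3*n/4 ≤ n := by omega
  rw [win, ← Finset.sum_Ioc_consecutive _ hmq hqn]
  have hb1 : ∀ k' ∈ Finset.Ioc (n/2) (3*n/4), (57:ℝ)/1057 ≤ 1 - Real.exp (-(ck n k')) := by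
    intro k' hk'
    rw [Finset.mem_Ioc] at hk'
    have hsk0 : 0 ≤ sk n k' := sk_nonneg n k' (by intro k hk; rw [Finset.mem_Icc] at hk; omega)
    have hskL := sk_le_W1 n k' (by omega) hk'.1 (by omega)
    have hck := ck_ge_of_sk_le n k' hsk0 (Real.log 2) hskL
    have hlog2 := Real.log_two_lt_d9
    have hck57 : (57:ℝ)/1000 ≤ ck n k' := by linarith
    have := term_ge (ck n k') (57/1000) (by norm_num) hck57
    have heq : (57:ℝ)/1000/(1+57/1000) = 57/1057 := by norm_num
    rw [heq] at this
    exact this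
  have hb2 : ∀ k' ∈ Finset.Ioc (3*n/4) n, (11:ℝ)/71 ≤ 1 - Real.exp (-(ck n k')) := by
    intro k' hk'
    rw [Finset.mem_Ioc] at hk'
    have hsk0 : 0 ≤ sk n k' := sk_nonneg n k' (by intro k hk; rw [Finset.mem_Icc] at hk; omega)
    have hskL := sk_le_W2 n k' (by omega) hk'.1 hk'.2
    have hck := ck_ge_of_sk_le n k' hsk0 (1/3) hskL
    have hck11 : (11:ℝ)/60 ≤ ck n k' := by linarith
    have := term_ge (ck n k') (11/60) (by norm_num) hck11
    have heq : (11:ℝ)/60/(1+11/60) = 11/71 := by norm_num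
    rw [heq] at this
    exact this
  have hs1 := Finset.card_nsmul_le_sum (Finset.Ioc (n/2) (3*n/4)) _ _ hb1
  have hs2 := Finset.card_nsmul_le_sum (Finset.Ioc (3*n/4) n) _ _ hb2
  rw [Nat.card_Ioc, nsmul_eq_mul] at hs1 hs2
  have hc1 : ((3*n/4 - n/2 : ℕ):ℝ) ≥ ((n:ℝ) - 3)/4 := by
    have h1 : n - 3 ≤ 4*(3*n/4 - n/2) := by omega
    have h2 : ((n - 3:ℕ):ℝ) = (n:ℝ) - 3 := by
      rw [Nat.cast_sub (by omega)]; norm_num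
    have h3 : ((n-3:ℕ):ℝ) ≤ 4*((3*n/4 - n/2:ℕ):ℝ) := by exact_mod_cast h1
    linarith
  have hc2 : ((n - 3*n/4 : ℕ):ℝ) ≥ (n:ℝ)/4 := by
    have h1 : n ≤ 4*(n - 3*n/4) := by omega
    have h3 : (n:ℝ) ≤ 4*((n - 3*n/4:ℕ):ℝ) := by exact_mod_cast h1
    linarith
  have hn' : (141:ℝ) ≤ (n:ℝ) := by exact_mod_cast hn
  calc 27*(n:ℝ)/560 ≤ ((3*n/4 - n/2 : ℕ):ℝ) * (57/1057) + ((n - 3*n/4 : ℕ):ℝ) * (11/71) := by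
        nlinarith
    _ ≤ _ := by
        apply add_le_add hs1 hs2

lemma prod_win_le_exp (α : ℝ) (hα0 : 0 ≤ α) (hα1 : α < 1) (n : ℕ) :
    ∏ k' ∈ win n, (α + (1-α) * Real.exp (-(ck n k')))
      ≤ Real.exp (-(1-α) * ∑ k' ∈ win n, (1 - Real.exp (-(ck n k')))) := by
  calc ∏ k' ∈ win n, (α + (1-α) * Real.exp (-(ck n k')))
      ≤ ∏ k' ∈ win n, Real.exp (-((1-α) * (1 - Real.exp (-(ck n k'))))) := by
        apply Finset.prod_le_prod
        · intro k' _
          have := Real.exp_pos (-(ck n k'))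
          nlinarith
        · intro k' _
          have h := Real.add_one_le_exp (-((1-α) * (1 - Real.exp (-(ck n k')))))
          linarith
    _ = Real.exp (∑ k' ∈ win n, -((1-α) * (1 - Real.exp (-(ck n k'))))) :=
        (Real.exp_sum _ _).symm
    _ = Real.exp (-(1-α) * ∑ k' ∈ win n, (1 - Real.exp (-(ck n k')))) := by
        congr 1
        rw [Finset.mul_sum]
        apply Finset.sum_congr rfl
        intro k' _
        ring



/-- **Proposition 3.1, second part.** For every `α ∈ [0,1)` and `n ≥ 1`, the number `I(n)`
of isolated vertices of the percolated random recursive forest `𝔽_n` satisfies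
`ℙ(I(n) ≤ (1−α)n/8) ≤ 5·e^{−3(1−α)n/280}`. -/
theorem isolated_count_lower_tail
    (α : ℝ) (hα0 : 0 ≤ α) (hα1 : α < 1)
    {Ω : Type} [MeasurableSpace Ω] (P : Measure Ω) [IsProbabilityMeasure P]
    (ξ : ℕ → Ω → Bool) (u : ℕ → Ω → ℕ) (root : ℕ → Ω → ℕ)
    (hlaw : ForestLaw P α ξ u) (hroot : IsForestRoot ξ u root) :
    ∀ n : ℕ, 1 ≤ n →
      (P {ω | (clusterCount root 1 n ω : ℝ) ≤ (1 - α) * n / 8}).toReal ≤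
        5 * Real.exp (-(3 * (1 - α) * n / 280)) := by
  intro n hn1
  have hP1 : (P {ω | (clusterCount root 1 n ω : ℝ) ≤ (1 - α) * n / 8}).toReal ≤ 1 := by
    have h : P {ω | (clusterCount root 1 n ω : ℝ) ≤ (1 - α) * n / 8} ≤ P Set.univ :=
      measure_mono (Set.subset_univ _)
    have := ENNReal.toReal_mono (measure_ne_top P _) h
    rwa [measure_univ, ENNReal.toReal_one] at this
  rcases le_or_gt n 140 with hsmall | hbig
  · -- small n : trivial bound
    refine le_trans hP1 ?_
    have hx : 3 * (1 - α) * (n:ℝ) / 280 ≤ 3/2 := by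
      have hn' : (n:ℝ) ≤ 140 := by exact_mod_cast hsmall
      have hn0 : (0:ℝ) ≤ (n:ℝ) := Nat.cast_nonneg n
      nlinarith
    have h5 : Real.exp (3 * (1 - α) * (n:ℝ) / 280) ≤ 5 :=
      le_trans (Real.exp_le_exp.mpr hx) exp_three_halves_le
    rw [Real.exp_neg]
    rw [show (5:ℝ) * (Real.exp (3 * (1 - α) * (n:ℝ) / 280))⁻¹
        = 5 / Real.exp (3 * (1 - α) * (n:ℝ) / 280) from (div_eq_mul_inv 5 _).symm]
    rw [le_div_iff₀ (Real.exp_pos _), one_mul]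
    exact h5
  · -- large n
    have hn141 : 141 ≤ n := hbig
    have hn2 : 2 ≤ n := by omega
    have step1 := reduction P α ξ u root hlaw hroot n hn2 ((1 - α) * n / 8)
    have step2 := chernoff_sum α hα0 hα1 n hn2 ((1 - α) * n / 8)
    have step3 := prod_win_le_exp α hα0 hα1 n
    have step4 := window_sum_ge n hn141
    have h1α : (0:ℝ) < 1 - α := by linarith
    have hfinal : Real.exp ((3/10) * ((1 - α) * n / 8)) *
        ∏ k' ∈ win n, (α + (1-α) * Real.exp (-(ck n k')))
        ≤ 5 * Real.exp (-(3 * (1 - α) * n / 280)) := by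
      calc Real.exp ((3/10) * ((1 - α) * n / 8)) *
            ∏ k' ∈ win n, (α + (1-α) * Real.exp (-(ck n k')))
          ≤ Real.exp ((3/10) * ((1 - α) * n / 8)) *
            Real.exp (-(1-α) * ∑ k' ∈ win n, (1 - Real.exp (-(ck n k')))) :=
            mul_le_mul_of_nonneg_left step3 (le_of_lt (Real.exp_pos _))
        _ = Real.exp ((3/10) * ((1 - α) * n / 8)
              - (1-α) * ∑ k' ∈ win n, (1 - Real.exp (-(ck n k')))) := by
            rw [← Real.exp_add]; ring_nf
        _ ≤ Real.exp (-(3 * (1 - α) * n / 280)) := by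
            apply Real.exp_le_exp.mpr
            have := mul_le_mul_of_nonneg_left step4 (le_of_lt h1α)
            nlinarith
        _ ≤ 5 * Real.exp (-(3 * (1 - α) * n / 280)) := by
            have := Real.exp_pos (-(3 * (1 - α) * n / 280))
            linarith
    exact le_trans step1 (le_trans step2 hfinal)
end

section
/- Define y_n := I(n)/n − (1−α)/(1+α), γ_n := (1+α)/(n+1), β_1 := 1 and β_n := ∏_{k=1}^{n−1}(1 − γ_k) for n ≥ 2, and ε_{j+1} := (1/(1+α))·( I(j+1) − I(j) − (1−α) + α·I(j)/j ) for j ≥ 1. Then for every n ≥ 1, y_n = β_n·( y_1 + ∑_{j=1}^{n−1} (γ_j/β_{j+1})·ε_{j+1} ), and (ε_{j+1})_{j≥1} is a martingale difference sequence with respect to the filtration generated by the forests, i.e., 𝔼[ε_{j+1} | 𝔽_j] = 0 almost surely for every j ≥ 1. -/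
open MeasureTheory Finset

/-- `y_n = I(n)/n − (1−α)/(1+α)`, where `I(n) = N₁(n)` is the number of isolated vertices. -/
noncomputable def yLevel {Ω : Type} (α : ℝ) (root : ℕ → Ω → ℕ) (n : ℕ) (ω : Ω) : ℝ :=
  (clusterCount root 1 n ω : ℝ) / n - (1 - α) / (1 + α)

/-- `γ_n = (1+α)/(n+1)`. -/
noncomputable def gammaCoef (α : ℝ) (n : ℕ) : ℝ := (1 + α) / (n + 1)

/-- `β_1 = 1` and `β_n = ∏_{k=1}^{n−1} (1 − γ_k)` for `n ≥ 2`. -/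
noncomputable def betaProd (α : ℝ) (n : ℕ) : ℝ :=
  ∏ k ∈ Finset.Icc 1 (n - 1), (1 - gammaCoef α k)

/-- `ε_{j+1} = (1/(1+α))·(I(j+1) − I(j) − (1−α) + α·I(j)/j)`. -/
noncomputable def epsMDS {Ω : Type} (α : ℝ) (root : ℕ → Ω → ℕ) (j : ℕ) (ω : Ω) : ℝ :=
  (1 / (1 + α)) *
    ((clusterCount root 1 (j + 1) ω : ℝ) - (clusterCount root 1 j ω : ℝ) - (1 - α) +
      α * (clusterCount root 1 j ω : ℝ) / j)

section AuxPRRF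

def detRoot (A : ℕ → Bool) (B : ℕ → ℕ) : ℕ → ℕ
  | k => if h : 2 ≤ k ∧ A k = true ∧ 1 ≤ B k ∧ B k < k then detRoot A B (B k) else k
  decreasing_by exact h.2.2.2

lemma detRoot_eq (A : ℕ → Bool) (B : ℕ → ℕ) (k : ℕ) :
    detRoot A B k = if 2 ≤ k ∧ A k = true ∧ 1 ≤ B k ∧ B k < k then detRoot A B (B k) else k := by
  rw [detRoot]; split <;> simp_all

lemma detRoot_le (A : ℕ → Bool) (B : ℕ → ℕ) (k : ℕ) : detRoot A B k ≤ k := by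
  induction k using Nat.strong_induction_on with
  | _ k ih =>
    rw [detRoot_eq]
    split
    · next h => exact le_trans (ih _ h.2.2.2) (le_of_lt h.2.2.2)
    · exact le_refl k

lemma detRoot_pos (A : ℕ → Bool) (B : ℕ → ℕ) (k : ℕ) (hk : 1 ≤ k) : 1 ≤ detRoot A B k := by
  induction k using Nat.strong_induction_on with
  | _ k ih =>
    rw [detRoot_eq]
    split
    · next h => exact ih _ h.2.2.2 h.2.2.1
    · exact hk

lemma detRoot_idem (A : ℕ → Bool) (B : ℕ → ℕ) (k : ℕ) :
    detRoot A B (detRoot A B k) = detRoot A B k := by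
  induction k using Nat.strong_induction_on with
  | _ k ih =>
    rw [detRoot_eq A B k]
    split
    · next h => exact ih _ h.2.2.2
    · rw [detRoot_eq]; simp_all

lemma detRoot_congr {A A' : ℕ → Bool} {B B' : ℕ → ℕ} {k : ℕ}
    (h : ∀ m, 2 ≤ m → m ≤ k → A m = A' m ∧ B m = B' m) :
    detRoot A B k = detRoot A' B' k := by
  induction k using Nat.strong_induction_on with
  | _ k ih =>
    rw [detRoot_eq A B k, detRoot_eq A' B' k]
    by_cases hk : 2 ≤ k
    · have hA := (h k hk le_rfl).1
      have hB := (h k hk le_rfl).2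
      rw [← hA, ← hB]
      split
      · next hc =>
        exact ih _ hc.2.2.2 (fun m h2 hm => h m h2 (le_trans hm (le_of_lt hc.2.2.2)))
      · rfl
    · simp [hk]

/-- size of the cluster rooted at `jj` in the deterministic forest of level `n`. -/
def dSize (A : ℕ → Bool) (B : ℕ → ℕ) (n jj : ℕ) : ℕ :=
  ((Finset.Icc 1 n).filter fun k => detRoot A B k = jj).card

/-- number of isolated vertices in the deterministic forest of level `n`. -/
def dCount (A : ℕ → Bool) (B : ℕ → ℕ) (n : ℕ) : ℕ :=
  ((Finset.Icc 1 n).filter fun jj => dSize A B n jj = 1).card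

lemma dSize_congr {A A' : ℕ → Bool} {B B' : ℕ → ℕ} {n : ℕ}
    (h : ∀ m, 2 ≤ m → m ≤ n → A m = A' m ∧ B m = B' m) (jj : ℕ) :
    dSize A B n jj = dSize A' B' n jj := by
  unfold dSize
  congr 1
  apply Finset.filter_congr
  intro k hk
  simp only [Finset.mem_Icc] at hk
  rw [detRoot_congr (fun m h2 hm => h m h2 (le_trans hm hk.2))]

lemma dCount_congr {A A' : ℕ → Bool} {B B' : ℕ → ℕ} {n : ℕ}
    (h : ∀ m, 2 ≤ m → m ≤ n → A m = A' m ∧ B m = B' m) :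
    dCount A B n = dCount A' B' n := by
  unfold dCount
  congr 1
  apply Finset.filter_congr
  intro jj _
  rw [dSize_congr h]

lemma Icc_one_succ (j : ℕ) : Finset.Icc 1 (j+1) = insert (j+1) (Finset.Icc 1 j) := by
  rw [Finset.insert_Icc_right_eq_Icc_add_one (by omega)]

lemma dSize_top_zero (A : ℕ → Bool) (B : ℕ → ℕ) (j jj : ℕ) (h : j < jj) :
    dSize A B j jj = 0 := by
  rw [dSize, Finset.card_eq_zero, Finset.filter_eq_empty_iff]
  intro k hk
  simp only [Finset.mem_Icc] at hk
  have := detRoot_le A B k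
  omega

lemma dSize_self_pos (A : ℕ → Bool) (B : ℕ → ℕ) (j r : ℕ) (h1 : 1 ≤ r) (h2 : r ≤ j)
    (hr : detRoot A B r = r) : 1 ≤ dSize A B j r := by
  rw [dSize]
  apply Finset.card_pos.mpr
  exact ⟨r, Finset.mem_filter.mpr ⟨Finset.mem_Icc.mpr ⟨h1, h2⟩, hr⟩⟩

lemma dCount_succ_false (A : ℕ → Bool) (B : ℕ → ℕ) (j : ℕ) (hA : A (j+1) = false) :
    dCount A B (j+1) = dCount A B j + 1 := by
  have hroot : detRoot A B (j+1) = j + 1 := by rw [detRoot_eq]; simp [hA]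
  have hsize : ∀ jj, jj ≤ j → dSize A B (j+1) jj = dSize A B j jj := by
    intro jj hjj
    rw [dSize, dSize, Icc_one_succ, Finset.filter_insert, if_neg (by omega)]
  have htop : dSize A B (j+1) (j+1) = 1 := by
    rw [dSize, Finset.card_eq_one]
    refine ⟨j+1, ?_⟩
    ext k
    simp only [Finset.mem_filter, Finset.mem_Icc, Finset.mem_singleton]
    constructor
    · rintro ⟨hk, hr⟩
      have := detRoot_le A B k
      omega
    · rintro rfl
      exact ⟨⟨by omega, le_rfl⟩, hroot⟩
  have hfc : (Finset.Icc 1 j).filter (fun jj => dSize A B (j+1) jj = 1)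
       = (Finset.Icc 1 j).filter (fun jj => dSize A B j jj = 1) := by
    apply Finset.filter_congr
    intro jj hjj
    simp only [Finset.mem_Icc] at hjj
    rw [hsize jj hjj.2]
  rw [dCount, dCount, Icc_one_succ, Finset.filter_insert, if_pos htop,
    Finset.card_insert_of_notMem (by simp), hfc, Nat.add_comm]

lemma dSize_root_one_iff (A : ℕ → Bool) (B : ℕ → ℕ) (j l : ℕ) (hl1 : 1 ≤ l) (hlj : l ≤ j) :
    (dSize A B j (detRoot A B l) = 1 ↔ dSize A B j l = 1) := by
  by_cases h : detRoot A B l = l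
  · rw [h]
  · have h0 : dSize A B j l = 0 := by
      rw [dSize, Finset.card_eq_zero, Finset.filter_eq_empty_iff]
      intro k _ hk
      apply h
      have hidem := detRoot_idem A B k
      rw [hk] at hidem
      exact hidem
    have h2 : 2 ≤ dSize A B j (detRoot A B l) := by
      rw [dSize]
      apply Finset.one_lt_card.mpr
      refine ⟨detRoot A B l, ?_, l, ?_, h⟩
      · exact Finset.mem_filter.mpr ⟨Finset.mem_Icc.mpr
          ⟨detRoot_pos A B l hl1, le_trans (detRoot_le A B l) hlj⟩, detRoot_idem A B l⟩
      · exact Finset.mem_filter.mpr ⟨Finset.mem_Icc.mpr ⟨hl1, hlj⟩, rfl⟩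
    omega

lemma dCount_succ_true (A : ℕ → Bool) (B : ℕ → ℕ) (j : ℕ) (hj : 1 ≤ j)
    (hA : A (j+1) = true) (hB1 : 1 ≤ B (j+1)) (hBj : B (j+1) ≤ j) :
    dCount A B (j+1) + (if dSize A B j (B (j+1)) = 1 then 1 else 0) = dCount A B j := by
  have hroot : detRoot A B (j+1) = detRoot A B (B (j+1)) := by
    rw [detRoot_eq A B (j+1)]
    rw [if_pos ⟨by omega, hA, hB1, by omega⟩]
  obtain ⟨rl, hrl⟩ : ∃ rl, detRoot A B (B (j+1)) = rl := ⟨_, rfl⟩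
  rw [hrl] at hroot
  have hrlr : detRoot A B rl = rl := by rw [← hrl, detRoot_idem]
  have hrl1 : 1 ≤ rl := by rw [← hrl]; exact detRoot_pos A B _ hB1
  have hrlj : rl ≤ j := by rw [← hrl]; exact le_trans (detRoot_le A B _) hBj
  have hsize : ∀ jj, dSize A B (j+1) jj = dSize A B j jj + (if rl = jj then 1 else 0) := by
    intro jj
    rw [dSize, dSize, Icc_one_succ, Finset.filter_insert]
    split
    · next hc =>
      rw [hroot] at hc
      rw [Finset.card_insert_of_notMem (by simp), if_pos hc, Nat.add_comm]
    · next hc =>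
      rw [hroot] at hc
      rw [if_neg hc, Nat.add_zero]
  have hpos : 1 ≤ dSize A B j rl := dSize_self_pos A B j rl hrl1 hrlj hrlr
  have hdc : dCount A B (j+1) =
      (((Finset.Icc 1 j).filter (fun jj => dSize A B j jj = 1)).erase rl).card := by
    rw [dCount, Icc_one_succ, Finset.filter_insert, if_neg ?side]
    case side =>
      rw [hsize (j+1), dSize_top_zero A B j (j+1) (by omega), if_neg (show ¬rl = j+1 by omega)]
      simp
    congr 1
    ext jj
    simp only [Finset.mem_filter, Finset.mem_Icc, Finset.mem_erase]
    constructor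
    · rintro ⟨hm, hs⟩
      rw [hsize jj] at hs
      by_cases he : rl = jj
      · exfalso; rw [if_pos he] at hs; rw [he] at hpos; omega
      · rw [if_neg he] at hs
        exact ⟨fun hx => he hx.symm, hm, by omega⟩
    · rintro ⟨hne, hm, hs⟩
      refine ⟨hm, ?_⟩
      rw [hsize jj, if_neg (fun h => hne h.symm)]
      omega
  have hiff : dSize A B j rl = 1 ↔ dSize A B j (B (j+1)) = 1 := by
    rw [← hrl]; exact dSize_root_one_iff A B j (B (j+1)) hB1 hBj
  have hdj : dCount A B j = ((Finset.Icc 1 j).filter (fun jj => dSize A B j jj = 1)).card := rfl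
  rw [hdc, Finset.card_erase_eq_ite, hdj]
  by_cases hone : dSize A B j rl = 1
  · have hmem : rl ∈ (Finset.Icc 1 j).filter (fun jj => dSize A B j jj = 1) :=
      Finset.mem_filter.mpr ⟨Finset.mem_Icc.mpr ⟨hrl1, hrlj⟩, hone⟩
    rw [if_pos hmem, if_pos (hiff.mp hone)]
    have : 1 ≤ ((Finset.Icc 1 j).filter (fun jj => dSize A B j jj = 1)).card :=
      Finset.card_pos.mpr ⟨rl, hmem⟩
    omega
  · have hnm : rl ∉ (Finset.Icc 1 j).filter (fun jj => dSize A B j jj = 1) :=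
      fun h => hone (Finset.mem_filter.mp h).2
    rw [if_neg hnm, if_neg (fun h => hone (hiff.mpr h))]
    omega

section Part1
variable {Ω : Type} (α : ℝ) (root : ℕ → Ω → ℕ)

lemma gammaCoef_lt_one (hα1 : α < 1) (n : ℕ) (hn : 1 ≤ n) : gammaCoef α n < 1 := by
  rw [gammaCoef, div_lt_one (by positivity)]
  have : (1:ℝ) ≤ (n:ℝ) := by exact_mod_cast hn
  linarith

lemma betaProd_pos (hα0 : 0 ≤ α) (hα1 : α < 1) (n : ℕ) : 0 < betaProd α n := by
  rw [betaProd]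
  apply Finset.prod_pos
  intro k hk
  simp only [Finset.mem_Icc] at hk
  have := gammaCoef_lt_one α hα1 k hk.1
  linarith

lemma betaProd_succ (hn : 1 ≤ n) :
    betaProd α (n + 1) = betaProd α n * (1 - gammaCoef α n) := by
  rw [betaProd, betaProd]
  have h1 : (n + 1) - 1 = n := by omega
  rw [h1]
  obtain ⟨p, rfl⟩ : ∃ p, n = p + 1 := ⟨n - 1, by omega⟩
  have h2 : (p + 1) - 1 = p := by omega
  rw [h2, Finset.prod_Icc_succ_top (by omega)]

lemma yLevel_succ (hα0 : 0 ≤ α) (n : ℕ) (hn : 1 ≤ n) (ω : Ω) :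
    yLevel α root (n + 1) ω =
      (1 - gammaCoef α n) * yLevel α root n ω + gammaCoef α n * epsMDS α root n ω := by
  rw [yLevel, yLevel, gammaCoef, epsMDS]
  have hN : (n:ℝ) ≠ 0 := by
    have : (1:ℝ) ≤ (n:ℝ) := by exact_mod_cast hn
    linarith
  have hN1 : (n:ℝ) + 1 ≠ 0 := by positivity
  have hα : (1:ℝ) + α ≠ 0 := by linarith
  push_cast
  field_simp
  ring

lemma part1_closed (hα0 : 0 ≤ α) (hα1 : α < 1) (ω : Ω) :
    ∀ n : ℕ, 1 ≤ n →
      yLevel α root n ω =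
        betaProd α n *
          (yLevel α root 1 ω +
            ∑ j ∈ Finset.Icc 1 (n - 1),
              gammaCoef α j / betaProd α (j + 1) * epsMDS α root j ω) := by
  intro n hn
  induction n, hn using Nat.le_induction with
  | base =>
    have hβ : betaProd α 1 = 1 := by rw [betaProd]; simp
    simp [hβ]
  | succ n hn ih =>
    have hβ : betaProd α (n + 1) = betaProd α n * (1 - gammaCoef α n) :=
      betaProd_succ α hn
    have hβne : betaProd α (n + 1) ≠ 0 := ne_of_gt (betaProd_pos α hα0 hα1 (n + 1))
    have h1 : (n + 1) - 1 = n := by omega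
    rw [h1]
    obtain ⟨p, rfl⟩ : ∃ p, n = p + 1 := ⟨n - 1, by omega⟩
    rw [Finset.sum_Icc_succ_top (by omega)]
    have h2 : (p + 1) - 1 = p := by omega
    rw [h2] at ih
    rw [yLevel_succ α root hα0 (p+1) hn ω, ih, hβ]
    have hne : betaProd α (p+1) * (1 - gammaCoef α (p+1)) ≠ 0 := by rw [← hβ]; exact hβne
    have hne1 : betaProd α (p+1) ≠ 0 := fun h => hne (by rw [h]; ring)
    have hne2 : (1 - gammaCoef α (p+1)) ≠ 0 := fun h => hne (by rw [h]; ring)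
    field_simp
    ring

end Part1

section Part2
variable {Ω : Type} [MeasurableSpace Ω] (P : Measure Ω)
variable (ξ : ℕ → Ω → Bool) (u : ℕ → Ω → ℕ) (α : ℝ)

/-- the elementary event determined by the first `n` steps -/
def atomEv (n : ℕ) (a : ℕ → Bool) (b : ℕ → ℕ) : Set Ω :=
  {ω | ∀ k, 2 ≤ k → k ≤ n → (ξ k ω = a k ∧ u k ω = b k)}

lemma atomEv_meas (hξ : ∀ k c, MeasurableSet {ω | ξ k ω = c})
    (hu : ∀ k l, MeasurableSet {ω | u k ω = l}) (n : ℕ) (a : ℕ → Bool) (b : ℕ → ℕ) :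
    MeasurableSet (atomEv ξ u n a b) := by
  have : atomEv ξ u n a b =
      ⋂ k, ⋂ (_ : 2 ≤ k), ⋂ (_ : k ≤ n), ({ω | ξ k ω = a k} ∩ {ω | u k ω = b k}) := by
    ext ω
    simp [atomEv, Set.mem_iInter]
  rw [this]
  exact MeasurableSet.iInter fun k => MeasurableSet.iInter fun _ =>
    MeasurableSet.iInter fun _ => (hξ k (a k)).inter (hu k (b k))

lemma atom_null [IsProbabilityMeasure P] (hlaw : ForestLaw P α ξ u) (n : ℕ) (hn : 2 ≤ n)
    (a : ℕ → Bool) (b : ℕ → ℕ)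
    (hz : ∏ k ∈ Finset.Icc 2 n,
        ((if a k = true then α else 1 - α) *
          (if 1 ≤ b k ∧ b k ≤ k - 1 then 1 / ((k : ℝ) - 1) else 0)) = 0) :
    P (atomEv ξ u n a b) = 0 := by
  have h := hlaw.2.2 n hn a b
  rw [hz] at h
  have := measure_ne_top P (atomEv ξ u n a b)
  rw [show {ω | ∀ k, 2 ≤ k → k ≤ n → (ξ k ω = a k ∧ u k ω = b k)} = atomEv ξ u n a b from rfl]
    at h
  exact (ENNReal.toReal_eq_zero_iff _).mp h |>.resolve_right this

lemma u_null [IsProbabilityMeasure P] (hlaw : ForestLaw P α ξ u) (k l : ℕ) (hk : 2 ≤ k)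
    (hl : ¬(1 ≤ l ∧ l ≤ k - 1)) : P {ω | u k ω = l} = 0 := by
  classical
  set ext1 : (Fin (k+1) → Bool) → ℕ → Bool :=
    fun f m => if h : m < k + 1 then f ⟨m, h⟩ else false with hext1
  set ext2 : (Fin (k+1) → ℕ) → ℕ → ℕ :=
    fun f m => if h : m < k + 1 then f ⟨m, h⟩ else 0 with hext2
  refine measure_mono_null (t := ⋃ p : (Fin (k+1) → Bool) × (Fin (k+1) → ℕ),
    atomEv ξ u k (ext1 p.1) (ext2 p.2) ∩ {ω | u k ω = l}) ?_ ?_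
  · intro ω hω
    simp only [Set.mem_iUnion]
    refine ⟨(fun i => ξ i ω, fun i => u i ω), ?_, hω⟩
    intro m h2 hm
    have hmk : m < k + 1 := by omega
    constructor
    · simp [hext1, hmk, hm]
    · simp [hext2, hmk, hm]
  · apply measure_iUnion_null
    intro p
    by_cases hpl : ext2 p.2 k = l
    · apply measure_mono_null Set.inter_subset_left
      apply atom_null P ξ u α hlaw k hk
      apply Finset.prod_eq_zero (Finset.mem_Icc.mpr ⟨hk, le_refl k⟩)
      rw [hpl, if_neg hl, mul_zero]
    · have : atomEv ξ u k (ext1 p.1) (ext2 p.2) ∩ {ω | u k ω = l} = ∅ := by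
        ext ω
        simp only [Set.mem_inter_iff, Set.mem_empty_iff_false, iff_false, not_and,
          Set.mem_setOf_eq, atomEv]
        intro hω hul
        exact hpl (((hω k hk le_rfl).2).symm.trans hul)
      rw [this, measure_empty]

lemma bad_null [IsProbabilityMeasure P] (hlaw : ForestLaw P α ξ u) (n : ℕ) :
    P {ω | ∃ k, 2 ≤ k ∧ k ≤ n ∧ ¬(1 ≤ u k ω ∧ u k ω ≤ k - 1)} = 0 := by
  refine measure_mono_null (t := ⋃ k : ℕ, ⋃ l : ℕ,
    {ω | 2 ≤ k ∧ k ≤ n ∧ ¬(1 ≤ l ∧ l ≤ k - 1) ∧ u k ω = l}) ?_ ?_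
  · intro ω hω
    obtain ⟨k, h2, hn, hr⟩ := hω
    simp only [Set.mem_iUnion, Set.mem_setOf_eq]
    exact ⟨k, u k ω, h2, hn, hr, rfl⟩
  · apply measure_iUnion_null
    intro k
    apply measure_iUnion_null
    intro l
    by_cases hc : 2 ≤ k ∧ k ≤ n ∧ ¬(1 ≤ l ∧ l ≤ k - 1)
    · exact measure_mono_null (fun ω hω => hω.2.2.2) (u_null P ξ u α hlaw k l hc.1 hc.2.2)
    · have : {ω : Ω | 2 ≤ k ∧ k ≤ n ∧ ¬(1 ≤ l ∧ l ≤ k - 1) ∧ u k ω = l} = ∅ := by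
        ext ω
        simp only [Set.mem_setOf_eq, Set.mem_empty_iff_false, iff_false]
        intro h; exact hc ⟨h.1, h.2.1, h.2.2.1⟩
      rw [this, measure_empty]

lemma root_eq_detRoot (root : ℕ → Ω → ℕ) (hroot : IsForestRoot ξ u root) (n : ℕ) (ω : Ω)
    (hgood : ∀ k, 2 ≤ k → k ≤ n → 1 ≤ u k ω ∧ u k ω ≤ k - 1) :
    ∀ k, 1 ≤ k → k ≤ n → root k ω = detRoot (fun m => ξ m ω) (fun m => u m ω) k := by
  intro k
  induction k using Nat.strong_induction_on with
  | _ k ih =>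
    intro hk1 hkn
    by_cases h2 : 2 ≤ k
    · obtain ⟨hu1, hu2⟩ := hgood k h2 hkn
      rw [hroot.2 ω k h2, detRoot_eq]
      by_cases hξk : ξ k ω = true
      · rw [if_pos hξk, if_pos ⟨h2, hξk, hu1, by omega⟩]
        exact ih (u k ω) (by omega) hu1 (by omega)
      · rw [if_neg hξk, if_neg (by tauto)]
    · have hk : k = 1 := by omega
      subst hk
      rw [hroot.1 ω, detRoot_eq, if_neg (by omega)]

lemma cc_eq_dCount (root : ℕ → Ω → ℕ) (hroot : IsForestRoot ξ u root) (n : ℕ) (ω : Ω)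
    (hgood : ∀ k, 2 ≤ k → k ≤ n → 1 ≤ u k ω ∧ u k ω ≤ k - 1) :
    clusterCount root 1 n ω = dCount (fun m => ξ m ω) (fun m => u m ω) n := by
  have hsz : ∀ jj, clusterSize root n jj ω = dSize (fun m => ξ m ω) (fun m => u m ω) n jj := by
    intro jj
    rw [clusterSize, dSize]
    congr 1
    apply Finset.filter_congr
    intro k hk
    simp only [Finset.mem_Icc] at hk
    rw [root_eq_detRoot ξ u root hroot n ω hgood k hk.1 hk.2]
  rw [clusterCount, dCount]
  congr 1
  apply Finset.filter_congr
  intro jj _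
  rw [hsz jj]

lemma R_measSet (hξ : ∀ k c, MeasurableSet {ω | ξ k ω = c})
    (hu : ∀ k l, MeasurableSet {ω | u k ω = l}) (k : ℕ) (v : ℕ) :
    MeasurableSet {ω | detRoot (fun m => ξ m ω) (fun m => u m ω) k = v} := by
  induction k using Nat.strong_induction_on with
  | _ k ih =>
    have hset : {ω | detRoot (fun m => ξ m ω) (fun m => u m ω) k = v} =
        (⋃ m ∈ Finset.Ico 1 k, ({ω | ξ k ω = true} ∩ {ω | u k ω = m} ∩
            {ω | (2 ≤ k) ∧ detRoot (fun m' => ξ m' ω) (fun m' => u m' ω) m = v})) ∪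
          ({ω | ¬(2 ≤ k ∧ ξ k ω = true ∧ 1 ≤ u k ω ∧ u k ω < k)} ∩ {ω | k = v}) := by
      ext ω
      simp only [Set.mem_union, Set.mem_iUnion, Set.mem_inter_iff, Set.mem_setOf_eq,
        Finset.mem_Ico]
      rw [detRoot_eq]
      by_cases hc : 2 ≤ k ∧ ξ k ω = true ∧ 1 ≤ u k ω ∧ u k ω < k
      · rw [if_pos hc]
        constructor
        · intro h
          exact Or.inl ⟨u k ω, ⟨hc.2.2.1, hc.2.2.2⟩, ⟨hc.2.1, rfl⟩, hc.1, h⟩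
        · rintro (⟨m, hm, ⟨_, hum⟩, _, h⟩ | ⟨hnc, _⟩)
          · rwa [hum]
          · exact absurd hc hnc
      · rw [if_neg hc]
        constructor
        · intro h
          exact Or.inr ⟨hc, h⟩
        · rintro (⟨m, hm, ⟨hξk, hum⟩, h2, h⟩ | ⟨_, h⟩)
          · exact absurd ⟨h2, hξk, by omega, by omega⟩ hc
          · exact h
    rw [hset]
    apply MeasurableSet.union
    · apply MeasurableSet.biUnion (Finset.countable_toSet _)
      intro m hm
      simp only [Finset.coe_Ico, Set.mem_Ico] at hm
      refine ((hξ k true).inter (hu k m)).inter ?_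
      have : {ω | (2 ≤ k) ∧ detRoot (fun m' => ξ m' ω) (fun m' => u m' ω) m = v} =
          {ω | (2 ≤ k)} ∩ {ω | detRoot (fun m' => ξ m' ω) (fun m' => u m' ω) m = v} := rfl
      rw [this]
      refine (MeasurableSet.const _).inter (ih m (by omega))
    · refine MeasurableSet.inter ?_ (MeasurableSet.const _)
      rw [show {ω : Ω | ¬(2 ≤ k ∧ ξ k ω = true ∧ 1 ≤ u k ω ∧ u k ω < k)} =
        ({ω : Ω | (2:ℕ) ≤ k} ∩ {ω | ξ k ω = true} ∩
          (⋃ m ∈ Finset.Ico 1 k, {ω | u k ω = m}))ᶜ from ?_]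
      · apply MeasurableSet.compl
        refine (MeasurableSet.inter (MeasurableSet.const _) (hξ k true)).inter ?_
        exact MeasurableSet.biUnion (Finset.countable_toSet _) (fun m _ => hu k m)
      · ext ω
        simp only [Set.mem_compl_iff, Set.mem_inter_iff, Set.mem_setOf_eq, Set.mem_iUnion,
          Finset.mem_Ico]
        constructor
        · intro h hx
          obtain ⟨⟨h2, hξk⟩, m, hm, hum⟩ := hx
          exact h ⟨h2, hξk, by omega, by omega⟩
        · intro h hx
          exact h ⟨⟨hx.1, hx.2.1⟩, u k ω, ⟨hx.2.2.1, hx.2.2.2⟩, rfl⟩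

lemma dSize_meas (hξ : ∀ k c, MeasurableSet {ω | ξ k ω = c})
    (hu : ∀ k l, MeasurableSet {ω | u k ω = l}) (n jj : ℕ) :
    Measurable (fun ω => dSize (fun m => ξ m ω) (fun m => u m ω) n jj) := by
  have : (fun ω => dSize (fun m => ξ m ω) (fun m => u m ω) n jj) =
      fun ω => ∑ k ∈ Finset.Icc 1 n,
        if detRoot (fun m => ξ m ω) (fun m => u m ω) k = jj then 1 else 0 := by
    funext ω
    rw [dSize, Finset.card_filter]
  rw [this]
  apply Finset.measurable_sum
  intro k _
  exact Measurable.ite (R_measSet ξ u hξ hu k jj) measurable_const measurable_const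

lemma dCount_meas (hξ : ∀ k c, MeasurableSet {ω | ξ k ω = c})
    (hu : ∀ k l, MeasurableSet {ω | u k ω = l}) (n : ℕ) :
    Measurable (fun ω => dCount (fun m => ξ m ω) (fun m => u m ω) n) := by
  have : (fun ω => dCount (fun m => ξ m ω) (fun m => u m ω) n) =
      fun ω => ∑ jj ∈ Finset.Icc 1 n,
        if dSize (fun m => ξ m ω) (fun m => u m ω) n jj = 1 then 1 else 0 := by
    funext ω
    rw [dCount, Finset.card_filter]
  rw [this]
  apply Finset.measurable_sum
  intro jj _
  exact Measurable.ite ((dSize_meas ξ u hξ hu n jj) (measurableSet_singleton 1))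
    measurable_const measurable_const

/-- deterministic version of `epsMDS` -/
noncomputable def epsDet (j : ℕ) (ω : Ω) : ℝ :=
  (1 / (1 + α)) *
    ((dCount (fun m => ξ m ω) (fun m => u m ω) (j + 1) : ℝ) -
      (dCount (fun m => ξ m ω) (fun m => u m ω) j : ℝ) - (1 - α) +
      α * (dCount (fun m => ξ m ω) (fun m => u m ω) j : ℝ) / j)

lemma epsDet_meas (hξ : ∀ k c, MeasurableSet {ω | ξ k ω = c})
    (hu : ∀ k l, MeasurableSet {ω | u k ω = l}) (j : ℕ) :
    Measurable (epsDet ξ u α j) := by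
  have hc : ∀ n, Measurable (fun ω => (dCount (fun m => ξ m ω) (fun m => u m ω) n : ℝ)) :=
    fun n => Measurable.comp (measurable_from_top) (dCount_meas ξ u hξ hu n)
  unfold epsDet
  exact Measurable.const_mul
    ((((hc (j+1)).sub (hc j)).sub measurable_const).add (((hc j).const_mul α).div_const _)) _

lemma dCount_le (A : ℕ → Bool) (B : ℕ → ℕ) (n : ℕ) : dCount A B n ≤ n := by
  calc dCount A B n ≤ (Finset.Icc 1 n).card := Finset.card_filter_le _ _
  _ = n := by rw [Nat.card_Icc]; omega

lemma epsDet_integrable [IsProbabilityMeasure P] (hα0 : 0 ≤ α) (hα1 : α < 1)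
    (hξ : ∀ k c, MeasurableSet {ω | ξ k ω = c})
    (hu : ∀ k l, MeasurableSet {ω | u k ω = l}) (j : ℕ) (hj : 1 ≤ j) :
    Integrable (epsDet ξ u α j) P := by
  have h1α : (0:ℝ) < 1 + α := by linarith
  apply Integrable.mono' (integrable_const ((1 / (1 + α)) * (2 * j + 2 + α)))
    (epsDet_meas ξ u α hξ hu j).aestronglyMeasurable
  apply Filter.Eventually.of_forall
  intro ω
  rw [epsDet, norm_mul]
  have hjR : (1:ℝ) ≤ (j:ℝ) := by exact_mod_cast hj
  have hd1 : (0:ℝ) ≤ (dCount (fun m => ξ m ω) (fun m => u m ω) (j+1) : ℝ) := by positivity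
  have hd2 : (0:ℝ) ≤ (dCount (fun m => ξ m ω) (fun m => u m ω) j : ℝ) := by positivity
  have hb1 : (dCount (fun m => ξ m ω) (fun m => u m ω) (j+1) : ℝ) ≤ (j:ℝ) + 1 := by
    exact_mod_cast dCount_le _ _ (j+1)
  have hb2 : (dCount (fun m => ξ m ω) (fun m => u m ω) j : ℝ) ≤ (j:ℝ) := by
    exact_mod_cast dCount_le _ _ j
  have hdiv : α * (dCount (fun m => ξ m ω) (fun m => u m ω) j : ℝ) / j ≤ α := by
    rw [div_le_iff₀ (by linarith)]
    nlinarith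
  have hdiv0 : 0 ≤ α * (dCount (fun m => ξ m ω) (fun m => u m ω) j : ℝ) / j := by positivity
  rw [Real.norm_eq_abs, Real.norm_eq_abs, abs_of_pos (by positivity)]
  apply mul_le_mul_of_nonneg_left _ (le_of_lt (by positivity))
  rw [abs_le]
  constructor <;> linarith

set_option maxHeartbeats 1000000 in
lemma part2 [IsProbabilityMeasure P] (hα0 : 0 ≤ α) (hα1 : α < 1)
    (root : ℕ → Ω → ℕ) (hlaw : ForestLaw P α ξ u) (hroot : IsForestRoot ξ u root)
    (j : ℕ) (hj : 1 ≤ j) (a : ℕ → Bool) (b : ℕ → ℕ) :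
    ∫ ω in atomEv ξ u j a b, epsMDS α root j ω ∂P = 0 := by
  classical
  obtain ⟨hξ, hu, hprod⟩ := hlaw
  have h1α : (0:ℝ) < 1 + α := by linarith
  have hjR : (0:ℝ) < (j:ℝ) := by exact_mod_cast hj
  by_cases hb : ∀ k, 2 ≤ k → k ≤ j → (1 ≤ b k ∧ b k ≤ k - 1)
  case neg =>
    push_neg at hb
    obtain ⟨k, h2, hkj, hout⟩ := hb
    have hnull : P (atomEv ξ u j a b) = 0 := by
      apply measure_mono_null (t := {ω | u k ω = b k})
      · intro ω hω; exact (hω k h2 hkj).2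
      · exact u_null P ξ u α ⟨hξ, hu, hprod⟩ k (b k) h2 (by omega)
    rw [Measure.restrict_eq_zero.mpr hnull, integral_zero_measure]
  case pos =>
  have hAmeas := atomEv_meas ξ u hξ hu j a b
  have hbad := bad_null P ξ u α ⟨hξ, hu, hprod⟩ (j+1)
  -- Step 1: replace the integrand by its deterministic version
  have hcong : ∫ ω in atomEv ξ u j a b, epsMDS α root j ω ∂P
      = ∫ ω in atomEv ξ u j a b, epsDet ξ u α j ω ∂P := by
    apply setIntegral_congr_ae hAmeas
    have hae : ∀ᵐ ω ∂P, ω ∉ {ω | ∃ k, 2 ≤ k ∧ k ≤ j+1 ∧ ¬(1 ≤ u k ω ∧ u k ω ≤ k - 1)} :=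
      (measure_eq_zero_iff_ae_notMem).mp hbad
    filter_upwards [hae] with ω hω _
    simp only [Set.mem_setOf_eq, not_exists] at hω
    have hgood : ∀ k, 2 ≤ k → k ≤ j + 1 → 1 ≤ u k ω ∧ u k ω ≤ k - 1 := by
      intro k h2 hk
      by_contra hcon
      exact hω k ⟨h2, hk, hcon⟩
    rw [epsMDS, epsDet,
      cc_eq_dCount ξ u root hroot (j+1) ω hgood,
      cc_eq_dCount ξ u root hroot j ω (fun k h2 hk => hgood k h2 (by omega))]
  rw [hcong]
  -- Step 2: the pieces
  set a' : Bool → ℕ → Bool := fun c => Function.update a (j+1) c with ha'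
  set b' : ℕ → ℕ → ℕ := fun l => Function.update b (j+1) l with hb'
  set piece : Bool → ℕ → Set Ω := fun c l => atomEv ξ u (j+1) (a' c) (b' l) with hpiece
  have ha'eq : ∀ c k, k ≤ j → a' c k = a k := by
    intro c k hk; rw [ha']; exact Function.update_of_ne (by omega) _ _
  have hb'eq : ∀ l k, k ≤ j → b' l k = b k := by
    intro l k hk; rw [hb']; exact Function.update_of_ne (by omega) _ _
  have ha'top : ∀ c, a' c (j+1) = c := fun c => Function.update_self _ _ _
  have hb'top : ∀ l, b' l (j+1) = l := fun l => Function.update_self _ _ _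
  have hpieceA : ∀ c l, piece c l =
      atomEv ξ u j a b ∩ ({ω | ξ (j+1) ω = c} ∩ {ω | u (j+1) ω = l}) := by
    intro c l
    ext ω
    simp only [hpiece, atomEv, Set.mem_setOf_eq, Set.mem_inter_iff]
    constructor
    · intro h
      refine ⟨fun k h2 hk => ?_, ?_, ?_⟩
      · have := h k h2 (by omega)
        rwa [ha'eq c k hk, hb'eq l k hk] at this
      · have := h (j+1) (by omega) le_rfl
        rw [ha'top] at this; exact this.1
      · have := h (j+1) (by omega) le_rfl
        rw [hb'top] at this; exact this.2
    · rintro ⟨hA, hξ1, hu1⟩ k h2 hk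
      by_cases hkj : k ≤ j
      · rw [ha'eq c k hkj, hb'eq l k hkj]
        exact hA k h2 hkj
      · have : k = j + 1 := by omega
        subst this
        rw [ha'top, hb'top]
        exact ⟨hξ1, hu1⟩
  have hpsub : ∀ c l, piece c l ⊆ atomEv ξ u j a b := by
    intro c l; rw [hpieceA]; exact Set.inter_subset_left
  set t : Finset (Bool × ℕ) := Finset.univ ×ˢ Finset.Icc 1 j with ht
  have hUnion : atomEv ξ u j a b =ᵐ[P] ⋃ p ∈ t, piece p.1 p.2 := by
    rw [Filter.eventuallyEq_set]
    have h1 : atomEv ξ u j a b \ (⋃ p ∈ t, piece p.1 p.2) ⊆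
        {ω | ∃ k, 2 ≤ k ∧ k ≤ j+1 ∧ ¬(1 ≤ u k ω ∧ u k ω ≤ k - 1)} := by
      rintro ω ⟨hA, hT⟩
      refine ⟨j+1, by omega, le_rfl, fun hr => ?_⟩
      apply hT
      simp only [Set.mem_iUnion, ht, Finset.mem_product, Finset.mem_univ, Finset.mem_Icc]
      refine ⟨(ξ (j+1) ω, u (j+1) ω), ⟨trivial, by omega, by omega⟩, ?_⟩
      rw [hpieceA]
      exact ⟨hA, rfl, rfl⟩
    have hnull1 : P (atomEv ξ u j a b \ (⋃ p ∈ t, piece p.1 p.2)) = 0 :=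
      measure_mono_null h1 hbad
    have hsub2 : (⋃ p ∈ t, piece p.1 p.2) ⊆ atomEv ξ u j a b := by
      intro ω hω
      simp only [Set.mem_iUnion] at hω
      obtain ⟨p, _, hp⟩ := hω
      exact hpsub p.1 p.2 hp
    have := MeasureTheory.ae_le_set.mpr hnull1
    filter_upwards [this] with ω hω
    constructor
    · intro h; exact hω h
    · intro h; exact hsub2 h
  rw [setIntegral_congr_set hUnion]
  have hpmeas : ∀ p : Bool × ℕ, MeasurableSet (piece p.1 p.2) :=
    fun p => atomEv_meas ξ u hξ hu (j+1) _ _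
  have hdisj : (t : Set (Bool × ℕ)).Pairwise (Function.onFun Disjoint fun p : Bool × ℕ => piece p.1 p.2) := by
    intro p _ q _ hpq
    rw [Function.onFun, Set.disjoint_left]
    intro ω hp hq
    apply hpq
    rw [hpieceA] at hp hq
    have e1 : p.1 = q.1 := by rw [← hp.2.1, ← hq.2.1]
    have e2 : p.2 = q.2 := by rw [← hp.2.2, ← hq.2.2]
    exact Prod.ext e1 e2
  rw [integral_biUnion_finset t (fun p _ => hpmeas p) hdisj
    (fun p _ => (epsDet_integrable P ξ u α hα0 hα1 hξ hu j hj).integrableOn)]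
  set m : ℕ := dCount a b j with hm
  -- value of the integral on each piece
  have hval : ∀ c l, 1 ≤ l → l ≤ j →
      ∫ ω in piece c l, epsDet ξ u α j ω ∂P =
        ((1 / (1 + α)) * ((dCount (a' c) (b' l) (j + 1) : ℝ) - (m : ℝ) - (1 - α) +
          α * (m : ℝ) / j)) * (P (piece c l)).toReal := by
    intro c l hl1 hlj
    rw [setIntegral_congr_fun (hpmeas (c, l)) ?eqon, setIntegral_const, smul_eq_mul, mul_comm, measureReal_def]
    case eqon =>
      intro ω hω
      rw [epsDet]
      have hc1 : dCount (fun m' => ξ m' ω) (fun m' => u m' ω) (j+1) =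
          dCount (a' c) (b' l) (j+1) :=
        dCount_congr (fun m' h2 hm' => ⟨(hω m' h2 hm').1, (hω m' h2 hm').2⟩)
      have hc2 : dCount (fun m' => ξ m' ω) (fun m' => u m' ω) j = m := by
        rw [hm]
        apply dCount_congr
        intro m' h2 hm'
        have := hω m' h2 (by omega)
        rw [ha'eq c m' hm', hb'eq l m' hm'] at this
        exact this
      rw [hc1, hc2]
  -- measure of the pieces
  set W : ℝ := ∏ k ∈ Finset.Icc 2 j, ((if a k = true then α else 1 - α) *
      (if 1 ≤ b k ∧ b k ≤ k - 1 then 1 / ((k : ℝ) - 1) else 0)) with hW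
  have hPm : ∀ c l, 1 ≤ l → l ≤ j → (P (piece c l)).toReal =
      W * ((if c = true then α else 1 - α) / j) := by
    intro c l hl1 hlj
    have hpr := hprod (j+1) (by omega) (a' c) (b' l)
    rw [show {ω | ∀ k, 2 ≤ k → k ≤ j+1 → (ξ k ω = a' c k ∧ u k ω = b' l k)} = piece c l
      from rfl] at hpr
    rw [hpr, Finset.prod_Icc_succ_top (by omega : 2 ≤ j + 1)]
    have hfac : ∀ k ∈ Finset.Icc 2 j,
        ((if a' c k = true then α else 1 - α) *
          (if 1 ≤ b' l k ∧ b' l k ≤ k - 1 then 1 / ((k : ℝ) - 1) else 0)) =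
        ((if a k = true then α else 1 - α) *
          (if 1 ≤ b k ∧ b k ≤ k - 1 then 1 / ((k : ℝ) - 1) else 0)) := by
      intro k hk
      simp only [Finset.mem_Icc] at hk
      rw [ha'eq c k hk.2, hb'eq l k hk.2]
    rw [Finset.prod_congr rfl hfac, ha'top, hb'top, if_pos (⟨hl1, by omega⟩ : 1 ≤ l ∧ l ≤ j + 1 - 1)]
    have hcast : ((j + 1 : ℕ) : ℝ) - 1 = (j : ℝ) := by push_cast; ring
    rw [hcast, hW, mul_one_div]
  -- the two key counting identities
  have hK1 : ∀ l : ℕ, (dCount (a' false) (b' l) (j+1) : ℝ) = (m:ℝ) + 1 := by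
    intro l
    have h := dCount_succ_false (a' false) (b' l) j (by rw [ha'top])
    have h2 : dCount (a' false) (b' l) j = m := by
      rw [hm]; apply dCount_congr; intro k hk2 hkj; exact ⟨ha'eq false k hkj, hb'eq l k hkj⟩
    rw [h, h2]; push_cast; ring
  have hK2 : ∀ l, 1 ≤ l → l ≤ j → (dCount (a' true) (b' l) (j+1) : ℝ) =
      (m:ℝ) - (if dSize a b j l = 1 then (1:ℝ) else 0) := by
    intro l hl1 hlj
    have hBtop : (b' l) (j+1) = l := hb'top l
    have h := dCount_succ_true (a' true) (b' l) j hj (by rw [ha'top])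
      (by rw [hBtop]; omega) (by rw [hBtop]; omega)
    have h2 : dCount (a' true) (b' l) j = m := by
      rw [hm]; apply dCount_congr; intro k hk2 hkj; exact ⟨ha'eq true k hkj, hb'eq l k hkj⟩
    have h3 : dSize (a' true) (b' l) j ((b' l) (j+1)) = dSize a b j l := by
      rw [hBtop]; apply dSize_congr; intro k hk2 hkj; exact ⟨ha'eq true k hkj, hb'eq l k hkj⟩
    rw [h2, h3] at h
    by_cases hcase : dSize a b j l = 1
    · rw [if_pos hcase] at h ⊢
      have := congrArg (Nat.cast : ℕ → ℝ) h
      push_cast at this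
      linarith
    · rw [if_neg hcase] at h ⊢
      have := congrArg (Nat.cast : ℕ → ℝ) h
      push_cast at this
      linarith
  have hiso : ∑ l ∈ Finset.Icc 1 j, (if dSize a b j l = 1 then (1:ℝ) else 0) = (m:ℝ) := by
    rw [Finset.sum_boole, hm]
    norm_cast
  -- compute the sum
  have hterm : ∀ p ∈ t, ∫ ω in piece p.1 p.2, epsDet ξ u α j ω ∂P =
      (W * (1/(1+α)) * (1/j) * (α * (-(1-α) + α*(m:ℝ)/j))
          + (-(W * (1/(1+α)) * (1/j) * α)) * (if dSize a b j p.2 = 1 then (1:ℝ) else 0))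
        * (if p.1 = true then 1 else 0)
      + (W * (1/(1+α)) * (1/j) * ((1-α) * (1 - (1-α) + α*(m:ℝ)/j)))
        * (if p.1 = true then 0 else 1) := by
    rintro ⟨c, l⟩ hp
    simp only [ht, Finset.mem_product, Finset.mem_univ, Finset.mem_Icc, true_and] at hp
    obtain ⟨hl1, hlj⟩ := hp
    rw [hval c l hl1 hlj, hPm c l hl1 hlj]
    cases c
    · simp only [Bool.false_eq_true, if_false]
      rw [hK1 l]
      ring
    · simp only [if_true]
      rw [hK2 l hl1 hlj]
      ring
  rw [Finset.sum_congr rfl hterm]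
  rw [ht, Finset.sum_product]
  rw [Fintype.sum_bool]
  simp only [if_true, Bool.false_eq_true, if_false, mul_one, mul_zero, add_zero, zero_add]
  rw [Finset.sum_add_distrib, Finset.sum_const, ← Finset.mul_sum, hiso, Finset.sum_const,
    Nat.card_Icc]
  have hcard : (j + 1 - 1 : ℕ) = j := by omega
  rw [hcard]
  simp only [nsmul_eq_mul]
  field_simp
  ring

end Part2

end AuxPRRF

/-- **Lemma 3.3.** For every `n ≥ 1`,
`y_n = β_n·(y_1 + ∑_{j=1}^{n−1} (γ_j/β_{j+1})·ε_{j+1})`, and `(ε_{j+1})_{j≥1}` is a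
martingale difference sequence with respect to the filtration of the forests:
`𝔼[ε_{j+1} | 𝔽_j] = 0`, expressed by the vanishing of the integral of `ε_{j+1}` over each
elementary event determined by the first `j` steps of the construction. -/
theorem isolated_count_martingale_decomposition
    (α : ℝ) (hα0 : 0 ≤ α) (hα1 : α < 1)
    {Ω : Type} [MeasurableSpace Ω] (P : Measure Ω) [IsProbabilityMeasure P]
    (ξ : ℕ → Ω → Bool) (u : ℕ → Ω → ℕ) (root : ℕ → Ω → ℕ)
    (hlaw : ForestLaw P α ξ u) (hroot : IsForestRoot ξ u root) :
    (∀ ω : Ω, ∀ n : ℕ, 1 ≤ n →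
      yLevel α root n ω =
        betaProd α n *
          (yLevel α root 1 ω +
            ∑ j ∈ Finset.Icc 1 (n - 1),
              gammaCoef α j / betaProd α (j + 1) * epsMDS α root j ω)) ∧
    (∀ j : ℕ, 1 ≤ j → ∀ (a : ℕ → Bool) (b : ℕ → ℕ),
      ∫ ω in {ω | ∀ k, 2 ≤ k → k ≤ j → (ξ k ω = a k ∧ u k ω = b k)},
        epsMDS α root j ω ∂P = 0) := by
  constructor
  · intro ω n hn
    exact part1_closed α root hα0 hα1 ω n hn
  · intro j hj a b
    exact part2 P ξ u α hα0 hα1 root hlaw hroot j hj a b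
end

section
/- For every α ∈ [0,1) and every n ≥ 2, ℙ( max_{⌊n/2⌋ ≤ k ≤ n} I(k)/k ≥ 3(1−α) ) ≤ 4·e^{−(1−α)n/12}. -/
open MeasureTheory Finset

section AuxLemmas

variable {Ω : Type}

lemma forest_root_props (ξ : ℕ → Ω → Bool) (u : ℕ → Ω → ℕ) (root : ℕ → Ω → ℕ)
    (hroot : IsForestRoot ξ u root) (ω : Ω) (n : ℕ)
    (hG : ∀ m, 2 ≤ m → m ≤ n → 1 ≤ u m ω ∧ u m ω ≤ m - 1) :
    ∀ m, 1 ≤ m → m ≤ n → root m ω ≤ m ∧ 1 ≤ root m ω ∧ root (root m ω) ω = root m ω := by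
  intro m
  induction m using Nat.strong_induction_on with
  | _ m ih =>
    intro h1 h2
    rcases eq_or_lt_of_le h1 with h | h
    · have hr : root m ω = 1 := by rw [← h]; exact hroot.1 ω
      refine ⟨by omega, by omega, ?_⟩
      rw [hr]; exact hroot.1 ω
    · have h2m : 2 ≤ m := h
      cases hξ : ξ m ω with
      | false =>
        have hr : root m ω = m := by rw [hroot.2 ω m h2m, if_neg]; simp [hξ]
        exact ⟨le_of_eq hr, by omega, by rw [hr]; exact hr⟩
      | true =>
        have hr : root m ω = root (u m ω) ω := by rw [hroot.2 ω m h2m, if_pos hξ]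
        obtain ⟨hu1, hu2⟩ := hG m h2m h2
        have hIH := ih (u m ω) (by omega) hu1 (by omega)
        refine ⟨by rw [hr]; omega, by rw [hr]; exact hIH.2.1, ?_⟩
        rw [hr]; exact hIH.2.2

lemma iso_le_false_count (ξ : ℕ → Ω → Bool) (u : ℕ → Ω → ℕ) (root : ℕ → Ω → ℕ)
    (hroot : IsForestRoot ξ u root) (ω : Ω) (n k : ℕ) (hk : k ≤ n)
    (hG : ∀ m, 2 ≤ m → m ≤ n → 1 ≤ u m ω ∧ u m ω ≤ m - 1) :
    clusterCount root 1 k ω ≤ 1 + ((Finset.Icc 2 n).filter fun j => ξ j ω = false).card := by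
  have hprops := forest_root_props ξ u root hroot ω n hG
  have hsub : (Finset.Icc 1 k).filter (fun j => clusterSize root k j ω = 1) ⊆
      insert 1 ((Finset.Icc 2 n).filter fun j => ξ j ω = false) := by
    intro j hj
    simp only [mem_filter, mem_Icc] at hj
    obtain ⟨⟨hj1, hjk⟩, hsize⟩ := hj
    rcases eq_or_lt_of_le hj1 with h | h
    · rw [Finset.mem_insert]; left; omega
    · have hj2 : 2 ≤ j := h
      rw [Finset.mem_insert]; right
      rw [mem_filter, mem_Icc]
      refine ⟨⟨hj2, le_trans hjk hk⟩, ?_⟩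
      rw [clusterSize, Finset.card_eq_one] at hsize
      obtain ⟨m, hm⟩ := hsize
      have hmem : m ∈ (Finset.Icc 1 k).filter fun l => root l ω = j := by
        rw [hm]; exact Finset.mem_singleton_self m
      rw [mem_filter, mem_Icc] at hmem
      obtain ⟨⟨hm1, hmk⟩, hroot_m⟩ := hmem
      have hmprops := hprops m hm1 (le_trans hmk hk)
      have hrootj : root j ω = j := by rw [← hroot_m]; exact hmprops.2.2
      by_contra hcon
      have hξj : ξ j ω = true := by revert hcon; cases hξ : ξ j ω <;> simp
      have hrj : root j ω = root (u j ω) ω := by rw [hroot.2 ω j hj2, if_pos hξj]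
      obtain ⟨hu1, hu2⟩ := hG j hj2 (le_trans hjk hk)
      have hup := hprops (u j ω) hu1 (by omega)
      have := hup.1
      omega
  calc clusterCount root 1 k ω
      ≤ (insert 1 ((Finset.Icc 2 n).filter fun j => ξ j ω = false)).card :=
        Finset.card_le_card hsub
    _ ≤ 1 + ((Finset.Icc 2 n).filter fun j => ξ j ω = false).card := by
        rw [add_comm]; exact Finset.card_insert_le _ _

variable [MeasurableSpace Ω]

lemma cylinder_prob (P : Measure Ω) [IsProbabilityMeasure P]
    (α : ℝ) (ξ : ℕ → Ω → Bool) (u : ℕ → Ω → ℕ) (hlaw : ForestLaw P α ξ u)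
    (n : ℕ) (hn : 2 ≤ n) (a : ↥(Finset.Icc 2 n) → Bool) :
    (P ({ω | ∀ x : ↥(Finset.Icc 2 n), ξ x.1 ω = a x} ∩
        {ω | ∀ m, 2 ≤ m → m ≤ n → 1 ≤ u m ω ∧ u m ω ≤ m - 1})).toReal =
      ∏ x ∈ (Finset.Icc 2 n).attach, (if a x = true then α else 1 - α) := by
  classical
  revert a
  set s := Finset.Icc 2 n with hs
  intro a
  set t : ℕ → Finset ℕ := fun k => Finset.Icc 1 (k - 1) with ht
  set w' : ℕ → ℝ := fun k => if h : k ∈ s then (if a ⟨k, h⟩ = true then α else 1 - α) else 0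
    with hw'
  set f : ℕ → ℕ → ℝ := fun k j =>
    w' k * (if 1 ≤ j ∧ j ≤ k - 1 then 1 / ((k : ℝ) - 1) else 0) with hf
  set D : (∀ k ∈ s, ℕ) → Set Ω := fun c =>
    ⋂ x : ↥s, ({ω | ξ x.1 ω = a x} ∩ {ω | u x.1 ω = c x.1 x.2}) with hD
  have claim4 : ∀ c ∈ s.pi t, (P (D c)).toReal =
      ∏ x ∈ s.attach, f x.1 (c x.1 x.2) := by
    intro c hc
    have hlawc := hlaw.2.2 n hn (fun k => if h : k ∈ s then a ⟨k, h⟩ else true)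
        (fun k => if h : k ∈ s then c k h else 0)
    have hset : {ω : Ω | ∀ k, 2 ≤ k → k ≤ n →
        (ξ k ω = (if h : k ∈ s then a ⟨k, h⟩ else true) ∧
         u k ω = (if h : k ∈ s then c k h else 0))} = D c := by
      ext ω
      simp only [Set.mem_setOf_eq, hD, Set.mem_iInter, Set.mem_inter_iff]
      constructor
      · intro H x
        obtain ⟨h2, h3⟩ := Finset.mem_Icc.mp x.2
        have := H x.1 h2 h3
        simp only [dif_pos x.2] at this
        exact this
      · intro H k h2 h3
        have hk : k ∈ s := Finset.mem_Icc.mpr ⟨h2, h3⟩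
        simp only [dif_pos hk]
        exact ⟨(H ⟨k, hk⟩).1, (H ⟨k, hk⟩).2⟩
    rw [hset] at hlawc
    rw [hlawc, ← Finset.prod_attach]
    apply Finset.prod_congr rfl
    intro x hx
    have hxs : (x:ℕ) ∈ s := x.2
    simp only [hf, hw', dif_pos hxs]
  have hDmeas : ∀ c, MeasurableSet (D c) := fun c =>
    MeasurableSet.iInter fun x => (hlaw.1 x.1 (a x)).inter (hlaw.2.1 x.1 (c x.1 x.2))
  have hDdisj : (↑(s.pi t) : Set _).PairwiseDisjoint D := by
    intro c hc c' hc' hne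
    refine Set.disjoint_left.mpr fun ω hω hω' => hne ?_
    funext k h
    have h1 := (Set.mem_iInter.mp hω ⟨k, h⟩).2
    have h2 := (Set.mem_iInter.mp hω' ⟨k, h⟩).2
    simp only [Set.mem_setOf_eq] at h1 h2
    exact h1.symm.trans h2
  have hunion : ⋃ c ∈ s.pi t, D c =
      {ω | ∀ x : ↥s, ξ x.1 ω = a x} ∩
        {ω | ∀ m, 2 ≤ m → m ≤ n → 1 ≤ u m ω ∧ u m ω ≤ m - 1} := by
    ext ω
    simp only [Set.mem_iUnion, Set.mem_inter_iff, Set.mem_setOf_eq, hD, Set.mem_iInter,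
      exists_prop]
    constructor
    · rintro ⟨c, hc, hω⟩
      refine ⟨fun x => (hω x).1, fun m h2 h3 => ?_⟩
      have hm : m ∈ s := Finset.mem_Icc.mpr ⟨h2, h3⟩
      have heq := (hω ⟨m, hm⟩).2
      have hmem := Finset.mem_pi.mp hc m hm
      rw [heq]
      exact Finset.mem_Icc.mp hmem
    · rintro ⟨h1, h2⟩
      refine ⟨fun k _ => u k ω, ?_, fun x => ⟨h1 x, rfl⟩⟩
      rw [Finset.mem_pi]
      intro k hk
      obtain ⟨hk1, hk2⟩ := Finset.mem_Icc.mp hk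
      exact Finset.mem_Icc.mpr (h2 k hk1 hk2)
  rw [← hunion, measure_biUnion_finset hDdisj (fun c _ => hDmeas c),
    ENNReal.toReal_sum (fun c _ => measure_ne_top P _),
    Finset.sum_congr rfl claim4, ← Finset.prod_sum]
  have hinner : ∀ k ∈ s, (∑ j ∈ t k, f k j) = w' k := by
    intro k hk
    obtain ⟨hk2, hkn⟩ := Finset.mem_Icc.mp hk
    have hcast : (((k - 1 : ℕ)) : ℝ) = (k : ℝ) - 1 := by
      push_cast [Nat.cast_sub (by omega : 1 ≤ k)]; ring
    have hne : (k : ℝ) - 1 ≠ 0 := by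
      have : (2 : ℝ) ≤ (k : ℝ) := by exact_mod_cast hk2
      linarith
    simp only [hf, ← Finset.mul_sum]
    have : (∑ j ∈ t k, if 1 ≤ j ∧ j ≤ k - 1 then 1 / ((k : ℝ) - 1) else 0) = 1 := by
      rw [Finset.sum_congr rfl (fun j hj => if_pos (Finset.mem_Icc.mp hj)),
        Finset.sum_const, Nat.card_Icc]
      have h1 : (k - 1 + 1 - 1 : ℕ) = k - 1 := by omega
      rw [h1, nsmul_eq_mul, hcast]
      field_simp
    rw [this, mul_one]
  rw [Finset.prod_congr rfl hinner, ← Finset.prod_attach]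
  apply Finset.prod_congr rfl
  intro x hx
  simp only [hw', dif_pos x.2]

lemma card_filter_subtype (s : Finset ℕ) (p : ℕ → Prop) [DecidablePred p] :
    ((Finset.univ : Finset ↥s).filter fun x => p x.1).card = (s.filter p).card := by
  apply Finset.card_bij (fun (x : ↥s) _ => x.1)
  · intro x hx; rw [Finset.mem_filter] at hx ⊢; exact ⟨x.2, hx.2⟩
  · intro x hx y hy h; exact Subtype.ext h
  · intro k hk; rw [Finset.mem_filter] at hk
    exact ⟨⟨k, hk.1⟩, Finset.mem_filter.mpr ⟨Finset.mem_univ _, hk.2⟩, rfl⟩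

lemma sum_prod_bool {ι : Type} [Fintype ι] [DecidableEq ι] (h : ι → Bool → ℝ) :
    ∑ a ∈ (Finset.univ : Finset (ι → Bool)), ∏ x, h x (a x) =
      ∏ x, (h x true + h x false) := by
  calc ∑ a ∈ (Finset.univ : Finset (ι → Bool)), ∏ x, h x (a x)
      = ∑ a ∈ Fintype.piFinset (fun _ : ι => (Finset.univ : Finset Bool)),
          ∏ x, h x (a x) := by rw [Fintype.piFinset_univ]
    _ = ∏ x, ∑ b ∈ (Finset.univ : Finset Bool), h x b := (Finset.prod_univ_sum _ _).symm
    _ = ∏ x, (h x true + h x false) := by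
        apply Finset.prod_congr rfl; intro x _; exact Fintype.sum_bool _

lemma exp_half_le : Real.exp (1/2) ≤ 1.649 := by
  have hsq : Real.exp (1/2) * Real.exp (1/2) = Real.exp 1 := by
    rw [← Real.exp_add]; norm_num
  nlinarith [Real.exp_one_lt_d9, Real.exp_pos (1/2 : ℝ)]

lemma G_measurable (u : ℕ → Ω → ℕ) (hu : ∀ k j, MeasurableSet {ω : Ω | u k ω = j}) (n : ℕ) :
    MeasurableSet {ω : Ω | ∀ m, 2 ≤ m → m ≤ n → 1 ≤ u m ω ∧ u m ω ≤ m - 1} := by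
  have hrw : {ω : Ω | ∀ m, 2 ≤ m → m ≤ n → 1 ≤ u m ω ∧ u m ω ≤ m - 1} =
      ⋂ m, {ω | 2 ≤ m → m ≤ n → 1 ≤ u m ω ∧ u m ω ≤ m - 1} := by
    ext ω; simp [Set.mem_iInter]
  rw [hrw]
  refine MeasurableSet.iInter fun m => ?_
  by_cases h : 2 ≤ m ∧ m ≤ n
  · have he : {ω : Ω | 2 ≤ m → m ≤ n → 1 ≤ u m ω ∧ u m ω ≤ m - 1} =
        ⋃ j ∈ Finset.Icc 1 (m - 1), {ω | u m ω = j} := by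
      ext ω
      simp only [Set.mem_setOf_eq, Set.mem_iUnion, Finset.mem_Icc, exists_prop]
      constructor
      · intro hω; exact ⟨u m ω, hω h.1 h.2, rfl⟩
      · rintro ⟨j, hj, hje⟩ _ _; rw [hje]; exact hj
    rw [he]
    exact MeasurableSet.biUnion (Finset.Icc 1 (m - 1)).countable_toSet (fun j _ => hu m j)
  · have he : {ω : Ω | 2 ≤ m → m ≤ n → 1 ≤ u m ω ∧ u m ω ≤ m - 1} = Set.univ := by
      ext ω; simp only [Set.mem_setOf_eq, Set.mem_univ, iff_true]
      intro h1 h2; exact absurd ⟨h1, h2⟩ h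
    rw [he]; exact MeasurableSet.univ

lemma E_measurable (ξ : ℕ → Ω → Bool) (hξ : ∀ k b, MeasurableSet {ω : Ω | ξ k ω = b}) (n : ℕ)
    (a : ↥(Finset.Icc 2 n) → Bool) :
    MeasurableSet {ω : Ω | ∀ x : ↥(Finset.Icc 2 n), ξ x.1 ω = a x} := by
  have hrw : {ω : Ω | ∀ x : ↥(Finset.Icc 2 n), ξ x.1 ω = a x} =
      ⋂ x : ↥(Finset.Icc 2 n), {ω | ξ x.1 ω = a x} := by ext ω; simp [Set.mem_iInter]
  rw [hrw]; exact MeasurableSet.iInter fun x => hξ x.1 (a x)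

lemma G_prob_one (P : Measure Ω) [IsProbabilityMeasure P] (α : ℝ)
    (ξ : ℕ → Ω → Bool) (u : ℕ → Ω → ℕ) (hlaw : ForestLaw P α ξ u) (n : ℕ) (hn : 2 ≤ n) :
    P {ω : Ω | ∀ m, 2 ≤ m → m ≤ n → 1 ≤ u m ω ∧ u m ω ≤ m - 1} = 1 := by
  classical
  set G : Set Ω := {ω : Ω | ∀ m, 2 ≤ m → m ≤ n → 1 ≤ u m ω ∧ u m ω ≤ m - 1} with hG
  have hdisj : ((Finset.univ : Finset (↥(Finset.Icc 2 n) → Bool)) :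
      Set (↥(Finset.Icc 2 n) → Bool)).PairwiseDisjoint
      (fun a => {ω : Ω | ∀ x : ↥(Finset.Icc 2 n), ξ x.1 ω = a x} ∩ G) := by
    intro a _ a' _ hne
    refine Set.disjoint_left.mpr fun ω hω hω' => hne (funext fun x => ?_)
    exact (hω.1 x).symm.trans (hω'.1 x)
  have hcover : ⋃ a ∈ (Finset.univ : Finset (↥(Finset.Icc 2 n) → Bool)),
      ({ω : Ω | ∀ x : ↥(Finset.Icc 2 n), ξ x.1 ω = a x} ∩ G) = G := by
    ext ω
    simp only [Set.mem_iUnion, Set.mem_inter_iff, Set.mem_setOf_eq, exists_prop]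
    constructor
    · rintro ⟨a, _, _, hGω⟩; exact hGω
    · intro hGω; exact ⟨fun x => ξ x.1 ω, Finset.mem_univ _, fun x => rfl, hGω⟩
  have hmeas : ∀ a : ↥(Finset.Icc 2 n) → Bool,
      MeasurableSet ({ω : Ω | ∀ x : ↥(Finset.Icc 2 n), ξ x.1 ω = a x} ∩ G) :=
    fun a => (E_measurable ξ hlaw.1 n a).inter (G_measurable u hlaw.2.1 n)
  have hsum : (P G).toReal = 1 := by
    rw [← hcover, measure_biUnion_finset hdisj (fun a _ => hmeas a),
      ENNReal.toReal_sum (fun a _ => measure_ne_top P _),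
      Finset.sum_congr rfl (fun a _ => cylinder_prob P α ξ u hlaw n hn a)]
    simp only [Finset.attach_eq_univ]
    rw [sum_prod_bool (fun _ b => if b = true then α else 1 - α)]
    simp
  exact (ENNReal.toReal_eq_one_iff _).mp hsum

lemma numeric_expo (b nR mR : ℝ) (hb0 : 0 < b) (hn : 6 ≤ nR) (hm : (nR - 1)/2 ≤ mR) :
    -((3 * b * mR - 1)/2) + 0.649 * b * (nR - 1) + b * nR / 12 ≤ 1 := by
  nlinarith [mul_le_mul_of_nonneg_left hm hb0.le,
    mul_le_mul_of_nonneg_left (show nR/12 + 0.649*(nR-1) ≤ (3/4)*(nR-1) by linarith) hb0.le]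

end AuxLemmas

set_option maxHeartbeats 1000000 in
/-- **Lemma 3.5.** For every `α ∈ [0,1)` and every `n ≥ 2`,
`ℙ( max_{⌊n/2⌋ ≤ k ≤ n} I(k)/k ≥ 3(1−α) ) ≤ 4·e^{−(1−α)n/12}`, where `I(k)` is the number
of isolated vertices of `𝔽_k`. -/
theorem isolated_count_running_max_bound
    (α : ℝ) (hα0 : 0 ≤ α) (hα1 : α < 1)
    {Ω : Type} [MeasurableSpace Ω] (P : Measure Ω) [IsProbabilityMeasure P]
    (ξ : ℕ → Ω → Bool) (u : ℕ → Ω → ℕ) (root : ℕ → Ω → ℕ)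
    (hlaw : ForestLaw P α ξ u) (hroot : IsForestRoot ξ u root) :
    ∀ n : ℕ, 2 ≤ n →
      (P {ω | ∃ k : ℕ, n / 2 ≤ k ∧ k ≤ n ∧
          3 * (1 - α) ≤ (clusterCount root 1 k ω : ℝ) / k}).toReal ≤
        4 * Real.exp (-((1 - α) * n / 12)) := by
  intro n hn
  classical
  by_cases hn5 : n < 6
  · -- small n : trivial bound, since 4 exp(-(1-α)n/12) ≥ 1
    have h1 : (P {ω | ∃ k : ℕ, n / 2 ≤ k ∧ k ≤ n ∧
        3 * (1 - α) ≤ (clusterCount root 1 k ω : ℝ) / k}).toReal ≤ 1 := by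
      have h := ENNReal.toReal_mono (by simp) (prob_le_one (μ := P)
        (s := {ω | ∃ k : ℕ, n / 2 ≤ k ∧ k ≤ n ∧
          3 * (1 - α) ≤ (clusterCount root 1 k ω : ℝ) / k}))
      simpa using h
    have hn5' : (n : ℝ) ≤ 5 := by exact_mod_cast Nat.le_of_lt_succ hn5
    have h0 : (0:ℝ) ≤ (n:ℝ) := Nat.cast_nonneg n
    have hx : (1 - α) * (n:ℝ) / 12 ≤ 5 / 12 := by nlinarith
    have h2 := Real.add_one_le_exp (-((1 - α) * (n:ℝ) / 12))
    linarith
  · have hn6 : 6 ≤ n := not_lt.mp hn5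
    have hβ0 : (0:ℝ) < 1 - α := by linarith
    have hβ1 : (1:ℝ) - α ≤ 1 := by linarith
    set m' : ℝ := ((n / 2 : ℕ) : ℝ) with hm'def
    set tR : ℝ := 3 * (1 - α) * m' - 1 with htR
    set Gs : Set Ω := {ω : Ω | ∀ m, 2 ≤ m → m ≤ n → 1 ≤ u m ω ∧ u m ω ≤ m - 1} with hGs
    set Es : (↥(Finset.Icc 2 n) → Bool) → Set Ω :=
      fun a => {ω : Ω | ∀ x : ↥(Finset.Icc 2 n), ξ x.1 ω = a x} with hEs
    set badA : Finset (↥(Finset.Icc 2 n) → Bool) :=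
      Finset.univ.filter
        (fun a => tR ≤ (((Finset.univ.filter fun x => a x = false)).card : ℝ)) with hbadA
    have hGc : P Gsᶜ = 0 := by
      rw [measure_compl (G_measurable u hlaw.2.1 n) (measure_ne_top P _),
        G_prob_one P α ξ u hlaw n hn, measure_univ]
      simp
    have hsub : {ω | ∃ k : ℕ, n / 2 ≤ k ∧ k ≤ n ∧
          3 * (1 - α) ≤ (clusterCount root 1 k ω : ℝ) / k} ∩ Gs
        ⊆ ⋃ a ∈ badA, (Es a ∩ Gs) := by
      rintro ω ⟨⟨k, hk1, hk2, hk3⟩, hGω⟩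
      have hGω' : ∀ m, 2 ≤ m → m ≤ n → 1 ≤ u m ω ∧ u m ω ≤ m - 1 := hGω
      have hk0 : 0 < k := by omega
      have hkR : (0:ℝ) < (k:ℝ) := by exact_mod_cast hk0
      have hIk : 3 * (1 - α) * (k:ℝ) ≤ (clusterCount root 1 k ω : ℝ) :=
        (le_div_iff₀ hkR).mp hk3
      have hcomb := iso_le_false_count ξ u root hroot ω n k hk2 hGω'
      have hcombR : (clusterCount root 1 k ω : ℝ) ≤
          1 + (((Finset.Icc 2 n).filter fun j => ξ j ω = false).card : ℝ) := by
        exact_mod_cast hcomb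
      have hmk : m' ≤ (k:ℝ) := by rw [hm'def]; exact_mod_cast hk1
      have hlow : tR ≤ (((Finset.Icc 2 n).filter fun j => ξ j ω = false).card : ℝ) := by
        have hmono : 3 * (1 - α) * m' ≤ 3 * (1 - α) * (k:ℝ) := by nlinarith
        rw [htR]; linarith
      refine Set.mem_iUnion₂.mpr ⟨fun x => ξ x.1 ω, ?_, fun x => rfl, hGω⟩
      rw [hbadA, Finset.mem_filter]
      refine ⟨Finset.mem_univ _, ?_⟩
      rw [card_filter_subtype (Finset.Icc 2 n) (fun j => ξ j ω = false)]
      exact hlow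
    have step1 : P {ω | ∃ k : ℕ, n / 2 ≤ k ∧ k ≤ n ∧
          3 * (1 - α) ≤ (clusterCount root 1 k ω : ℝ) / k} ≤
        ∑ a ∈ badA, P (Es a ∩ Gs) := by
      set Ts := {ω | ∃ k : ℕ, n / 2 ≤ k ∧ k ≤ n ∧
        3 * (1 - α) ≤ (clusterCount root 1 k ω : ℝ) / k} with hTs
      calc P Ts = P ((Ts ∩ Gs) ∪ (Ts \ Gs)) := by rw [Set.inter_union_diff]
        _ ≤ P (Ts ∩ Gs) + P (Ts \ Gs) := measure_union_le _ _
        _ ≤ P (⋃ a ∈ badA, (Es a ∩ Gs)) + 0 := by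
            refine add_le_add (measure_mono hsub) (le_of_eq ?_)
            exact measure_mono_null (fun ω hω => hω.2) hGc
        _ ≤ (∑ a ∈ badA, P (Es a ∩ Gs)) + 0 :=
            add_le_add (measure_biUnion_finset_le _ _) le_rfl
        _ = ∑ a ∈ badA, P (Es a ∩ Gs) := add_zero _
    have step2 : (P {ω | ∃ k : ℕ, n / 2 ≤ k ∧ k ≤ n ∧
          3 * (1 - α) ≤ (clusterCount root 1 k ω : ℝ) / k}).toReal ≤
        ∑ a ∈ badA, (P (Es a ∩ Gs)).toReal := by
      have hne : (∑ a ∈ badA, P (Es a ∩ Gs)) ≠ ⊤ :=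
        (ENNReal.sum_lt_top.mpr fun a _ => measure_lt_top P _).ne
      calc (P {ω | ∃ k : ℕ, n / 2 ≤ k ∧ k ≤ n ∧
              3 * (1 - α) ≤ (clusterCount root 1 k ω : ℝ) / k}).toReal
          ≤ (∑ a ∈ badA, P (Es a ∩ Gs)).toReal := ENNReal.toReal_mono hne step1
        _ = ∑ a ∈ badA, (P (Es a ∩ Gs)).toReal :=
            ENNReal.toReal_sum fun a _ => measure_ne_top P _
    have step3 : ∀ a ∈ badA, (P (Es a ∩ Gs)).toReal =
        ∏ x ∈ (Finset.Icc 2 n).attach, (if a x = true then α else 1 - α) :=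
      fun a _ => cylinder_prob P α ξ u hlaw n hn a
    -- Chernoff bound for the binomial sum
    have hcard : (Finset.univ : Finset ↥(Finset.Icc 2 n)).card = n - 1 := by
      rw [Finset.card_univ, Fintype.card_coe, Nat.card_Icc]
      omega
    set e2 : ℝ := Real.exp (1/2) with he2
    have he2le : e2 ≤ 1.649 := exp_half_le
    have he2ge : (1:ℝ) ≤ e2 := Real.one_le_exp (by norm_num)
    have hstep : ∀ a ∈ badA,
        (∏ x : ↥(Finset.Icc 2 n), (if a x = true then α else 1 - α)) ≤
          Real.exp (-(tR/2)) *
            ∏ x : ↥(Finset.Icc 2 n), (if a x = true then α else (1 - α) * e2) := by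
      intro a ha
      set F : ℕ := ((Finset.univ.filter fun x : ↥(Finset.Icc 2 n) => a x = false)).card
        with hF
      have hFge : tR ≤ (F : ℝ) := (Finset.mem_filter.mp ha).2
      have hsplit : (∏ x : ↥(Finset.Icc 2 n), (if a x = true then α else (1 - α) * e2))
          = (∏ x : ↥(Finset.Icc 2 n), (if a x = true then α else 1 - α)) * e2 ^ F := by
        calc ∏ x : ↥(Finset.Icc 2 n), (if a x = true then α else (1 - α) * e2)
            = ∏ x : ↥(Finset.Icc 2 n),
                ((if a x = true then α else 1 - α) * (if a x = true then 1 else e2)) := by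
              apply Finset.prod_congr rfl; intro x _; cases hax : a x <;> simp
          _ = (∏ x : ↥(Finset.Icc 2 n), (if a x = true then α else 1 - α)) *
              ∏ x : ↥(Finset.Icc 2 n), (if a x = true then 1 else e2) :=
              Finset.prod_mul_distrib
          _ = (∏ x : ↥(Finset.Icc 2 n), (if a x = true then α else 1 - α)) * e2 ^ F := by
              congr 1
              rw [Finset.prod_ite (fun _ => (1:ℝ)) (fun _ => e2),
                Finset.prod_const_one, one_mul, Finset.prod_const, hF]
              congr 2
              exact Finset.filter_congr fun x _ => by simp
      have hpnn : 0 ≤ ∏ x : ↥(Finset.Icc 2 n), (if a x = true then α else 1 - α) :=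
        Finset.prod_nonneg fun x _ => by split <;> linarith
      have h1 : (1:ℝ) ≤ Real.exp (-(tR/2)) * e2 ^ F := by
        rw [he2, ← Real.exp_nat_mul, ← Real.exp_add]
        apply Real.one_le_exp
        linarith
      calc (∏ x : ↥(Finset.Icc 2 n), (if a x = true then α else 1 - α))
          = 1 * ∏ x : ↥(Finset.Icc 2 n), (if a x = true then α else 1 - α) :=
            (one_mul _).symm
        _ ≤ (Real.exp (-(tR/2)) * e2 ^ F) *
            ∏ x : ↥(Finset.Icc 2 n), (if a x = true then α else 1 - α) :=
            mul_le_mul_of_nonneg_right h1 hpnn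
        _ = Real.exp (-(tR/2)) *
            ((∏ x : ↥(Finset.Icc 2 n), (if a x = true then α else 1 - α)) * e2 ^ F) := by
            ring
        _ = Real.exp (-(tR/2)) *
            ∏ x : ↥(Finset.Icc 2 n), (if a x = true then α else (1 - α) * e2) := by
            rw [hsplit]
    have hsum2 : ∑ a ∈ (Finset.univ : Finset (↥(Finset.Icc 2 n) → Bool)),
        ∏ x : ↥(Finset.Icc 2 n), (if a x = true then α else (1 - α) * e2)
          = (α + (1 - α) * e2) ^ (n - 1) := by
      rw [sum_prod_bool (fun _ b => if b = true then α else (1 - α) * e2),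
        Finset.prod_const, hcard]
      norm_num
    have hsum1 : ∑ a ∈ badA, ∏ x : ↥(Finset.Icc 2 n), (if a x = true then α else 1 - α)
        ≤ Real.exp (-(tR/2)) * (α + (1 - α) * e2) ^ (n - 1) := by
      rw [← hsum2, Finset.mul_sum]
      calc ∑ a ∈ badA, ∏ x : ↥(Finset.Icc 2 n), (if a x = true then α else 1 - α)
          ≤ ∑ a ∈ badA, Real.exp (-(tR/2)) *
              ∏ x : ↥(Finset.Icc 2 n), (if a x = true then α else (1 - α) * e2) :=
            Finset.sum_le_sum hstep
        _ ≤ ∑ a ∈ (Finset.univ : Finset (↥(Finset.Icc 2 n) → Bool)),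
              Real.exp (-(tR/2)) *
                ∏ x : ↥(Finset.Icc 2 n), (if a x = true then α else (1 - α) * e2) := by
            apply Finset.sum_le_sum_of_subset_of_nonneg (Finset.filter_subset _ _)
            intro a _ _
            refine mul_nonneg (Real.exp_nonneg _) (Finset.prod_nonneg fun x _ => ?_)
            split
            · linarith
            · nlinarith
    -- numeric estimates
    have hbase : α + (1 - α) * e2 ≤ Real.exp (0.649 * (1 - α)) := by
      have h2 : (1 - α) * (e2 - 1) ≤ 0.649 * (1 - α) := by nlinarith
      have h3 := Real.add_one_le_exp (0.649 * (1 - α))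
      nlinarith
    have hbase0 : 0 ≤ α + (1 - α) * e2 := by nlinarith
    have hpow : (α + (1 - α) * e2) ^ (n - 1) ≤
        Real.exp (0.649 * (1 - α) * ((n:ℝ) - 1)) := by
      calc (α + (1 - α) * e2) ^ (n - 1)
          ≤ (Real.exp (0.649 * (1 - α))) ^ (n - 1) := pow_le_pow_left₀ hbase0 hbase _
        _ = Real.exp (((n - 1 : ℕ) : ℝ) * (0.649 * (1 - α))) := (Real.exp_nat_mul _ _).symm
        _ = Real.exp (0.649 * (1 - α) * ((n:ℝ) - 1)) := by
            congr 1
            push_cast [Nat.cast_sub (show 1 ≤ n by omega)]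
            ring
    have hm'ge : ((n:ℝ) - 1) / 2 ≤ m' := by
      rw [hm'def]
      have hnn : n - 1 ≤ 2 * (n / 2) := by omega
      have h2 : ((n - 1 : ℕ) : ℝ) ≤ ((2 * (n / 2) : ℕ) : ℝ) := by exact_mod_cast hnn
      push_cast [Nat.cast_sub (show 1 ≤ n by omega)] at h2
      linarith
    have hnR : (6:ℝ) ≤ (n:ℝ) := by exact_mod_cast hn6
    have hexpo : -(tR/2) + 0.649 * (1 - α) * ((n:ℝ) - 1) + (1 - α) * (n:ℝ) / 12 ≤ 1 := by
      rw [htR]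
      exact numeric_expo (1 - α) (n:ℝ) m' hβ0 hnR hm'ge
    have h4 : Real.exp (-(tR/2)) * Real.exp (0.649 * (1 - α) * ((n:ℝ) - 1)) ≤
        4 * Real.exp (-((1 - α) * (n:ℝ) / 12)) := by
      rw [← Real.exp_add]
      have hmono : Real.exp (-(tR/2) + 0.649 * (1 - α) * ((n:ℝ) - 1)) ≤
          Real.exp 1 * Real.exp (-((1 - α) * (n:ℝ) / 12)) := by
        rw [← Real.exp_add]; exact Real.exp_le_exp.mpr (by linarith)
      have h5 : Real.exp 1 ≤ 4 := by nlinarith [Real.exp_one_lt_d9]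
      calc Real.exp (-(tR/2) + 0.649 * (1 - α) * ((n:ℝ) - 1))
          ≤ Real.exp 1 * Real.exp (-((1 - α) * (n:ℝ) / 12)) := hmono
        _ ≤ 4 * Real.exp (-((1 - α) * (n:ℝ) / 12)) :=
            mul_le_mul_of_nonneg_right h5 (Real.exp_nonneg _)
    have hfinal : ∑ a ∈ badA,
        ∏ x ∈ (Finset.Icc 2 n).attach, (if a x = true then α else 1 - α)
        ≤ 4 * Real.exp (-((1 - α) * (n:ℝ) / 12)) := by
      simp only [Finset.attach_eq_univ]
      have hexp0 : (0:ℝ) ≤ Real.exp (-(tR/2)) := Real.exp_nonneg _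
      calc ∑ a ∈ badA, ∏ x : ↥(Finset.Icc 2 n), (if a x = true then α else 1 - α)
          ≤ Real.exp (-(tR/2)) * (α + (1 - α) * e2) ^ (n - 1) := hsum1
        _ ≤ Real.exp (-(tR/2)) * Real.exp (0.649 * (1 - α) * ((n:ℝ) - 1)) :=
            mul_le_mul_of_nonneg_left hpow hexp0
        _ ≤ 4 * Real.exp (-((1 - α) * (n:ℝ) / 12)) := h4
    calc (P {ω | ∃ k : ℕ, n / 2 ≤ k ∧ k ≤ n ∧
            3 * (1 - α) ≤ (clusterCount root 1 k ω : ℝ) / k}).toReal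
        ≤ ∑ a ∈ badA, (P (Es a ∩ Gs)).toReal := step2
      _ = ∑ a ∈ badA,
            ∏ x ∈ (Finset.Icc 2 n).attach, (if a x = true then α else 1 - α) :=
          Finset.sum_congr rfl step3
      _ ≤ 4 * Real.exp (-((1 - α) * (n:ℝ) / 12)) := hfinal
end
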